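/- arXiv:1610.05839 — 8 statements merged into one kernel-verified Lean document; each statement's English description precedes it below -/
import Mathlib

section
/- Let T be the tournament on vertices v₁,...,v₅ with arc set {(v₁,v₂),(v₂,v₃),(v₃,v₄),(v₄,v₅),(v₅,v₁),(v₁,v₃),(v₁,v₄),(v₂,v₅),(v₃,v₅),(v₄,v₂)}. Then T is strongly connected, χ(T) = 5, and T contains no cycle with two blocks c(4,1). In particular, there exists a 5-chromatic strongly connected digraph containing no c(4,1), so the answer to the problem of Addario-Berry, Havet and Thomassé (whether every n-chromatic strongly connected digraph with n = k+ℓ ≥ 4 contains c(k,ℓ)) is negative for k = 4, ℓ = 1. -/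
universe u

/-- The underlying simple graph of the (simple) digraph with arc relation `A`. -/
def underlying {V : Type u} (A : V → V → Prop) : SimpleGraph V where
  Adj x y := x ≠ y ∧ (A x y ∨ A y x)
  symm := ⟨fun _ _ h => ⟨h.1.symm, h.2.symm⟩⟩
  loopless := ⟨fun _ h => h.1 rfl⟩

/-- `p` is a directed path of length `n` in the digraph `A`: its `n + 1` vertices
are pairwise distinct, and consecutive vertices are joined by arcs of `A`. -/
def IsDipath {V : Type u} (A : V → V → Prop) {n : ℕ} (p : Fin (n + 1) → V) : Prop :=
  Function.Injective p ∧ ∀ i : Fin n, A (p i.castSucc) (p i.succ)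

/-- The digraph `A` contains a cycle with two blocks `c(k, l)`: two internally
vertex-disjoint directed paths, of lengths at least `k` and at least `l`
respectively, from a common start vertex to a common (different) end vertex. -/
def HasTwoBlockCycle {V : Type u} (A : V → V → Prop) (k l : ℕ) : Prop :=
  ∃ (m n : ℕ) (p : Fin (m + 1) → V) (q : Fin (n + 1) → V),
    k ≤ m ∧ l ≤ n ∧ IsDipath A p ∧ IsDipath A q ∧
    p 0 = q 0 ∧ p (Fin.last m) = q (Fin.last n) ∧
    p 0 ≠ p (Fin.last m) ∧
    ∀ (i : Fin (m + 1)) (j : Fin (n + 1)),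
      p i = q j → (i = 0 ∧ j = 0) ∨ (i = Fin.last m ∧ j = Fin.last n)

/-- `c` is a directed cycle of length `n + 1` (so of length at least `2`) in the
digraph `A`: its `n + 1` vertices are pairwise distinct and consecutive vertices
(cyclically) are joined by arcs of `A`. -/
def IsCycle {V : Type u} (A : V → V → Prop) (n : ℕ) (c : Fin (n + 1) → V) : Prop :=
  1 ≤ n ∧ Function.Injective c ∧ ∀ i : Fin (n + 1), A (c i) (c (i + 1))

/-- `c` is a Hamiltonian directed cycle of the digraph `A`. -/
def IsHamCycle {V : Type u} (A : V → V → Prop) (n : ℕ) (c : Fin (n + 1) → V) : Prop :=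
  IsCycle A n c ∧ Function.Surjective c

/-- The arc relation of the tournament `T` on five vertices `v₁, …, v₅`
(rendered as `0, …, 4 : Fin 5`) with arcs
`(v₁,v₂),(v₂,v₃),(v₃,v₄),(v₄,v₅),(v₅,v₁),(v₁,v₃),(v₁,v₄),(v₂,v₅),(v₃,v₅),(v₄,v₂)`. -/
def TArc : Fin 5 → Fin 5 → Prop := fun i j =>
  (i, j) ∈ ({(0, 1), (1, 2), (2, 3), (3, 4), (4, 0),
              (0, 2), (0, 3), (1, 4), (2, 4), (3, 1)} : Set (Fin 5 × Fin 5))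

instance TArc.decidable (i j : Fin 5) : Decidable (TArc i j) :=
  decidable_of_iff ((i, j) = (0, 1) ∨ (i, j) = (1, 2) ∨ (i, j) = (2, 3) ∨ (i, j) = (3, 4) ∨
      (i, j) = (4, 0) ∨ (i, j) = (0, 2) ∨ (i, j) = (0, 3) ∨ (i, j) = (1, 4) ∨
      (i, j) = (2, 4) ∨ (i, j) = (3, 1)) (by
    simp [TArc, Set.mem_insert_iff, Set.mem_singleton_iff])

open Fin.NatCast

set_option maxRecDepth 8000 in
lemma key5 : ∀ a b c d e : Fin 5, a ≠ c → a ≠ d → b ≠ d → b ≠ e → c ≠ e →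
    TArc a b → TArc b c → TArc c d → TArc d e → ¬ TArc a e := by
  decide

/-- The tournament `T` above is strongly connected, has `χ(T) = 5`, and contains no
cycle with two blocks `c(4, 1)`.  In particular there exists a `5`-chromatic strongly
connected digraph with no `c(4, 1)`: the answer to the problem of Addario-Berry,
Havet and Thomassé is negative for `k = 4`, `l = 1`. -/
theorem tournament_counterexample :
    (∀ i j : Fin 5, i ≠ j → (TArc i j ∨ TArc j i)) ∧
    (∀ i j : Fin 5, TArc i j → ¬ TArc j i) ∧
    (∀ u v : Fin 5, Relation.ReflTransGen TArc u v) ∧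
    (underlying TArc).chromaticNumber = 5 ∧
    ¬ HasTwoBlockCycle TArc 4 1 ∧
    ∃ (W : Type) (_ : Fintype W) (B : W → W → Prop),
      Irreflexive B ∧
      (∀ u v : W, Relation.ReflTransGen B u v) ∧
      (underlying B).chromaticNumber = 5 ∧
      ¬ HasTwoBlockCycle B 4 1 := by
  have tour : ∀ i j : Fin 5, i ≠ j → (TArc i j ∨ TArc j i) := by decide
  have anti : ∀ i j : Fin 5, TArc i j → ¬ TArc j i := by decide
  have hstep : ∀ i : Fin 5, TArc i (i + 1) := by decide
  have hreachk : ∀ (u : Fin 5) (k : ℕ), Relation.ReflTransGen TArc u (u + (k : Fin 5)) := by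
    intro u k
    induction k with
    | zero => simpa using Relation.ReflTransGen.refl
    | succ n ih =>
        have h : ((n + 1 : ℕ) : Fin 5) = (n : Fin 5) + 1 := by push_cast; ring
        rw [h, ← add_assoc]
        exact ih.tail (hstep _)
  have hreach : ∀ u v : Fin 5, Relation.ReflTransGen TArc u v := by
    intro u v
    have h := hreachk u ((v - u : Fin 5) : ℕ)
    rw [Fin.cast_val_eq_self] at h
    have h2 : u + (v - u) = v := by abel
    rwa [h2] at h
  have hU : underlying TArc = ⊤ := by
    ext x y
    simp only [SimpleGraph.top_adj]
    exact ⟨fun h => (h : x ≠ y ∧ _).1, fun h => (⟨h, tour x y h⟩ : x ≠ y ∧ _)⟩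
  have hchr : (underlying TArc).chromaticNumber = 5 := by
    rw [hU, SimpleGraph.chromaticNumber_top]
    simp
  have hno : ¬ HasTwoBlockCycle TArc 4 1 := by
    rintro ⟨m, n, p, q, hm, hn, hp, hq, h00, hll, hne, hdisj⟩
    have hcard : m + 1 ≤ 5 := by
      simpa using Fintype.card_le_of_injective p hp.1
    have hm4 : m = 4 := le_antisymm (by omega) hm
    subst hm4
    have hsurj : Function.Surjective p :=
      ((Fintype.bijective_iff_injective_and_card p).2 ⟨hp.1, by simp⟩).2
    have hn1 : n = 1 := by
      by_contra hne1
      have hn2 : 2 ≤ n := by omega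
      obtain ⟨i, hi⟩ := hsurj (q ⟨1, by omega⟩)
      rcases hdisj i ⟨1, by omega⟩ hi with ⟨_, hj⟩ | ⟨_, hj⟩
      · have := congrArg Fin.val hj
        simp [Fin.val_zero] at this
      · have := congrArg Fin.val hj
        simp [Fin.last] at this
        omega
    subst hn1
    have harc : TArc (q 0) (q 1) := by
      have h := hq.2 0
      rwa [show (0 : Fin 1).castSucc = (0 : Fin 2) from rfl,
        show (0 : Fin 1).succ = (1 : Fin 2) by decide] at h
    have hq0 : q 0 = p 0 := h00.symm
    have hq1 : q 1 = p 4 := by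
      rw [show (1 : Fin 2) = Fin.last 1 by decide, ← hll]
      rfl
    rw [hq0, hq1] at harc
    have h0 := hp.2 0
    have h1 := hp.2 1
    have h2 := hp.2 2
    have h3 := hp.2 3
    rw [show (0 : Fin 4).castSucc = (0 : Fin 5) by decide,
        show (0 : Fin 4).succ = (1 : Fin 5) by decide] at h0
    rw [show (1 : Fin 4).castSucc = (1 : Fin 5) by decide,
        show (1 : Fin 4).succ = (2 : Fin 5) by decide] at h1
    rw [show (2 : Fin 4).castSucc = (2 : Fin 5) by decide,
        show (2 : Fin 4).succ = (3 : Fin 5) by decide] at h2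
    rw [show (3 : Fin 4).castSucc = (3 : Fin 5) by decide,
        show (3 : Fin 4).succ = (4 : Fin 5) by decide] at h3
    have d : ∀ i j : Fin 5, i ≠ j → p i ≠ p j := fun i j hij h => hij (hp.1 h)
    exact key5 (p 0) (p 1) (p 2) (p 3) (p 4)
      (d 0 2 (by decide)) (d 0 3 (by decide)) (d 1 3 (by decide))
      (d 1 4 (by decide)) (d 2 4 (by decide)) h0 h1 h2 h3 harc
  refine ⟨tour, anti, hreach, hchr, hno, Fin 5, inferInstance, TArc, ?_, hreach, hchr, hno⟩
  intro a ha
  exact anti a a ha ha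
end

section
/- Let D be a digraph with a Hamiltonian directed cycle C and let G be the underlying graph of D. Suppose u, v, x, y are four distinct vertices such that uv and xy are edges of G not lying on C, with x on the subpath uCv and y on the subpath vCu. Let k and ℓ be positive integers with |uCx| ≥ k−1 and |vCy| ≥ ℓ−1. Then D contains a cycle with two blocks c(k,ℓ), unless (a) |uCx| = k−1 and both (u,v) and (y,x) are arcs of D, or (b) |vCy| = ℓ−1 and both (v,u) and (x,y) are arcs of D. -/
universe u

open Fin.NatCast Fin.CommRing

lemma natCast_inj_of_le {n s t : ℕ} (hs : s ≤ n) (ht : t ≤ n)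
    (h : (s : Fin (n + 1)) = (t : Fin (n + 1))) : s = t := by
  have h2 : s % (n+1) = t % (n+1) := by
    simpa [Fin.val_natCast] using congrArg Fin.val h
  rwa [Nat.mod_eq_of_lt (by omega), Nat.mod_eq_of_lt (by omega)] at h2

lemma build {V : Type u} (A : V → V → Prop) {n : ℕ} (c : Fin (n + 1) → V)
    (hc : Function.Injective c) (harc : ∀ i, A (c i) (c (i + 1)))
    (b : Fin (n + 1)) {m m' : ℕ} (k l : ℕ)
    (o : Fin (m + 1) → ℕ) (o' : Fin (m' + 1) → ℕ)
    (hk : k ≤ m) (hl : l ≤ m')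
    (hinj : Function.Injective o) (hinj' : Function.Injective o')
    (hle : ∀ j, o j ≤ n) (hle' : ∀ j, o' j ≤ n)
    (h0 : o 0 = 0) (h0' : o' 0 = 0)
    (hlast : o (Fin.last m) = o' (Fin.last m'))
    (hlast0 : o (Fin.last m) ≠ 0)
    (arcs : ∀ i : Fin m, o i.succ = o i.castSucc + 1 ∨
      A (c (b + (o i.castSucc : Fin (n + 1)))) (c (b + (o i.succ : Fin (n + 1)))))
    (arcs' : ∀ i : Fin m', o' i.succ = o' i.castSucc + 1 ∨
      A (c (b + (o' i.castSucc : Fin (n + 1)))) (c (b + (o' i.succ : Fin (n + 1)))))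
    (disj : ∀ i j, o i = o' j → (i = 0 ∧ j = 0) ∨ (i = Fin.last m ∧ j = Fin.last m')) :
    HasTwoBlockCycle A k l := by
  have key : ∀ {s t : ℕ}, s ≤ n → t ≤ n →
      c (b + (s : Fin (n+1))) = c (b + (t : Fin (n+1))) → s = t := by
    intro s t hs ht h
    exact natCast_inj_of_le hs ht (add_left_cancel (hc h))
  have step : ∀ t : ℕ, A (c (b + (t : Fin (n+1)))) (c (b + ((t+1 : ℕ) : Fin (n+1)))) := by
    intro t
    have h2 : (b + ((t+1 : ℕ) : Fin (n+1))) = (b + (t : Fin (n+1))) + 1 := by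
      push_cast; ring
    rw [h2]; exact harc _
  refine ⟨m, m', fun j => c (b + (o j : Fin (n+1))), fun j => c (b + (o' j : Fin (n+1))),
    hk, hl, ⟨?_, ?_⟩, ⟨?_, ?_⟩, ?_, ?_, ?_, ?_⟩
  · intro i j h
    exact hinj (key (hle i) (hle j) h)
  · intro i
    rcases arcs i with h | h
    · simp only [h]; exact step _
    · exact h
  · intro i j h
    exact hinj' (key (hle' i) (hle' j) h)
  · intro i
    rcases arcs' i with h | h
    · simp only [h]; exact step _
    · exact h
  · simp only [h0, h0']
  · simp only [hlast]
  · intro h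
    have h2 := key (hle 0) (hle (Fin.last m)) h
    rw [h0] at h2
    exact hlast0 h2.symm
  · intro i j h
    exact disj i j (key (hle i) (hle' j) h)

/-- The crossing lemma (Lemma 2.1).  Let `D` be a digraph with Hamiltonian directed
cycle `C = c 0, c 1, …, c n, c 0`, with `u = c iu`, `v = c iv`, `x = c ix`, `y = c iy`
four distinct vertices such that `uv, xy ∈ E(G) \ E(C)`, `x` lies inside the subpath
`uCv` and `y` lies inside the subpath `vCu` (lengths along the cycle are measured by
subtraction in `Fin (n+1)`, so `|uCx| = (ix - iu).val` and `|vCy| = (iy - iv).val`).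
If `|uCx| ≥ k − 1` and `|vCy| ≥ l − 1`, then `D` contains a two-block cycle `c(k, l)`,
unless (a) `|uCx| = k − 1` and `(u,v), (y,x) ∈ A(D)`, or
(b) `|vCy| = l − 1` and `(v,u), (x,y) ∈ A(D)`. -/
theorem crossing_lemma {V : Type u}
    (A : V → V → Prop) (n : ℕ) (c : Fin (n + 1) → V)
    (hham : IsHamCycle A n c)
    (iu iv ix iy : Fin (n + 1))
    (hdist : iu ≠ iv ∧ iu ≠ ix ∧ iu ≠ iy ∧ iv ≠ ix ∧ iv ≠ iy ∧ ix ≠ iy)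
    (k l : ℕ) (hk : 1 ≤ k) (hl : 1 ≤ l)
    (hx : 0 < (ix - iu).val ∧ (ix - iu).val < (iv - iu).val)
    (hy : 0 < (iy - iv).val ∧ (iy - iv).val < (iu - iv).val)
    (huv : A (c iu) (c iv) ∨ A (c iv) (c iu))
    (huvC : iv ≠ iu + 1 ∧ iu ≠ iv + 1)
    (hxy : A (c ix) (c iy) ∨ A (c iy) (c ix))
    (hxyC : iy ≠ ix + 1 ∧ ix ≠ iy + 1)
    (hkx : k - 1 ≤ (ix - iu).val) (hly : l - 1 ≤ (iy - iv).val) :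
    HasTwoBlockCycle A k l ∨
      ((ix - iu).val = k - 1 ∧ A (c iu) (c iv) ∧ A (c iy) (c ix)) ∨
      ((iy - iv).val = l - 1 ∧ A (c iv) (c iu) ∧ A (c ix) (c iy)) := by
  obtain ⟨⟨hn1, hc, harc⟩, hsurj⟩ := hham
  set d := (ix - iu).val with hd_def
  set e := (iy - iv).val with he_def
  set dv := (iv - iu).val with hdv_def
  set du := (iu - iv).val with hdu_def
  have hd : 0 < d := hx.1
  have hddv : d < dv := hx.2
  have he : 0 < e := hy.1
  have hedu : e < du := hy.2
  have hdvn : dv ≤ n := Fin.is_le _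
  have hdun : du ≤ n := Fin.is_le _
  -- dv + du = n + 1
  have hsum : dv + du = n + 1 := by
    have hne : iv.val ≠ iu.val := fun hh => hdist.1 (Fin.ext hh.symm)
    rcases Nat.lt_or_ge iu.val iv.val with hlt | hge
    · have h1 : (iv - iu).val = iv.val - iu.val :=
        Fin.sub_val_of_le (Fin.le_def.mpr hlt.le)
      have h2 : (iu - iv).val = (n+1) + iu.val - iv.val :=
        Fin.coe_sub_iff_lt.2 (Fin.lt_def.mpr hlt)
      have h3 := iv.isLt
      omega
    · have hlt : iv.val < iu.val := by omega
      have h1 : (iu - iv).val = iu.val - iv.val :=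
        Fin.sub_val_of_le (Fin.le_def.mpr hlt.le)
      have h2 : (iv - iu).val = (n+1) + iv.val - iu.val :=
        Fin.coe_sub_iff_lt.2 (Fin.lt_def.mpr hlt)
      have h3 := iu.isLt
      omega
  have hyu : (iy - iu).val = dv + e := by
    have h1 : iy - iu = (iv - iu) + (iy - iv) := by ring
    have h2 : (iy - iu).val = (dv + e) % (n + 1) := by
      rw [h1, Fin.val_add, ← hdv_def, ← he_def]
    rwa [Nat.mod_eq_of_lt (by omega)] at h2
  have hxv : (ix - iv).val = du + d := by
    have h1 : ix - iv = (iu - iv) + (ix - iu) := by ring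
    have h2 : (ix - iv).val = (du + d) % (n + 1) := by
      rw [h1, Fin.val_add, ← hdu_def, ← hd_def]
    rwa [Nat.mod_eq_of_lt (by omega)] at h2
  have base : ∀ a b : Fin (n+1), a + (((b - a).val : ℕ) : Fin (n+1)) = b := by
    intro a b; rw [Fin.cast_val_eq_self]; abel
  have hEx : iu + ((d : ℕ) : Fin (n+1)) = ix := base iu ix
  have hEv : iu + ((dv : ℕ) : Fin (n+1)) = iv := base iu iv
  have hEy' : iv + ((e : ℕ) : Fin (n+1)) = iy := base iv iy
  have hEu : iv + ((du : ℕ) : Fin (n+1)) = iu := base iv iu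
  have hEy : iu + ((dv + e : ℕ) : Fin (n+1)) = iy := by
    calc iu + ((dv + e : ℕ) : Fin (n+1)) = (iu + ((dv:ℕ) : Fin (n+1))) + ((e:ℕ) : Fin (n+1)) := by
          push_cast; ring
      _ = iy := by rw [hEv, hEy']
  have hEx' : iv + ((du + d : ℕ) : Fin (n+1)) = ix := by
    calc iv + ((du + d : ℕ) : Fin (n+1)) = (iv + ((du:ℕ) : Fin (n+1))) + ((d:ℕ) : Fin (n+1)) := by
          push_cast; ring
      _ = ix := by rw [hEu, hEx]
  have hZu : iu + ((0 : ℕ) : Fin (n+1)) = iu := by norm_num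
  have hZv : iv + ((0 : ℕ) : Fin (n+1)) = iv := by norm_num
  rcases huv with hA1 | hA1 <;> rcases hxy with hA2 | hA2
  · -- Case A : A u v, A x y
    left
    refine build A c hc harc iu (m := d + 1) (m' := e + 1) k l
      (fun j => if j.val ≤ d then j.val else dv + e)
      (fun j => if j.val = 0 then 0 else dv + (j.val - 1))
      (by omega) (by omega) ?_ ?_ ?_ ?_ ?_ ?_ ?_ ?_ ?_ ?_ ?_
    · intro i j h
      have hi := i.isLt; have hj := j.isLt
      simp only at h
      split_ifs at h <;> exact Fin.ext (by omega)
    · intro i j h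
      have hi := i.isLt; have hj := j.isLt
      simp only at h
      split_ifs at h <;> exact Fin.ext (by omega)
    · intro j; split_ifs <;> omega
    · intro j; split_ifs <;> omega
    · simp
    · simp
    · simp only [Fin.val_last]
      rw [if_neg (by omega), if_neg (by omega)]
      omega
    · simp only [Fin.val_last]
      rw [if_neg (by omega)]
      omega
    · intro i
      by_cases hi : i.val < d
      · left
        simp only [Fin.val_succ, Fin.coe_castSucc]
        rw [if_pos (by omega), if_pos (by omega)]
      · have hi' : i.val = d := by have := i.isLt; omega
        right
        simp only [Fin.val_succ, Fin.coe_castSucc]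
        rw [if_pos (by omega), if_neg (by omega), hi', hEx, hEy]
        exact hA2
    · intro i
      by_cases hi : i.val = 0
      · right
        simp only [Fin.val_succ, Fin.coe_castSucc]
        rw [if_pos hi, if_neg (by omega), hi]
        norm_num
        rw [hEv]
        exact hA1
      · left
        simp only [Fin.val_succ, Fin.coe_castSucc]
        rw [if_neg hi, if_neg (by omega)]
        omega
    · intro i j h
      have hi := i.isLt; have hj := j.isLt
      split_ifs at h with h1 h2 h2
      · left; exact ⟨Fin.ext (by rw [Fin.val_zero]; omega), Fin.ext (by rw [Fin.val_zero]; omega)⟩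
      · exact absurd h (by omega)
      · exact absurd h (by omega)
      · right
        exact ⟨Fin.ext (by simp [Fin.val_last]; omega), Fin.ext (by simp [Fin.val_last]; omega)⟩
  · -- Case C : A u v, A y x
    by_cases hkd : k ≤ d
    · left
      refine build A c hc harc iu (m := d) (m' := e + 2) k l
        (fun j => j.val)
        (fun j => if j.val = 0 then 0 else if j.val ≤ e + 1 then dv + (j.val - 1) else d)
        hkd (by omega) ?_ ?_ ?_ ?_ ?_ ?_ ?_ ?_ ?_ ?_ ?_
      · intro i j h
        exact Fin.ext h
      · intro i j h
        have hi := i.isLt; have hj := j.isLt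
        simp only at h
        split_ifs at h <;> exact Fin.ext (by omega)
      · intro j; have := j.isLt; omega
      · intro j; split_ifs <;> omega
      · simp
      · simp
      · simp only [Fin.val_last]
        rw [if_neg (by omega), if_neg (by omega)]
      · simp only [Fin.val_last]; omega
      · intro i
        left
        simp only [Fin.val_succ, Fin.coe_castSucc]
      · intro i
        by_cases hi : i.val = 0
        · right
          simp only [Fin.val_succ, Fin.coe_castSucc]
          rw [if_pos hi, if_neg (show ¬(i.val + 1 = 0) by omega),
            if_pos (show i.val + 1 ≤ e + 1 by omega), hi]
          norm_num
          rw [hEv]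
          exact hA1
        · by_cases hi2 : i.val ≤ e
          · left
            simp only [Fin.val_succ, Fin.coe_castSucc]
            rw [if_neg (show ¬(i.val + 1 = 0) by omega),
              if_pos (show i.val + 1 ≤ e + 1 by omega), if_neg hi,
              if_pos (show i.val ≤ e + 1 by omega)]
            omega
          · have hi3 : i.val = e + 1 := by have := i.isLt; omega
            right
            simp only [Fin.val_succ, Fin.coe_castSucc]
            rw [if_neg (show ¬(i.val + 1 = 0) by omega),
              if_neg (show ¬(i.val + 1 ≤ e + 1) by omega), if_neg hi,
              if_pos (show i.val ≤ e + 1 by omega), hi3]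
            norm_num
            have hyy : iu + ((dv : Fin (n+1)) + (e : Fin (n+1))) = iy := by
              rw [← add_assoc, hEv]; exact hEy'
            rw [hyy, hEx]
            exact hA2
      · intro i j h
        have hi := i.isLt; have hj := j.isLt
        split_ifs at h with h1 h2
        · left; exact ⟨Fin.ext (by rw [Fin.val_zero]; omega), Fin.ext (by rw [Fin.val_zero]; omega)⟩
        · exact absurd h (by omega)
        · right
          exact ⟨Fin.ext (by simp [Fin.val_last]; omega), Fin.ext (by simp [Fin.val_last]; omega)⟩
    · right; left
      exact ⟨by omega, hA1, hA2⟩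
  · -- Case D : A v u, A x y
    by_cases hle2 : l ≤ e
    · left
      refine build A c hc harc iv (m := d + 2) (m' := e) k l
        (fun j => if j.val = 0 then 0 else if j.val ≤ d + 1 then du + (j.val - 1) else e)
        (fun j => j.val)
        (by omega) hle2 ?_ ?_ ?_ ?_ ?_ ?_ ?_ ?_ ?_ ?_ ?_
      · intro i j h
        have hi := i.isLt; have hj := j.isLt
        simp only at h
        split_ifs at h <;> exact Fin.ext (by omega)
      · intro i j h
        exact Fin.ext h
      · intro j; split_ifs <;> omega
      · intro j; have := j.isLt; omega
      · simp
      · simp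
      · simp only [Fin.val_last]
        rw [if_neg (by omega), if_neg (by omega)]
      · simp only [Fin.val_last]
        rw [if_neg (by omega), if_neg (by omega)]
        omega
      · intro i
        by_cases hi : i.val = 0
        · right
          simp only [Fin.val_succ, Fin.coe_castSucc]
          rw [if_pos hi, if_neg (show ¬(i.val + 1 = 0) by omega),
            if_pos (show i.val + 1 ≤ d + 1 by omega), hi]
          norm_num
          rw [hEu]
          exact hA1
        · by_cases hi2 : i.val ≤ d
          · left
            simp only [Fin.val_succ, Fin.coe_castSucc]
            rw [if_neg (show ¬(i.val + 1 = 0) by omega),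
              if_pos (show i.val + 1 ≤ d + 1 by omega), if_neg hi,
              if_pos (show i.val ≤ d + 1 by omega)]
            omega
          · have hi3 : i.val = d + 1 := by have := i.isLt; omega
            right
            simp only [Fin.val_succ, Fin.coe_castSucc]
            rw [if_neg (show ¬(i.val + 1 = 0) by omega),
              if_neg (show ¬(i.val + 1 ≤ d + 1) by omega), if_neg hi,
              if_pos (show i.val ≤ d + 1 by omega), hi3]
            norm_num
            have hxx : iv + ((du : Fin (n+1)) + (d : Fin (n+1))) = ix := by
              rw [← add_assoc, hEu]; exact hEx
            rw [hxx, hEy']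
            exact hA2
      · intro i
        left
        simp only [Fin.val_succ, Fin.coe_castSucc]
      · intro i j h
        have hi := i.isLt; have hj := j.isLt
        split_ifs at h with h1 h2
        · left; exact ⟨Fin.ext (by rw [Fin.val_zero]; omega), Fin.ext (by rw [Fin.val_zero]; omega)⟩
        · exact absurd h (by omega)
        · right
          exact ⟨Fin.ext (by simp [Fin.val_last]; omega), Fin.ext (by simp [Fin.val_last]; omega)⟩
    · right; right
      exact ⟨by omega, hA1, hA2⟩
  · -- Case B : A v u, A y x
    left
    refine build A c hc harc iv (m := d + 1) (m' := e + 1) k l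
      (fun j => if j.val = 0 then 0 else du + (j.val - 1))
      (fun j => if j.val ≤ e then j.val else du + d)
      (by omega) (by omega) ?_ ?_ ?_ ?_ ?_ ?_ ?_ ?_ ?_ ?_ ?_
    · intro i j h
      have hi := i.isLt; have hj := j.isLt
      simp only at h
      split_ifs at h <;> exact Fin.ext (by omega)
    · intro i j h
      have hi := i.isLt; have hj := j.isLt
      simp only at h
      split_ifs at h <;> exact Fin.ext (by omega)
    · intro j; split_ifs <;> omega
    · intro j; split_ifs <;> omega
    · simp
    · simp
    · simp only [Fin.val_last]
      rw [if_neg (by omega), if_neg (by omega)]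
      omega
    · simp only [Fin.val_last]
      rw [if_neg (by omega)]
      omega
    · intro i
      by_cases hi : i.val = 0
      · right
        simp only [Fin.val_succ, Fin.coe_castSucc]
        rw [if_pos hi, if_neg (by omega), hi]
        norm_num
        rw [hEu]
        exact hA1
      · left
        simp only [Fin.val_succ, Fin.coe_castSucc]
        rw [if_neg hi, if_neg (by omega)]
        omega
    · intro i
      by_cases hi : i.val < e
      · left
        simp only [Fin.val_succ, Fin.coe_castSucc]
        rw [if_pos (by omega), if_pos (by omega)]
      · have hi' : i.val = e := by have := i.isLt; omega
        right
        simp only [Fin.val_succ, Fin.coe_castSucc]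
        rw [if_pos (by omega), if_neg (by omega), hi', hEy', hEx']
        exact hA2
    · intro i j h
      have hi := i.isLt; have hj := j.isLt
      split_ifs at h with h1 h2 h2
      · left; exact ⟨Fin.ext (by rw [Fin.val_zero]; omega), Fin.ext (by rw [Fin.val_zero]; omega)⟩
      · exact absurd h (by omega)
      · exact absurd h (by omega)
      · right
        exact ⟨Fin.ext (by simp [Fin.val_last]; omega), Fin.ext (by simp [Fin.val_last]; omega)⟩
end

section
/- Let k and ℓ be positive integers with k+ℓ ≥ 3, let D be a digraph on n vertices with a Hamiltonian directed cycle C = v₀, v₁, ..., v_{n−1}, v₀, and let G be the underlying graph of D. Suppose δ(G) ≥ k+ℓ (so in particular n ≥ k+ℓ+1) and D contains no cycle with two blocks c(k,ℓ). Then there is no index r such that v_r v_{r+k+1} is an edge of G or v_r v_{r+ℓ+1} is an edge of G (indices taken modulo n). -/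
universe u

open Fin.NatCast

section Aux

variable {V : Type u} {A : V → V → Prop} {n : ℕ} {c : Fin (n + 1) → V}

private lemma underlying_adj (A : V → V → Prop) (x y : V) :
    (underlying A).Adj x y ↔ x ≠ y ∧ (A x y ∨ A y x) := Iff.rfl

private lemma natCast_fin_inj {a b : ℕ} (ha : a < n + 1) (hb : b < n + 1)
    (h : (a : Fin (n + 1)) = (b : Fin (n + 1))) : a = b := by
  have h2 := congrArg Fin.val h
  rwa [Fin.val_cast_of_lt ha, Fin.val_cast_of_lt hb] at h2

private lemma cyc_arc (hcyc : ∀ x, A (c x) (c (x + 1))) (r : Fin (n + 1)) (a : ℕ) :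
    A (c (r + (a : Fin (n + 1)))) (c (r + ((a + 1 : ℕ) : Fin (n + 1)))) := by
  have h : ((a + 1 : ℕ) : Fin (n + 1)) = (a : Fin (n + 1)) + 1 := by push_cast; ring
  rw [h, ← add_assoc]
  exact hcyc _

private lemma tbc_swap {k l : ℕ} (h : HasTwoBlockCycle A k l) : HasTwoBlockCycle A l k := by
  obtain ⟨m, n', p, q, hk, hl, hp, hq, h00, hll, hne, hdisj⟩ := h
  refine ⟨n', m, q, p, hl, hk, hq, hp, h00.symm, hll.symm, ?_, ?_⟩
  · rw [← h00, ← hll]; exact hne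
  · intro i j hij
    exact ((hdisj j i hij.symm).imp (fun h => ⟨h.2, h.1⟩) (fun h => ⟨h.2, h.1⟩))

private lemma main0 (hc : Function.Injective c) (k l L M : ℕ) (r : Fin (n + 1))
    (v w : ℕ → ℕ) (hkL : k ≤ L) (hlM : l ≤ M)
    (hvN : ∀ i, i ≤ L → v i < n + 1) (hwN : ∀ j, j ≤ M → w j < n + 1)
    (hvi : ∀ i, i ≤ L → ∀ j, j ≤ L → v i = v j → i = j)
    (hwi : ∀ i, i ≤ M → ∀ j, j ≤ M → w i = w j → i = j)
    (hva : ∀ i, i < L → A (c (r + (v i : Fin (n + 1)))) (c (r + (v (i + 1) : Fin (n + 1)))))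
    (hwa : ∀ j, j < M → A (c (r + (w j : Fin (n + 1)))) (c (r + (w (j + 1) : Fin (n + 1)))))
    (h00 : v 0 = w 0) (hll : v L = w M) (h0l : v 0 ≠ v L)
    (hdisj : ∀ i, i ≤ L → ∀ j, j ≤ M → v i = w j → (i = 0 ∧ j = 0) ∨ (i = L ∧ j = M)) :
    HasTwoBlockCycle A k l := by
  have key : ∀ a b : ℕ, a < n + 1 → b < n + 1 →
      c (r + (a : Fin (n + 1))) = c (r + (b : Fin (n + 1))) → a = b := by
    intro a b ha hb h
    exact natCast_fin_inj ha hb (add_left_cancel (hc h))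
  refine ⟨L, M, fun i => c (r + ((v i.val : ℕ) : Fin (n + 1))),
    fun j => c (r + ((w j.val : ℕ) : Fin (n + 1))),
    hkL, hlM, ⟨?_, ?_⟩, ⟨?_, ?_⟩, ?_, ?_, ?_, ?_⟩
  · intro a b hab
    exact Fin.ext (hvi _ a.is_le _ b.is_le (key _ _ (hvN _ a.is_le) (hvN _ b.is_le) hab))
  · intro i
    have h := hva i.val i.isLt
    simpa [Fin.coe_castSucc, Fin.val_succ] using h
  · intro a b hab
    exact Fin.ext (hwi _ a.is_le _ b.is_le (key _ _ (hwN _ a.is_le) (hwN _ b.is_le) hab))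
  · intro j
    have h := hwa j.val j.isLt
    simpa [Fin.coe_castSucc, Fin.val_succ] using h
  · simpa using congrArg (fun t : ℕ => c (r + ((t : ℕ) : Fin (n + 1)))) h00
  · simpa [Fin.val_last] using congrArg (fun t : ℕ => c (r + ((t : ℕ) : Fin (n + 1)))) hll
  · intro h
    exact h0l (key _ _ (hvN 0 (Nat.zero_le L)) (hvN L le_rfl)
      (by simpa [Fin.val_last] using h))
  · intro i j hij
    have h := hdisj i.val i.is_le j.val j.is_le
      (key _ _ (hvN _ i.is_le) (hwN _ j.is_le) hij)
    rcases h with ⟨h1, h2⟩ | ⟨h1, h2⟩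
    · exact Or.inl ⟨Fin.ext (by simpa using h1), Fin.ext (by simpa using h2)⟩
    · exact Or.inr ⟨Fin.ext (by simpa [Fin.val_last] using h1),
        Fin.ext (by simpa [Fin.val_last] using h2)⟩

private lemma use_or {L M : ℕ}
    (hC : ∀ k' l', k' ≤ L → l' ≤ M → HasTwoBlockCycle A k' l')
    {k l : ℕ} (h : (k ≤ L ∧ l ≤ M) ∨ (l ≤ L ∧ k ≤ M)) : HasTwoBlockCycle A k l := by
  rcases h with ⟨h1, h2⟩ | ⟨h1, h2⟩
  · exact hC k l h1 h2
  · exact tbc_swap (hC l k h1 h2)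

/-- Forward chord `r → r+(d+1)`, plus forward arc `r+d → r+m`, `d+2 ≤ m ≤ n`:
two blocks from `r` to `r+m` of lengths `d+1` and `m-d`. -/
private lemma conC1 (hc : Function.Injective c) (hcyc : ∀ x, A (c x) (c (x + 1)))
    (r : Fin (n + 1)) (d m : ℕ) (hd : 1 ≤ d) (hm1 : d + 2 ≤ m) (hm2 : m ≤ n)
    (harc : A (c r) (c (r + ((d + 1 : ℕ) : Fin (n + 1)))))
    (h2 : A (c (r + (d : Fin (n + 1)))) (c (r + (m : Fin (n + 1)))))
    (k' l' : ℕ) (hk' : k' ≤ d + 1) (hl' : l' ≤ m - d) : HasTwoBlockCycle A k' l' := by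
  refine main0 hc k' l' (d + 1) (m - d) r
    (fun i => if i ≤ d then i else m) (fun j => if j = 0 then 0 else d + j)
    hk' hl' ?_ ?_ ?_ ?_ ?_ ?_ ?_ ?_ ?_ ?_
  · intro i hi; split_ifs <;> omega
  · intro j hj; split_ifs <;> omega
  · intro i hi j hj h; split_ifs at h <;> omega
  · intro i hi j hj h; split_ifs at h <;> omega
  · intro i hi
    rcases Nat.lt_or_ge i d with h | h
    · rw [if_pos (by omega : i ≤ d), if_pos (by omega : i + 1 ≤ d)]
      exact cyc_arc hcyc r i
    · have hid : i = d := by omega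
      subst hid
      rw [if_pos le_rfl, if_neg (by omega)]
      exact h2
  · intro j hj
    rcases Nat.eq_zero_or_pos j with h | h
    · subst h
      rw [if_pos rfl, if_neg (by omega)]
      simpa using harc
    · rw [if_neg (by omega), if_neg (by omega)]
      have hc1 := cyc_arc hcyc r (d + j)
      rw [show d + (j + 1) = d + j + 1 from by omega]
      exact hc1
  · rw [if_pos (Nat.zero_le d), if_pos rfl]
  · rw [if_neg (by omega), if_neg (by omega)]; omega
  · rw [if_pos (Nat.zero_le d), if_neg (by omega)]; omega
  · intro i hi j hj h; split_ifs at h <;> omega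

/-- Forward chord `r → r+(d+1)`, plus backward arc `r+m → r+d`, `d+2 ≤ m ≤ n`:
two blocks from `r` to `r+d` of lengths `d` and `m-d+1`. -/
private lemma conC2 (hc : Function.Injective c) (hcyc : ∀ x, A (c x) (c (x + 1)))
    (r : Fin (n + 1)) (d m : ℕ) (hd : 1 ≤ d) (hm1 : d + 2 ≤ m) (hm2 : m ≤ n)
    (harc : A (c r) (c (r + ((d + 1 : ℕ) : Fin (n + 1)))))
    (h2 : A (c (r + (m : Fin (n + 1)))) (c (r + (d : Fin (n + 1)))))
    (k' l' : ℕ) (hk' : k' ≤ d) (hl' : l' ≤ m - d + 1) : HasTwoBlockCycle A k' l' := by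
  refine main0 hc k' l' d (m - d + 1) r
    (fun i => i) (fun j => if j = 0 then 0 else if j ≤ m - d then d + j else d)
    hk' hl' ?_ ?_ ?_ ?_ ?_ ?_ ?_ ?_ ?_ ?_
  · intro i hi; omega
  · intro j hj; split_ifs <;> omega
  · intro i hi j hj h; omega
  · intro i hi j hj h; split_ifs at h <;> omega
  · intro i hi
    exact cyc_arc hcyc r i
  · intro j hj
    by_cases h0 : j = 0
    · subst h0
      rw [if_pos rfl, if_neg (by omega), if_pos (by omega)]
      simpa using harc
    · by_cases hlt : j < m - d
      · rw [if_neg h0, if_pos (by omega), if_neg (by omega), if_pos (by omega)]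
        have hc1 := cyc_arc hcyc r (d + j)
        rw [show d + (j + 1) = d + j + 1 from by omega]
        exact hc1
      · have hjm : j = m - d := by omega
        rw [if_neg h0, if_pos (by omega), if_neg (by omega), if_neg (by omega)]
        rw [show d + j = m from by omega]
        exact h2
  · rw [if_pos rfl]
  · rw [if_neg (by omega), if_neg (by omega)]
  · omega
  · intro i hi j hj h; split_ifs at h <;> omega

/-- Backward chord `r+(d+1) → r`, plus forward arc `r+(d-1) → r+m`, `d+2 ≤ m ≤ n`:
two blocks from `r+(d+1)` to `r+m` of lengths `d+1` and `m-d-1`. -/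
private lemma conI (hc : Function.Injective c) (hcyc : ∀ x, A (c x) (c (x + 1)))
    (r : Fin (n + 1)) (d m : ℕ) (hd : 1 ≤ d) (hm1 : d + 2 ≤ m) (hm2 : m ≤ n)
    (harc : A (c (r + ((d + 1 : ℕ) : Fin (n + 1)))) (c r))
    (h2 : A (c (r + ((d - 1 : ℕ) : Fin (n + 1)))) (c (r + (m : Fin (n + 1)))))
    (k' l' : ℕ) (hk' : k' ≤ d + 1) (hl' : l' ≤ m - d - 1) : HasTwoBlockCycle A k' l' := by
  refine main0 hc k' l' (d + 1) (m - d - 1) r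
    (fun i => if i = 0 then d + 1 else if i ≤ d then i - 1 else m)
    (fun j => d + 1 + j)
    hk' hl' ?_ ?_ ?_ ?_ ?_ ?_ ?_ ?_ ?_ ?_
  · intro i hi; split_ifs <;> omega
  · intro j hj; omega
  · intro i hi j hj h; split_ifs at h <;> omega
  · intro i hi j hj h; omega
  · intro i hi
    by_cases h0 : i = 0
    · subst h0
      rw [if_pos rfl, if_neg (by omega), if_pos (by omega)]
      simpa using harc
    · by_cases hlt : i < d
      · rw [if_neg h0, if_pos (by omega), if_neg (by omega), if_pos (by omega)]
        have hc1 := cyc_arc hcyc r (i - 1)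
        rw [show i + 1 - 1 = i - 1 + 1 from by omega]
        exact hc1
      · have hid : i = d := by omega
        subst hid
        rw [if_neg h0, if_pos le_rfl, if_neg (by omega), if_neg (by omega)]
        exact h2
  · intro j hj
    have hc1 := cyc_arc hcyc r (d + 1 + j)
    rw [show d + 1 + (j + 1) = d + 1 + j + 1 from by omega]
    exact hc1
  · rw [if_pos rfl]
  · rw [if_neg (by omega), if_neg (by omega)]; omega
  · rw [if_pos rfl, if_neg (by omega), if_neg (by omega)]; omega
  · intro i hi j hj h; split_ifs at h <;> omega

/-- Backward chord `r+(d+1) → r`, plus backward arc `r+m → r+(d-1)`, `d+1 ≤ m ≤ n`: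
two blocks from `r+(d+1)` to `r+(d-1)` of lengths `d` and `m-d`. -/
private lemma conII (hc : Function.Injective c) (hcyc : ∀ x, A (c x) (c (x + 1)))
    (r : Fin (n + 1)) (d m : ℕ) (hd : 1 ≤ d) (hm1 : d + 1 ≤ m) (hm2 : m ≤ n)
    (harc : A (c (r + ((d + 1 : ℕ) : Fin (n + 1)))) (c r))
    (h2 : A (c (r + (m : Fin (n + 1)))) (c (r + ((d - 1 : ℕ) : Fin (n + 1)))))
    (k' l' : ℕ) (hk' : k' ≤ d) (hl' : l' ≤ m - d) : HasTwoBlockCycle A k' l' := by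
  refine main0 hc k' l' d (m - d) r
    (fun i => if i = 0 then d + 1 else i - 1)
    (fun j => if j < m - d then d + 1 + j else d - 1)
    hk' hl' ?_ ?_ ?_ ?_ ?_ ?_ ?_ ?_ ?_ ?_
  · intro i hi; split_ifs <;> omega
  · intro j hj; split_ifs <;> omega
  · intro i hi j hj h; split_ifs at h <;> omega
  · intro i hi j hj h; split_ifs at h <;> omega
  · intro i hi
    by_cases h0 : i = 0
    · subst h0
      rw [if_pos rfl, if_neg (by omega)]
      simpa using harc
    · rw [if_neg h0, if_neg (by omega)]
      have hc1 := cyc_arc hcyc r (i - 1)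
      rw [show i + 1 - 1 = i - 1 + 1 from by omega]
      exact hc1
  · intro j hj
    by_cases hlt : j + 1 < m - d
    · rw [if_pos (by omega), if_pos hlt]
      have hc1 := cyc_arc hcyc r (d + 1 + j)
      rw [show d + 1 + (j + 1) = d + 1 + j + 1 from by omega]
      exact hc1
    · rw [if_pos (by omega), if_neg hlt]
      rw [show d + 1 + j = m from by omega]
      exact h2
  · rw [if_pos rfl, if_pos (by omega)]
  · rw [if_neg (by omega), if_neg (by omega)]
  · rw [if_pos rfl, if_neg (by omega)]; omega
  · intro i hi j hj h; split_ifs at h <;> omega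

/-- Forward chord `r → r+(d+1)` alone: two blocks from `r` to `r+(d+1)` of
lengths `d+1` and `1`. -/
private lemma conAimm (hc : Function.Injective c) (hcyc : ∀ x, A (c x) (c (x + 1)))
    (r : Fin (n + 1)) (d : ℕ) (hd : 1 ≤ d) (hdn : d + 1 ≤ n)
    (harc : A (c r) (c (r + ((d + 1 : ℕ) : Fin (n + 1)))))
    (k' l' : ℕ) (hk' : k' ≤ d + 1) (hl' : l' ≤ 1) : HasTwoBlockCycle A k' l' := by
  refine main0 hc k' l' (d + 1) 1 r
    (fun i => i) (fun j => if j = 0 then 0 else d + 1)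
    hk' hl' ?_ ?_ ?_ ?_ ?_ ?_ ?_ ?_ ?_ ?_
  · intro i hi; omega
  · intro j hj; split_ifs <;> omega
  · intro i hi j hj h; omega
  · intro i hi j hj h; split_ifs at h <;> omega
  · intro i hi
    exact cyc_arc hcyc r i
  · intro j hj
    have h0 : j = 0 := by omega
    subst h0
    rw [if_pos rfl, if_neg (by omega)]
    simpa using harc
  · rw [if_pos rfl]
  · rw [if_neg one_ne_zero]
  · omega
  · intro i hi j hj h; split_ifs at h <;> omega

private lemma card_aux (hham : IsHamCycle A n c) (k l : ℕ)
    (hdeg : ∀ v : V, k + l ≤ ((underlying A).neighborSet v).ncard) :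
    k + l ≤ n := by
  obtain ⟨⟨hn1, hcinj, hcyc⟩, hsurj⟩ := hham
  have hfin : Finite V := Finite.of_surjective c hsurj
  have hcard : Nat.card V = n + 1 := by
    rw [← Nat.card_eq_of_bijective c ⟨hcinj, hsurj⟩]
    simp
  have hsub : (underlying A).neighborSet (c 0) ⊆ Set.univ \ {c 0} := by
    intro u hu
    refine ⟨Set.mem_univ u, ?_⟩
    simpa using ((SimpleGraph.mem_neighborSet _ _ _).mp hu).ne'
  have h1 := hdeg (c 0)
  have h2 := Set.ncard_le_ncard hsub (Set.toFinite _)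
  have h3 : (Set.univ \ {c 0} : Set V).ncard = n := by
    rw [Set.ncard_diff_singleton_of_mem (Set.mem_univ _),
      Set.ncard_univ, hcard]
    omega
  omega

private lemma caseA (k l : ℕ) (hk : 1 ≤ k) (hl : 1 ≤ l)
    (hham : IsHamCycle A n c)
    (hdeg : ∀ v : V, k + l ≤ ((underlying A).neighborSet v).ncard)
    (hno : ¬ HasTwoBlockCycle A k l)
    (d e : ℕ) (hroles : (d = k ∧ e = l) ∨ (d = l ∧ e = k))
    (r : Fin (n + 1))
    (harc : A (c r) (c (r + ((d + 1 : ℕ) : Fin (n + 1))))) : False := by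
  classical
  have hN := card_aux hham k l hdeg
  have hcinj := hham.1.2.1
  have hcyc := hham.1.2.2
  have hsurj := hham.2
  have hd : 1 ≤ d := by rcases hroles with ⟨h1, h2⟩ | ⟨h1, h2⟩ <;> omega
  have he : 1 ≤ e := by rcases hroles with ⟨h1, h2⟩ | ⟨h1, h2⟩ <;> omega
  have hde : d + e = k + l := by rcases hroles with ⟨h1, h2⟩ | ⟨h1, h2⟩ <;> omega
  by_cases he1 : e = 1
  · apply hno
    refine use_or (conAimm hcinj hcyc r d hd (by omega) harc) ?_
    rcases hroles with ⟨h1, h2⟩ | ⟨h1, h2⟩ <;> omega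
  · -- e ≥ 2 : all neighbours of `c (r + d)` lie in the window `[0, k+l-1]`.
    have hsub : (underlying A).neighborSet (c (r + (d : Fin (n + 1)))) ⊆
        ↑(((Finset.range (k + l)).erase d).image
          (fun t : ℕ => c (r + (t : Fin (n + 1))))) := by
      intro u hu
      have hadj := (SimpleGraph.mem_neighborSet _ _ _).mp hu
      obtain ⟨y, rfl⟩ := hsurj u
      obtain ⟨t, htn, hy⟩ : ∃ t : ℕ, t < n + 1 ∧ y = r + (t : Fin (n + 1)) :=
        ⟨(y - r).val, (y - r).isLt, by rw [Fin.cast_val_eq_self]; abel⟩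
      subst hy
      refine Finset.mem_coe.mpr (Finset.mem_image.mpr
        ⟨t, Finset.mem_erase.mpr ⟨?_, Finset.mem_range.mpr ?_⟩, rfl⟩)
      · rintro rfl
        exact (underlying A).irrefl hadj
      · by_contra hge
        push_neg at hge
        obtain ⟨hne2, hAor⟩ := (underlying_adj A _ _).mp hadj
        rcases hAor with hA | hA
        · exact hno (use_or (conC1 hcinj hcyc r d t hd (by omega) (by omega) harc hA)
            (by rcases hroles with ⟨h1, h2⟩ | ⟨h1, h2⟩ <;> omega))
        · exact hno (use_or (conC2 hcinj hcyc r d t hd (by omega) (by omega) harc hA)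
            (by rcases hroles with ⟨h1, h2⟩ | ⟨h1, h2⟩ <;> omega))
    have h1 := hdeg (c (r + (d : Fin (n + 1))))
    have h2a := Set.ncard_le_ncard hsub (Finset.finite_toSet _)
    rw [Set.ncard_coe_finset] at h2a
    have h2c := Finset.card_image_le (s := (Finset.range (k + l)).erase d)
      (f := fun t : ℕ => c (r + (t : Fin (n + 1))))
    have h3 : ((Finset.range (k + l)).erase d).card = k + l - 1 := by
      rw [Finset.card_erase_of_mem (Finset.mem_range.mpr (by omega))]
      simp
    omega

private lemma caseB (k l : ℕ) (hk : 1 ≤ k) (hl : 1 ≤ l)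
    (hham : IsHamCycle A n c)
    (hdeg : ∀ v : V, k + l ≤ ((underlying A).neighborSet v).ncard)
    (hno : ¬ HasTwoBlockCycle A k l)
    (d e : ℕ) (hroles : (d = k ∧ e = l) ∨ (d = l ∧ e = k))
    (r : Fin (n + 1))
    (harc : A (c (r + ((d + 1 : ℕ) : Fin (n + 1)))) (c r)) : False := by
  classical
  have hN := card_aux hham k l hdeg
  have hcinj := hham.1.2.1
  have hcyc := hham.1.2.2
  have hsurj := hham.2
  have hd : 1 ≤ d := by rcases hroles with ⟨h1, h2⟩ | ⟨h1, h2⟩ <;> omega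
  have he : 1 ≤ e := by rcases hroles with ⟨h1, h2⟩ | ⟨h1, h2⟩ <;> omega
  have hde : d + e = k + l := by rcases hroles with ⟨h1, h2⟩ | ⟨h1, h2⟩ <;> omega
  -- all neighbours of `c (r + (d-1))` lie in the window `[0, k+l-1]`.
  have hsub : (underlying A).neighborSet (c (r + ((d - 1 : ℕ) : Fin (n + 1)))) ⊆
      ↑(((Finset.range (k + l)).erase (d - 1)).image
        (fun t : ℕ => c (r + (t : Fin (n + 1))))) := by
    intro u hu
    have hadj := (SimpleGraph.mem_neighborSet _ _ _).mp hu
    obtain ⟨y, rfl⟩ := hsurj u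
    obtain ⟨t, htn, hy⟩ : ∃ t : ℕ, t < n + 1 ∧ y = r + (t : Fin (n + 1)) :=
      ⟨(y - r).val, (y - r).isLt, by rw [Fin.cast_val_eq_self]; abel⟩
    subst hy
    refine Finset.mem_coe.mpr (Finset.mem_image.mpr
      ⟨t, Finset.mem_erase.mpr ⟨?_, Finset.mem_range.mpr ?_⟩, rfl⟩)
    · rintro rfl
      exact (underlying A).irrefl hadj
    · by_contra hge
      push_neg at hge
      obtain ⟨hne2, hAor⟩ := (underlying_adj A _ _).mp hadj
      rcases hAor with hA | hA
      · rcases Nat.eq_or_lt_of_le hge with heq | hlt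
        · -- t = k + l : forward chord at distance `e + 1`; use case A.
          have hteq : d - 1 + (e + 1) = t := by omega
          have harc2 : A (c (r + ((d - 1 : ℕ) : Fin (n + 1))))
              (c ((r + ((d - 1 : ℕ) : Fin (n + 1))) + ((e + 1 : ℕ) : Fin (n + 1)))) := by
            rw [add_assoc, ← Nat.cast_add, hteq]
            exact hA
          exact caseA k l hk hl hham hdeg hno e d
            (by rcases hroles with ⟨h1, h2⟩ | ⟨h1, h2⟩ <;> [exact Or.inr ⟨h2, h1⟩;
              exact Or.inl ⟨h2, h1⟩]) _ harc2
        · exact hno (use_or (conI hcinj hcyc r d t hd (by omega) (by omega) harc hA)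
            (by rcases hroles with ⟨h1, h2⟩ | ⟨h1, h2⟩ <;> omega))
      · exact hno (use_or (conII hcinj hcyc r d t hd (by omega) (by omega) harc hA)
          (by rcases hroles with ⟨h1, h2⟩ | ⟨h1, h2⟩ <;> omega))
  have h1 := hdeg (c (r + ((d - 1 : ℕ) : Fin (n + 1))))
  have h2a := Set.ncard_le_ncard hsub (Finset.finite_toSet _)
  rw [Set.ncard_coe_finset] at h2a
  have h2c := Finset.card_image_le (s := (Finset.range (k + l)).erase (d - 1))
    (f := fun t : ℕ => c (r + (t : Fin (n + 1))))
  have h3 : ((Finset.range (k + l)).erase (d - 1)).card = k + l - 1 := by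
    rw [Finset.card_erase_of_mem (Finset.mem_range.mpr (by omega))]
    simp
  omega

end Aux

/-- Claim 1 in the proof of Lemma 2.2.  Let `k, l` be positive integers with
`k + l ≥ 3`, let `D` be a digraph with Hamiltonian directed cycle
`C = c 0, c 1, …, c n, c 0` (so `D` has `n + 1` vertices; indices are taken modulo
`n + 1`), and let `G` be its underlying graph.  Suppose `δ(G) ≥ k + l` and `D`
contains no two-block cycle `c(k, l)`.  Then there is no index `r` such that
`c r` and `c (r + k + 1)` are adjacent in `G`, or `c r` and `c (r + l + 1)` are
adjacent in `G`. -/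
theorem no_chord_at_dist {V : Type u}
    (k l : ℕ) (hk : 1 ≤ k) (hl : 1 ≤ l) (hkl : 3 ≤ k + l)
    (A : V → V → Prop) (hirr : Irreflexive A)
    (n : ℕ) (c : Fin (n + 1) → V) (hham : IsHamCycle A n c)
    (hdeg : ∀ v : V, k + l ≤ ((underlying A).neighborSet v).ncard)
    (hno : ¬ HasTwoBlockCycle A k l) :
    ∀ r : Fin (n + 1),
      ¬ (underlying A).Adj (c r) (c (r + ((k + 1 : ℕ) : Fin (n + 1)))) ∧
      ¬ (underlying A).Adj (c r) (c (r + ((l + 1 : ℕ) : Fin (n + 1)))) := by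
  intro r
  constructor
  · intro hadj
    obtain ⟨hne, hAor⟩ := (underlying_adj A _ _).mp hadj
    rcases hAor with hA | hA
    · exact caseA k l hk hl hham hdeg hno k l (Or.inl ⟨rfl, rfl⟩) r hA
    · exact caseB k l hk hl hham hdeg hno k l (Or.inl ⟨rfl, rfl⟩) r hA
  · intro hadj
    obtain ⟨hne, hAor⟩ := (underlying_adj A _ _).mp hadj
    rcases hAor with hA | hA
    · exact caseA k l hk hl hham hdeg hno l k (Or.inr ⟨rfl, rfl⟩) r hA
    · exact caseB k l hk hl hham hdeg hno l k (Or.inr ⟨rfl, rfl⟩) r hA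
end

section
/- With the iterated contraction construction as in the context: for every j ∈ {0, 1, ..., m}, the digraph D^(j) contains no cycle with two blocks c(k,ℓ). -/
universe u

/-- `A'` (a digraph on `W'`) is the contraction `A/S` of the digraph `A` on `W`,
via the projection map `f : W → W'` which collapses `S` to a single new vertex and
is injective elsewhere.  Arcs of `A'` are induced by arcs of `A` (with no loop
created at the contracted vertex). -/
def IsContractionOf {W : Type u} {W' : Type u} (A' : W' → W' → Prop)
    (A : W → W → Prop) (f : W → W') (S : Set W) : Prop :=
  Function.Surjective f ∧
  (∀ a b : W, a ∈ S → b ∈ S → f a = f b) ∧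
  (∀ a b : W, f a = f b → a = b ∨ (a ∈ S ∧ b ∈ S)) ∧
  (∀ x y : W', A' x y ↔ x ≠ y ∧ ∃ a b : W, f a = x ∧ f b = y ∧ A a b)

namespace TBCAux

variable {V : Type u}

/-- List version of a two-block cycle. -/
def TBC (A : V → V → Prop) (k l : ℕ) : Prop :=
  ∃ p q : List V, p.IsChain A ∧ p.Nodup ∧ q.IsChain A ∧ q.Nodup ∧
    k + 1 ≤ p.length ∧ l + 1 ≤ q.length ∧
    p.head? = q.head? ∧ p.getLast? = q.getLast? ∧ p.head? ≠ p.getLast? ∧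
    (∀ x, x ∈ p → x ∈ q → p.head? = some x ∨ p.getLast? = some x)

lemma head?_eq_get {l : List V} (h : 0 < l.length) : l.head? = some (l.get ⟨0, h⟩) := by
  cases l with
  | nil => simp at h
  | cons a t => rfl

lemma getLast?_eq_get {l : List V} (h : 0 < l.length) :
    l.getLast? = some (l.get ⟨l.length - 1, by omega⟩) := by
  have hne : l ≠ [] := List.length_pos_iff.mp h
  exact (List.getLast?_eq_getLast hne).trans (congrArg some (List.getLast_eq_getElem (l := l) (h := hne)))

lemma ofFn_head? {n : ℕ} (p : Fin (n + 1) → V) : (List.ofFn p).head? = some (p 0) := by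
  rw [List.ofFn_succ]; rfl

lemma ofFn_getLast? {n : ℕ} (p : Fin (n + 1) → V) :
    (List.ofFn p).getLast? = some (p (Fin.last n)) := by
  have h : 0 < (List.ofFn p).length := by simp
  rw [getLast?_eq_get h, List.get_ofFn]
  have : (Fin.cast (by simp) (⟨(List.ofFn p).length - 1, by omega⟩ : Fin (List.ofFn p).length)) = Fin.last n := by
    apply Fin.ext
    simp [Fin.last]
  rw [this]

lemma ofFn_chain' {n : ℕ} {A : V → V → Prop} {p : Fin (n + 1) → V}
    (h : ∀ i : Fin n, A (p i.castSucc) (p i.succ)) : (List.ofFn p).IsChain A := by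
  rw [List.isChain_iff_getElem]
  intro i hi
  simp only [List.length_ofFn] at hi
  simp only [List.getElem_ofFn]
  have := h ⟨i, by omega⟩
  convert this using 2 <;> rfl


lemma tbc_of_has {A : V → V → Prop} {k l : ℕ} (h : HasTwoBlockCycle A k l) : TBC A k l := by
  obtain ⟨m, n, p, q, hkm, hln, ⟨hpi, hpa⟩, ⟨hqi, hqa⟩, h00, hll, hne, hdisj⟩ := h
  refine ⟨List.ofFn p, List.ofFn q, ofFn_chain' hpa, List.nodup_ofFn.mpr hpi,
    ofFn_chain' hqa, List.nodup_ofFn.mpr hqi, by simp; omega, by simp; omega, ?_, ?_, ?_, ?_⟩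
  · rw [ofFn_head?, ofFn_head?, h00]
  · rw [ofFn_getLast?, ofFn_getLast?, hll]
  · rw [ofFn_head?, ofFn_getLast?]; simpa using hne
  · intro x hx hy
    rw [List.mem_ofFn] at hx hy
    obtain ⟨i, hi⟩ := hx; obtain ⟨j, hj⟩ := hy
    rcases hdisj i j (hi.trans hj.symm) with ⟨h1, _⟩ | ⟨h1, _⟩
    · left; rw [ofFn_head?, ← hi, h1]
    · right; rw [ofFn_getLast?, ← hi, h1]

lemma has_of_tbc {A : V → V → Prop} {k l : ℕ} (h : TBC A k l) : HasTwoBlockCycle A k l := by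
  obtain ⟨p, q, hpc, hpn, hqc, hqn, hplen, hqlen, hh, hlast, hne, hdisj⟩ := h
  obtain ⟨mp, hmp⟩ : ∃ mp, p.length = mp + 1 := ⟨p.length - 1, by omega⟩
  obtain ⟨mq, hmq⟩ : ∃ mq, q.length = mq + 1 := ⟨q.length - 1, by omega⟩
  have hp0 : p.head? = some (p.get ⟨0, by omega⟩) := head?_eq_get (by omega)
  have hq0 : q.head? = some (q.get ⟨0, by omega⟩) := head?_eq_get (by omega)
  have hpL : p.getLast? = some (p.get ⟨p.length - 1, by omega⟩) := getLast?_eq_get (by omega)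
  have hqL : q.getLast? = some (q.get ⟨q.length - 1, by omega⟩) := getLast?_eq_get (by omega)
  have hgp := List.nodup_iff_injective_get.mp hpn
  have hgq := List.nodup_iff_injective_get.mp hqn
  refine ⟨mp, mq, fun i => p.get (Fin.cast hmp.symm i), fun j => q.get (Fin.cast hmq.symm j),
    by omega, by omega, ⟨?_, ?_⟩, ⟨?_, ?_⟩, ?_, ?_, ?_, ?_⟩
  · intro i j hij
    have := hgp hij
    exact Fin.ext (by simpa using congrArg Fin.val this)
  · intro i
    have h1 : (Fin.cast hmp.symm i.castSucc) = (⟨i.val, by omega⟩ : Fin p.length) := Fin.ext rfl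
    have h2 : (Fin.cast hmp.symm i.succ) = (⟨i.val + 1, by omega⟩ : Fin p.length) := Fin.ext rfl
    beta_reduce
    rw [h1, h2]
    exact List.isChain_iff_getElem.mp hpc i.val (by omega)
  · intro i j hij
    have := hgq hij
    exact Fin.ext (by simpa using congrArg Fin.val this)
  · intro i
    have h1 : (Fin.cast hmq.symm i.castSucc) = (⟨i.val, by omega⟩ : Fin q.length) := Fin.ext rfl
    have h2 : (Fin.cast hmq.symm i.succ) = (⟨i.val + 1, by omega⟩ : Fin q.length) := Fin.ext rfl
    beta_reduce
    rw [h1, h2]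
    exact List.isChain_iff_getElem.mp hqc i.val (by omega)
  · have := hh
    rw [hp0, hq0] at this
    have h1 : (Fin.cast hmp.symm (0 : Fin (mp + 1))) = (⟨0, by omega⟩ : Fin p.length) := Fin.ext (by simp)
    have h2 : (Fin.cast hmq.symm (0 : Fin (mq + 1))) = (⟨0, by omega⟩ : Fin q.length) := Fin.ext (by simp)
    beta_reduce
    rw [h1, h2]
    exact Option.some_inj.mp this
  · have := hlast
    rw [hpL, hqL] at this
    have h1 : (Fin.cast hmp.symm (Fin.last mp)) = (⟨p.length - 1, by omega⟩ : Fin p.length) :=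
      Fin.ext (by simp [Fin.last]; omega)
    have h2 : (Fin.cast hmq.symm (Fin.last mq)) = (⟨q.length - 1, by omega⟩ : Fin q.length) :=
      Fin.ext (by simp [Fin.last]; omega)
    beta_reduce
    rw [h1, h2]
    exact Option.some_inj.mp this
  · have h1 : (Fin.cast hmp.symm (0 : Fin (mp + 1))) = (⟨0, by omega⟩ : Fin p.length) := Fin.ext (by simp)
    have h2 : (Fin.cast hmp.symm (Fin.last mp)) = (⟨p.length - 1, by omega⟩ : Fin p.length) :=
      Fin.ext (by simp [Fin.last]; omega)
    beta_reduce
    rw [h1, h2]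
    intro hcon
    apply hne
    rw [hp0, hpL, hcon]
  · intro i j hij
    beta_reduce at hij
    have hxp : p.get (Fin.cast hmp.symm i) ∈ p := List.get_mem _ _
    have hxq : p.get (Fin.cast hmp.symm i) ∈ q := hij ▸ List.get_mem _ _
    rcases hdisj _ hxp hxq with hc | hc
    · left
      have hqh : q.head? = some (p.get (Fin.cast hmp.symm i)) := hh ▸ hc
      rw [hp0] at hc; rw [hq0] at hqh
      constructor
      · have := hgp (Option.some_inj.mp hc).symm
        exact Fin.ext (by simpa using congrArg Fin.val this)
      · have := hgq ((Option.some_inj.mp hqh).trans hij)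
        have := congrArg Fin.val this
        exact Fin.ext (by simp only [Fin.coe_cast, Fin.val_zero] at this ⊢; omega)
    · right
      have hqh : q.getLast? = some (p.get (Fin.cast hmp.symm i)) := hlast ▸ hc
      rw [hpL] at hc; rw [hqL] at hqh
      constructor
      · have := hgp (Option.some_inj.mp hc).symm
        apply Fin.ext
        have := congrArg Fin.val this
        simp [Fin.last] at this ⊢
        omega
      · have := hgq ((Option.some_inj.mp hqh).trans hij)
        apply Fin.ext
        have := congrArg Fin.val this
        simp [Fin.last] at this ⊢
        omega

lemma cycSeg {W : Type u} {A : W → W → Prop} {nc : ℕ} {cyc : Fin (nc + 1) → W}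
    (hnc : 1 ≤ nc) (hinj : Function.Injective cyc)
    (harc : ∀ i : Fin (nc + 1), A (cyc i) (cyc (i + 1))) (e e' : Fin (nc + 1)) :
    ∃ r : List W, r.IsChain A ∧ r.Nodup ∧ r.head? = some (cyc e) ∧
      r.getLast? = some (cyc e') ∧ 1 ≤ r.length ∧ ∀ x ∈ r, x ∈ Set.range cyc := by
  set d : ℕ := ((e' - e : Fin (nc + 1)) : ℕ) with hd
  have hdnc : d ≤ nc := by have := (e' - e).isLt; omega
  have hcast : ∀ t : Fin (d + 1), ((Fin.castLE (by omega) t : Fin (nc + 1)) : ℕ) = (t : ℕ) :=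
    fun t => rfl
  refine ⟨List.ofFn (fun t : Fin (d + 1) => cyc (e + Fin.castLE (by omega) t)),
    ?_, ?_, ?_, ?_, by simp, ?_⟩
  · apply ofFn_chain'
    intro t
    have key : (Fin.castLE (by omega) t.succ : Fin (nc + 1)) =
        (Fin.castLE (by omega) t.castSucc : Fin (nc + 1)) + 1 := by
      have hx : (Fin.castLE (by omega : d + 1 ≤ nc + 1) t.castSucc : Fin (nc + 1)) < Fin.last nc := by
        rw [Fin.lt_iff_val_lt_val]
        have ht := t.isLt
        simp [Fin.last]
        omega
      apply Fin.ext
      rw [Fin.val_add_one_of_lt hx]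
      simp
    beta_reduce
    rw [key, ← add_assoc]
    exact harc _
  · rw [List.nodup_ofFn]
    intro a b hab
    have h2 := add_left_cancel (hinj hab)
    exact Fin.castLE_injective _ h2
  · rw [ofFn_head?]
    have : (Fin.castLE (by omega : d + 1 ≤ nc + 1) (0 : Fin (d + 1))) = (0 : Fin (nc + 1)) :=
      Fin.ext (by simp)
    rw [this, add_zero]
  · rw [ofFn_getLast?]
    have : (Fin.castLE (by omega : d + 1 ≤ nc + 1) (Fin.last d)) = e' - e := Fin.ext (by simp [Fin.last]; exact hd)
    rw [this, add_sub_cancel]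
  · intro x hx
    rw [List.mem_ofFn] at hx
    obtain ⟨t, ht⟩ := hx
    exact ⟨_, ht⟩

lemma getLast?_cons_of_ne {a : V} {l : List V} (h : l ≠ []) :
    (a :: l).getLast? = l.getLast? := by
  rw [show a :: l = [a] ++ l from rfl, List.getLast?_append,
    List.getLast?_eq_getLast h]
  rfl

lemma head?_append_left {l₁ l₂ : List V} {a : V} (h : l₁.head? = some a) :
    (l₁ ++ l₂).head? = some a := by
  rw [List.head?_append, h]; rfl

lemma getLast?_append_right' {l₁ l₂ : List V} {a : V} (h : l₂.getLast? = some a) :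
    (l₁ ++ l₂).getLast? = some a := by
  rw [List.getLast?_append, h]; rfl

lemma tbc_swap {A : V → V → Prop} {k l : ℕ} (h : TBC A l k) : TBC A k l := by
  obtain ⟨p, q, hpc, hpn, hqc, hqn, hpl, hql, hh, hlast, hne, hdisj⟩ := h
  refine ⟨q, p, hqc, hqn, hpc, hpn, hql, hpl, hh.symm, hlast.symm, ?_, ?_⟩
  · rw [← hh, ← hlast]; exact hne
  · intro x hx hy
    rcases hdisj x hy hx with hc | hc
    · left; rw [← hh]; exact hc
    · right; rw [← hlast]; exact hc

lemma step {W W' : Type u} {A : W → W → Prop} {A' : W' → W' → Prop} {f : W → W'}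
    {nc : ℕ} {cyc : Fin (nc + 1) → W} {k l : ℕ}
    (hnc : 1 ≤ nc) (hcinj : Function.Injective cyc)
    (hcarc : ∀ i : Fin (nc + 1), A (cyc i) (cyc (i + 1)))
    (hco : IsContractionOf A' A f (Set.range cyc))
    (hno : ¬ TBC A k l) : ¬ TBC A' k l := by
  obtain ⟨hsurj, hSeq, hfinj, hA'⟩ := hco
  intro htbc
  apply hno
  set g : W' → W := Function.surjInv hsurj with hgdef
  have hfg : ∀ x, f (g x) = x := fun x => Function.rightInverse_surjInv hsurj x
  set vS : W' := f (cyc 0) with hvSdef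
  have hfS : ∀ a : W, f a = vS ↔ a ∈ Set.range cyc := by
    intro a
    constructor
    · intro h
      rcases hfinj a (cyc 0) h with h' | ⟨h1, _⟩
      · exact h' ▸ ⟨0, rfl⟩
      · exact h1
    · intro h
      exact hSeq a (cyc 0) h ⟨0, rfl⟩
  have hgS : ∀ x : W', x ≠ vS → g x ∉ Set.range cyc := by
    intro x hx hmem
    exact hx ((hfg x).symm.trans ((hfS (g x)).mpr hmem))
  have hginj : Function.Injective g := fun a b h => by rw [← hfg a, ← hfg b, h]
  have hglift : ∀ x : W', x ≠ vS → ∀ a : W, f a = x → a = g x := by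
    intro x hx a ha
    rcases hfinj a (g x) (ha.trans (hfg x).symm) with h | ⟨h1, _⟩
    · exact h
    · exact absurd (ha.symm.trans ((hfS a).mpr h1)) hx
  have harc' : ∀ x y : W', A' x y → x ≠ vS → y ≠ vS → A (g x) (g y) := by
    intro x y hxy hx hy
    obtain ⟨-, a, b, hfa, hfb, hab⟩ := (hA' x y).mp hxy
    rw [hglift x hx a hfa, hglift y hy b hfb] at hab
    exact hab
  have harcIn : ∀ x : W', A' x vS → x ≠ vS → ∃ e, A (g x) (cyc e) := by
    intro x hx hxv
    obtain ⟨-, a, b, hfa, hfb, hab⟩ := (hA' x vS).mp hx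
    obtain ⟨e, he⟩ := (hfS b).mp hfb
    refine ⟨e, ?_⟩
    rw [hglift x hxv a hfa] at hab
    rwa [he]
  have harcOut : ∀ y : W', A' vS y → y ≠ vS → ∃ e, A (cyc e) (g y) := by
    intro y hy hyv
    obtain ⟨-, a, b, hfa, hfb, hab⟩ := (hA' vS y).mp hy
    obtain ⟨e, he⟩ := (hfS a).mp hfa
    refine ⟨e, ?_⟩
    rw [hglift y hyv b hfb] at hab
    rwa [he]
  have hmapchain : ∀ p : List W', p.IsChain A' → (∀ x ∈ p, x ≠ vS) → (p.map g).IsChain A := by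
    intro p
    induction p with
    | nil => intro _ _; simp
    | cons a t ih =>
      intro hc hmem
      cases t with
      | nil => simp
      | cons b t' =>
        rw [List.isChain_cons_cons] at hc
        simp only [List.map_cons]
        rw [List.isChain_cons_cons]
        refine ⟨harc' a b hc.1 (hmem a (by simp)) (hmem b (by simp)), ?_⟩
        have := ih hc.2 (fun x hx => hmem x (List.mem_cons_of_mem a hx))
        simpa using this
  have hmapS : ∀ (s : List W'), (∀ x ∈ s, x ≠ vS) → ∀ y ∈ s.map g, y ∉ Set.range cyc := by
    intro s hs y hy
    rw [List.mem_map] at hy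
    obtain ⟨z, hz, rfl⟩ := hy
    exact hgS z (hs z hz)
  obtain ⟨p, q, hpc, hpn, hqc, hqn, hplen, hqlen, hh, hlast, hne0, hdisj0⟩ := htbc
  have hpne : p ≠ [] := by intro h; rw [h] at hplen; simp at hplen
  have hqne : q ≠ [] := by intro h; rw [h] at hqlen; simp at hqlen
  obtain ⟨u, hu⟩ : ∃ u, p.head? = some u := ⟨p.head hpne, List.head?_eq_head hpne⟩
  obtain ⟨v, hv⟩ : ∃ v, p.getLast? = some v := ⟨p.getLast hpne, List.getLast?_eq_getLast hpne⟩
  have hqu : q.head? = some u := hh ▸ hu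
  have hqv : q.getLast? = some v := hlast ▸ hv
  have huv : u ≠ v := by intro h; apply hne0; rw [hu, hv, h]
  have hdisj : ∀ x, x ∈ p → x ∈ q → x = u ∨ x = v := by
    intro x hx hy
    rcases hdisj0 x hx hy with hc | hc
    · left; rw [hu] at hc; exact (Option.some_inj.mp hc).symm
    · right; rw [hv] at hc; exact (Option.some_inj.mp hc).symm
  -- the internal-vertex surgery, stated for both (p,q) and (q,p)
  have hInternal : ∀ (k' l' : ℕ) (p q : List W'),
      p.IsChain A' → p.Nodup → q.IsChain A' → q.Nodup →
      k' + 1 ≤ p.length → l' + 1 ≤ q.length →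
      p.head? = some u → q.head? = some u → p.getLast? = some v → q.getLast? = some v →
      (∀ x, x ∈ p → x ∈ q → x = u ∨ x = v) →
      u ≠ vS → v ≠ vS → vS ∈ p → TBC A k' l' := by
    clear hpc hpn hqc hqn hplen hqlen hh hlast hne0 hdisj0 hdisj hu hv hqu hqv hpne hqne
    intro k' l' p q hpc hpn hqc hqn hplen hqlen hu hqu hv hqv hdisj huS hvS hvp
    have hqnov : ∀ x ∈ q, x ≠ vS := by
      intro x hx hxv
      rw [hxv] at hx
      rcases hdisj vS hvp hx with h | h
      · exact huS h.symm
      · exact hvS h.symm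
    obtain ⟨p1, p2, rfl⟩ := List.append_of_mem hvp
    have hp1ne : p1 ≠ [] := by
      intro h
      subst h
      simp at hu
      exact huS hu.symm
    have hp2ne : p2 ≠ [] := by
      intro h
      subst h
      rw [List.getLast?_append] at hv
      simp at hv
      exact hvS hv.symm
    rw [List.nodup_append] at hpn
    obtain ⟨hp1n, hmidn, hdisj12⟩ := hpn
    rw [List.nodup_cons] at hmidn
    obtain ⟨hvSp2, hp2n⟩ := hmidn
    have hvSp1 : vS ∉ p1 := fun h => hdisj12 vS h vS (by simp) rfl
    have hp1nov : ∀ x ∈ p1, x ≠ vS := fun x hx hxv => hvSp1 (hxv ▸ hx)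
    have hp2nov : ∀ x ∈ p2, x ≠ vS := fun x hx hxv => hvSp2 (hxv ▸ hx)
    have hdisjp1p2 : ∀ x ∈ p1, x ∉ p2 := fun x hx hx2 => hdisj12 x hx x (by simp [hx2]) rfl
    rw [List.isChain_append] at hpc
    obtain ⟨hp1c, hmidc, hjunc⟩ := hpc
    rw [List.isChain_cons] at hmidc
    obtain ⟨hout, hp2c⟩ := hmidc
    have hp1L : p1.getLast? = some (p1.getLast hp1ne) := List.getLast?_eq_getLast hp1ne
    have ht₁p1 : p1.getLast hp1ne ∈ p1 := List.getLast_mem hp1ne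
    have ht₁ne : p1.getLast hp1ne ≠ vS := hp1nov _ ht₁p1
    have harc1 : A' (p1.getLast hp1ne) vS := hjunc _ hp1L vS rfl
    have hp2h : p2.head? = some (p2.head hp2ne) := List.head?_eq_head hp2ne
    have hh₂p2 : p2.head hp2ne ∈ p2 := List.head_mem hp2ne
    have hh₂ne : p2.head hp2ne ≠ vS := hp2nov _ hh₂p2
    have harc2 : A' vS (p2.head hp2ne) := hout _ hp2h
    obtain ⟨e₁, he₁⟩ := harcIn _ harc1 ht₁ne
    obtain ⟨e₂, he₂⟩ := harcOut _ harc2 hh₂ne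
    obtain ⟨r, hrc, hrn, hrh, hrl, hrlen, hrS⟩ := cycSeg hnc hcinj hcarc e₁ e₂
    have hrne : r ≠ [] := by intro h; rw [h] at hrlen; simp at hrlen
    have hp1h : p1.head? = some u := by
      rw [List.head?_append, List.head?_eq_head hp1ne] at hu
      rw [List.head?_eq_head hp1ne]
      exact hu
    have hp2L : p2.getLast? = some v := by
      rw [List.getLast?_append, getLast?_cons_of_ne hp2ne,
        List.getLast?_eq_getLast hp2ne] at hv
      rw [List.getLast?_eq_getLast hp2ne]
      exact hv
    have hPh : (p1.map g ++ (r ++ p2.map g)).head? = some (g u) := by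
      apply head?_append_left
      rw [List.head?_map, hp1h]
      rfl
    have hPl : (p1.map g ++ (r ++ p2.map g)).getLast? = some (g v) := by
      apply getLast?_append_right'
      apply getLast?_append_right'
      rw [List.getLast?_map, hp2L]
      rfl
    have hQh : (q.map g).head? = some (g u) := by rw [List.head?_map, hqu]; rfl
    have hQl : (q.map g).getLast? = some (g v) := by rw [List.getLast?_map, hqv]; rfl
    have hPc : (p1.map g ++ (r ++ p2.map g)).IsChain A := by
      rw [List.isChain_append]
      refine ⟨hmapchain p1 hp1c hp1nov, ?_, ?_⟩
      · rw [List.isChain_append]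
        refine ⟨hrc, hmapchain p2 hp2c hp2nov, ?_⟩
        intro x hx y hy
        rw [hrl] at hx
        rw [List.head?_map, hp2h] at hy
        simp only [Option.mem_def, Option.some.injEq, Option.map_some] at hx hy
        rw [← hx, ← hy]
        exact he₂
      · intro x hx y hy
        rw [List.getLast?_map, hp1L] at hx
        rw [head?_append_left hrh] at hy
        simp only [Option.mem_def, Option.some.injEq, Option.map_some] at hx hy
        rw [← hx, ← hy]
        exact he₁
    have hPn : (p1.map g ++ (r ++ p2.map g)).Nodup := by
      rw [List.nodup_append]
      refine ⟨List.Nodup.map hginj hp1n, ?_, ?_⟩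
      · rw [List.nodup_append]
        refine ⟨hrn, List.Nodup.map hginj hp2n, ?_⟩
        intro x hx y hx2 hxy; subst hxy
        exact hmapS p2 hp2nov x hx2 (hrS x hx)
      · intro x hx y hx2 hxy; subst hxy
        rw [List.mem_append] at hx2
        rcases hx2 with hx2 | hx2
        · exact hmapS p1 hp1nov x hx (hrS x hx2)
        · rw [List.mem_map] at hx hx2
          obtain ⟨a, ha, rfl⟩ := hx
          obtain ⟨b, hb, hgb⟩ := hx2
          have hba : b = a := hginj hgb
          subst hba
          exact hdisjp1p2 b ha hb
    have hPlen : k' + 1 ≤ (p1.map g ++ (r ++ p2.map g)).length := by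
      simp only [List.length_append, List.length_map]
      simp only [List.length_append, List.length_cons] at hplen
      omega
    have hQlen : l' + 1 ≤ (q.map g).length := by rw [List.length_map]; exact hqlen
    refine ⟨p1.map g ++ (r ++ p2.map g), q.map g, hPc, hPn, hmapchain q hqc hqnov,
      List.Nodup.map hginj hqn, hPlen, hQlen, hPh.trans hQh.symm, hPl.trans hQl.symm, ?_, ?_⟩
    · rw [hPh, hPl]
      intro hcon
      exact huv (hginj (Option.some_inj.mp hcon))
    · intro x hxP hxQ
      rw [List.mem_map] at hxQ
      obtain ⟨z, hz, rfl⟩ := hxQ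
      have hzS : g z ∉ Set.range cyc := hgS z (hqnov z hz)
      rw [List.mem_append] at hxP
      rcases hxP with hx1 | hx23
      · rw [List.mem_map] at hx1
        obtain ⟨y, hy, hgy⟩ := hx1
        have hyz : y = z := hginj hgy
        subst hyz
        rcases hdisj y (List.mem_append_left _ hy) hz with rfl | rfl
        · left; exact hPh
        · right; exact hPl
      · rw [List.mem_append] at hx23
        rcases hx23 with hx2 | hx3
        · exact absurd (hrS _ hx2) hzS
        · rw [List.mem_map] at hx3
          obtain ⟨y, hy, hgy⟩ := hx3
          have hyz : y = z := hginj hgy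
          subst hyz
          rcases hdisj y (List.mem_append_right _ (List.mem_cons_of_mem vS hy)) hz with rfl | rfl
          · left; exact hPh
          · right; exact hPl
  by_cases huS : u = vS
  · -- vS is the common start vertex
    rcases p with _ | ⟨a, p1⟩
    · exact absurd rfl hpne
    rcases q with _ | ⟨b, q1⟩
    · exact absurd rfl hqne
    simp only [List.head?_cons, Option.some.injEq] at hu hqu
    subst hu
    subst hqu
    have hp1ne : p1 ≠ [] := by
      intro h
      subst h
      rw [List.getLast?_singleton] at hv
      exact huv (Option.some_inj.mp hv)
    have hq1ne : q1 ≠ [] := by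
      intro h
      subst h
      rw [List.getLast?_singleton] at hqv
      exact huv (Option.some_inj.mp hqv)
    rw [List.nodup_cons] at hpn hqn
    obtain ⟨hup1, hp1n⟩ := hpn
    obtain ⟨huq1, hq1n⟩ := hqn
    have hp1nov : ∀ x ∈ p1, x ≠ vS := fun x hx hxv => hup1 (by rw [huS, ← hxv]; exact hx)
    have hq1nov : ∀ x ∈ q1, x ≠ vS := fun x hx hxv => huq1 (by rw [huS, ← hxv]; exact hx)
    rw [List.isChain_cons] at hpc hqc
    obtain ⟨hpout, hp1c⟩ := hpc
    obtain ⟨hqout, hq1c⟩ := hqc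
    have hp1h : p1.head? = some (p1.head hp1ne) := List.head?_eq_head hp1ne
    have hq1h : q1.head? = some (q1.head hq1ne) := List.head?_eq_head hq1ne
    have harcp : A' vS (p1.head hp1ne) := huS ▸ hpout _ hp1h
    have harcq : A' vS (q1.head hq1ne) := huS ▸ hqout _ hq1h
    obtain ⟨e₁, he₁⟩ := harcOut _ harcp (hp1nov _ (List.head_mem hp1ne))
    obtain ⟨e₂, he₂⟩ := harcOut _ harcq (hq1nov _ (List.head_mem hq1ne))
    obtain ⟨r, hrc, hrn, hrh, hrl, hrlen, hrS⟩ := cycSeg hnc hcinj hcarc e₂ e₁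
    have hrne : r ≠ [] := by intro h; rw [h] at hrlen; simp at hrlen
    have hp1L : p1.getLast? = some v := by rwa [getLast?_cons_of_ne hp1ne] at hv
    have hq1L : q1.getLast? = some v := by rwa [getLast?_cons_of_ne hq1ne] at hqv
    have hvne : v ≠ vS := hp1nov v (List.mem_of_mem_getLast? hp1L)
    have hq1mapne : q1.map g ≠ [] := fun h => hq1ne (List.map_eq_nil_iff.mp h)
    have hPh : (r ++ p1.map g).head? = some (cyc e₂) := head?_append_left hrh
    have hPl : (r ++ p1.map g).getLast? = some (g v) := by
      apply getLast?_append_right'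
      rw [List.getLast?_map, hp1L]
      rfl
    have hQl : (cyc e₂ :: q1.map g).getLast? = some (g v) := by
      rw [getLast?_cons_of_ne hq1mapne, List.getLast?_map, hq1L]
      rfl
    have hPc : (r ++ p1.map g).IsChain A := by
      rw [List.isChain_append]
      refine ⟨hrc, hmapchain p1 hp1c hp1nov, ?_⟩
      intro x hx y hy
      rw [hrl] at hx
      rw [List.head?_map, hp1h] at hy
      simp only [Option.mem_def, Option.some.injEq, Option.map_some] at hx hy
      rw [← hx, ← hy]
      exact he₁
    have hQc : (cyc e₂ :: q1.map g).IsChain A := by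
      rw [List.isChain_cons]
      refine ⟨?_, hmapchain q1 hq1c hq1nov⟩
      intro y hy
      rw [List.head?_map, hq1h] at hy
      simp only [Option.mem_def, Option.some.injEq, Option.map_some] at hy
      rw [← hy]
      exact he₂
    have hPn : (r ++ p1.map g).Nodup := by
      rw [List.nodup_append]
      refine ⟨hrn, List.Nodup.map hginj hp1n, ?_⟩
      intro x hx y hx2 hxy; subst hxy
      exact hmapS p1 hp1nov x hx2 (hrS x hx)
    have hQn : (cyc e₂ :: q1.map g).Nodup := by
      rw [List.nodup_cons]
      refine ⟨fun h => hmapS q1 hq1nov _ h ⟨e₂, rfl⟩, List.Nodup.map hginj hq1n⟩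
    have hPlen : k + 1 ≤ (r ++ p1.map g).length := by
      simp only [List.length_append, List.length_map]
      simp only [List.length_cons] at hplen
      omega
    have hQlen : l + 1 ≤ (cyc e₂ :: q1.map g).length := by
      simp only [List.length_cons, List.length_map]
      simp only [List.length_cons] at hqlen
      omega
    refine ⟨r ++ p1.map g, cyc e₂ :: q1.map g, hPc, hPn, hQc, hQn, hPlen, hQlen,
      hPh, hPl.trans hQl.symm, ?_, ?_⟩
    · rw [hPh, hPl]
      intro hcon
      have := Option.some_inj.mp hcon
      exact hgS v hvne (this ▸ ⟨e₂, rfl⟩)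
    · intro x hxP hxQ
      rcases List.mem_append.mp hxP with hxr | hxp1
      · rcases List.mem_cons.mp hxQ with hxe | hxq1
        · left; rw [hPh, hxe]
        · exact absurd (hrS x hxr) (hmapS q1 hq1nov x hxq1)
      · rcases List.mem_cons.mp hxQ with hxe | hxq1
        · exact absurd (hxe ▸ (⟨e₂, rfl⟩ : cyc e₂ ∈ Set.range cyc))
            (hmapS p1 hp1nov x hxp1)
        · obtain ⟨y, hy, rfl⟩ := List.mem_map.mp hxp1
          obtain ⟨z, hz, hgz⟩ := List.mem_map.mp hxq1
          have hzy : z = y := hginj hgz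
          subst hzy
          rcases hdisj z (List.mem_cons_of_mem _ hy) (List.mem_cons_of_mem _ hz) with rfl | rfl
          · exact absurd huS (hp1nov _ hy)
          · right; exact hPl
  by_cases hvS : v = vS
  · -- vS is the common end vertex
    have hglp : p.getLast hpne = v :=
      Option.some_inj.mp ((List.getLast?_eq_getLast hpne).symm.trans hv)
    have hglq : q.getLast hqne = v :=
      Option.some_inj.mp ((List.getLast?_eq_getLast hqne).symm.trans hqv)
    obtain ⟨p1, rfl⟩ : ∃ p1, p = p1 ++ [v] :=
      ⟨p.dropLast, by rw [← hglp]; exact (List.dropLast_append_getLast hpne).symm⟩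
    obtain ⟨q1, rfl⟩ : ∃ q1, q = q1 ++ [v] :=
      ⟨q.dropLast, by rw [← hglq]; exact (List.dropLast_append_getLast hqne).symm⟩
    have hp1ne : p1 ≠ [] := by
      intro h
      subst h
      simp at hu
      exact huv hu.symm
    have hq1ne : q1 ≠ [] := by
      intro h
      subst h
      simp at hqu
      exact huv hqu.symm
    rw [List.nodup_append] at hpn hqn
    obtain ⟨hp1n, -, hpd⟩ := hpn
    obtain ⟨hq1n, -, hqd⟩ := hqn
    have hvp1 : v ∉ p1 := fun h => hpd v h v (by simp) rfl
    have hvq1 : v ∉ q1 := fun h => hqd v h v (by simp) rfl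
    have hp1nov : ∀ x ∈ p1, x ≠ vS := fun x hx hxv => hvp1 (by rw [hvS, ← hxv]; exact hx)
    have hq1nov : ∀ x ∈ q1, x ≠ vS := fun x hx hxv => hvq1 (by rw [hvS, ← hxv]; exact hx)
    rw [List.isChain_append] at hpc hqc
    obtain ⟨hp1c, -, hpj⟩ := hpc
    obtain ⟨hq1c, -, hqj⟩ := hqc
    have hp1L : p1.getLast? = some (p1.getLast hp1ne) := List.getLast?_eq_getLast hp1ne
    have hq1L : q1.getLast? = some (q1.getLast hq1ne) := List.getLast?_eq_getLast hq1ne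
    have harcp : A' (p1.getLast hp1ne) vS := hvS ▸ hpj _ hp1L v rfl
    have harcq : A' (q1.getLast hq1ne) vS := hvS ▸ hqj _ hq1L v rfl
    obtain ⟨e₁, he₁⟩ := harcIn _ harcp (hp1nov _ (List.getLast_mem hp1ne))
    obtain ⟨e₂, he₂⟩ := harcIn _ harcq (hq1nov _ (List.getLast_mem hq1ne))
    obtain ⟨r, hrc, hrn, hrh, hrl, hrlen, hrS⟩ := cycSeg hnc hcinj hcarc e₁ e₂
    have hrne : r ≠ [] := by intro h; rw [h] at hrlen; simp at hrlen
    have hp1h : p1.head? = some u := by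
      rw [List.head?_append, List.head?_eq_head hp1ne] at hu
      rw [List.head?_eq_head hp1ne]
      exact hu
    have hq1h : q1.head? = some u := by
      rw [List.head?_append, List.head?_eq_head hq1ne] at hqu
      rw [List.head?_eq_head hq1ne]
      exact hqu
    have hune : u ≠ vS := huS
    have hPh : (p1.map g ++ r).head? = some (g u) := by
      apply head?_append_left
      rw [List.head?_map, hp1h]
      rfl
    have hQh : (q1.map g ++ [cyc e₂]).head? = some (g u) := by
      apply head?_append_left
      rw [List.head?_map, hq1h]
      rfl
    have hPl : (p1.map g ++ r).getLast? = some (cyc e₂) := getLast?_append_right' hrl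
    have hQl : (q1.map g ++ [cyc e₂]).getLast? = some (cyc e₂) :=
      getLast?_append_right' List.getLast?_singleton
    have hPc : (p1.map g ++ r).IsChain A := by
      rw [List.isChain_append]
      refine ⟨hmapchain p1 hp1c hp1nov, hrc, ?_⟩
      intro x hx y hy
      rw [List.getLast?_map, hp1L] at hx
      rw [hrh] at hy
      simp only [Option.mem_def, Option.some.injEq, Option.map_some] at hx hy
      rw [← hx, ← hy]
      exact he₁
    have hQc : (q1.map g ++ [cyc e₂]).IsChain A := by
      rw [List.isChain_append]
      refine ⟨hmapchain q1 hq1c hq1nov, List.isChain_singleton _, ?_⟩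
      intro x hx y hy
      rw [List.getLast?_map, hq1L] at hx
      simp only [Option.mem_def, Option.some.injEq, Option.map_some, List.head?_cons] at hx hy
      rw [← hx, ← hy]
      exact he₂
    have hPn : (p1.map g ++ r).Nodup := by
      rw [List.nodup_append]
      refine ⟨List.Nodup.map hginj hp1n, hrn, ?_⟩
      intro x hx y hx2 hxy; subst hxy
      exact hmapS p1 hp1nov x hx (hrS x hx2)
    have hQn : (q1.map g ++ [cyc e₂]).Nodup := by
      rw [List.nodup_append]
      refine ⟨List.Nodup.map hginj hq1n, List.nodup_singleton _, ?_⟩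
      intro x hx y hx2 hxy; subst hxy
      rw [List.mem_singleton] at hx2
      exact hmapS q1 hq1nov x hx (hx2 ▸ ⟨e₂, rfl⟩)
    have hPlen : k + 1 ≤ (p1.map g ++ r).length := by
      simp only [List.length_append, List.length_map]
      simp only [List.length_append, List.length_singleton] at hplen
      omega
    have hQlen : l + 1 ≤ (q1.map g ++ [cyc e₂]).length := by
      simp only [List.length_append, List.length_map, List.length_singleton] at hqlen ⊢
      omega
    refine ⟨p1.map g ++ r, q1.map g ++ [cyc e₂], hPc, hPn, hQc, hQn, hPlen, hQlen,
      hPh.trans hQh.symm, hPl.trans hQl.symm, ?_, ?_⟩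
    · rw [hPh, hPl]
      intro hcon
      have := Option.some_inj.mp hcon
      exact hgS u hune (this ▸ ⟨e₂, rfl⟩)
    · intro x hxP hxQ
      rcases List.mem_append.mp hxP with hxp1 | hxr
      · rcases List.mem_append.mp hxQ with hxq1 | hxe
        · obtain ⟨y, hy, rfl⟩ := List.mem_map.mp hxp1
          obtain ⟨z, hz, hgz⟩ := List.mem_map.mp hxq1
          have hzy : z = y := hginj hgz
          subst hzy
          rcases hdisj z (List.mem_append_left _ hy) (List.mem_append_left _ hz) with rfl | rfl
          · left; exact hPh
          · exact absurd hvS (hp1nov _ hy)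
        · rw [List.mem_singleton] at hxe
          obtain ⟨y, hy, rfl⟩ := List.mem_map.mp hxp1
          exact absurd (hxe ▸ (⟨e₂, rfl⟩ : cyc e₂ ∈ Set.range cyc))
            (hgS y (hp1nov y hy))
      · rcases List.mem_append.mp hxQ with hxq1 | hxe
        · exact absurd (hrS x hxr) (hmapS q1 hq1nov x hxq1)
        · right; rw [List.mem_singleton] at hxe; rw [hPl, hxe]
  by_cases hvp : vS ∈ p
  · exact hInternal k l p q hpc hpn hqc hqn hplen hqlen hu hqu hv hqv hdisj huS hvS hvp
  by_cases hvq : vS ∈ q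
  · exact tbc_swap (hInternal l k q p hqc hqn hpc hpn hqlen hplen hqu hu hqv hv
      (fun x hx hy => hdisj x hy hx) huS hvS hvq)
  · -- clean case : vS appears nowhere
    have hpnov : ∀ x ∈ p, x ≠ vS := fun x hx hxv => hvp (hxv ▸ hx)
    have hqnov : ∀ x ∈ q, x ≠ vS := fun x hx hxv => hvq (hxv ▸ hx)
    have hPh : (p.map g).head? = some (g u) := by rw [List.head?_map, hu]; rfl
    have hPl : (p.map g).getLast? = some (g v) := by rw [List.getLast?_map, hv]; rfl
    have hQh : (q.map g).head? = some (g u) := by rw [List.head?_map, hqu]; rfl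
    have hQl : (q.map g).getLast? = some (g v) := by rw [List.getLast?_map, hqv]; rfl
    refine ⟨p.map g, q.map g, hmapchain p hpc hpnov, List.Nodup.map hginj hpn,
      hmapchain q hqc hqnov, List.Nodup.map hginj hqn,
      by rwa [List.length_map], by rwa [List.length_map],
      hPh.trans hQh.symm, hPl.trans hQl.symm, ?_, ?_⟩
    · rw [hPh, hPl]
      intro hcon
      exact huv (hginj (Option.some_inj.mp hcon))
    · intro x hxP hxQ
      obtain ⟨y, hy, rfl⟩ := List.mem_map.mp hxP
      obtain ⟨z, hz, hgz⟩ := List.mem_map.mp hxQ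
      have hzy : z = y := hginj hgz
      subst hzy
      rcases hdisj z hy hz with rfl | rfl
      · left; exact hPh
      · right; exact hPl

end TBCAux

/-- Proposition 3.2.  With the iterated contraction construction
(`D⁽⁰⁾ = (W 0, A 0)` a strongly connected digraph without `c(k,l)`; for `i < m`,
`χ(D⁽ⁱ⁾) ≥ 2k − 2`, `C⁽ⁱ⁾` (given by `c i`, of length `nc i + 1`) is a longest
directed cycle of `D⁽ⁱ⁾` and `D⁽ⁱ⁺¹⁾ = D⁽ⁱ⁾ / V(C⁽ⁱ⁾)`; and `χ(D⁽ᵐ⁾) ≤ 2k − 3`):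
for every `j ∈ {0, 1, …, m}`, the digraph `D⁽ʲ⁾` contains no two-block cycle
`c(k, l)`. -/


theorem contraction_no_twoBlockCycle
    (k l m : ℕ) (hk : 2 ≤ k) (hl : 1 ≤ l) (hlk : l ≤ k)
    (W : ℕ → Type u) [∀ i, Fintype (W i)]
    (A : ∀ i, W i → W i → Prop) (hirr : Irreflexive (A 0))
    (hstrong : ∀ u v : W 0, Relation.ReflTransGen (A 0) u v)
    (hno : ¬ HasTwoBlockCycle (A 0) k l)
    (nc : ℕ → ℕ) (c : ∀ i, Fin (nc i + 1) → W i)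
    (f : ∀ i, W i → W (i + 1))
    (hchi : ∀ i < m, ((2 * k - 2 : ℕ) : ℕ∞) ≤ (underlying (A i)).chromaticNumber)
    (hcyc : ∀ i < m, IsCycle (A i) (nc i) (c i))
    (hlong : ∀ i < m, ∀ (n' : ℕ) (c' : Fin (n' + 1) → W i),
      IsCycle (A i) n' c' → n' ≤ nc i)
    (hcontr : ∀ i < m, IsContractionOf (A (i + 1)) (A i) (f i) (Set.range (c i)))
    (hend : (underlying (A m)).chromaticNumber ≤ ((2 * k - 3 : ℕ) : ℕ∞)) :
    ∀ j ≤ m, ¬ HasTwoBlockCycle (A j) k l := by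
  intro j
  induction j with
  | zero => intro _ hx; exact hno hx
  | succ n ih =>
    intro hj
    have hn : n < m := hj
    obtain ⟨hnc1, hcinj, hcarc⟩ := hcyc n hn
    intro hx
    exact TBCAux.step hnc1 hcinj hcarc (hcontr n hn)
      (fun t => ih (le_of_lt hn) (TBCAux.has_of_tbc t)) (TBCAux.tbc_of_has hx)
end

section
/- With the iterated contraction construction and iterated preimages as in the context: χ(D) ≤ (2k−3) · max over v ∈ V(D^(m)) of χ(D[φ^(m)(v)]), where D[φ^(m)(v)] is the subdigraph of D induced on the vertex set φ^(m)(v). -/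
universe u

/-- Lemma 3.3.  With the iterated contraction construction, and iterated preimage
maps encoded by `g : ∀ i, W 0 → W i` (`g 0 = id`, `g (i+1) = f i ∘ g i`), so that
for `v ∈ V(D⁽ᵐ⁾)` the set `φ⁽ᵐ⁾(v) ⊆ V(D)` is `g m ⁻¹' {v}`:
`χ(D) ≤ (2k − 3) · max_{v ∈ V(D⁽ᵐ⁾)} χ(D[φ⁽ᵐ⁾(v)])`. -/
theorem chromatic_le_contraction_bound
    (k l m : ℕ) (hk : 2 ≤ k) (hl : 1 ≤ l) (hlk : l ≤ k)
    (W : ℕ → Type u) [∀ i, Fintype (W i)]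
    (A : ∀ i, W i → W i → Prop) (hirr : Irreflexive (A 0))
    (hstrong : ∀ u v : W 0, Relation.ReflTransGen (A 0) u v)
    (hno : ¬ HasTwoBlockCycle (A 0) k l)
    (nc : ℕ → ℕ) (c : ∀ i, Fin (nc i + 1) → W i)
    (f : ∀ i, W i → W (i + 1))
    (hchi : ∀ i < m, ((2 * k - 2 : ℕ) : ℕ∞) ≤ (underlying (A i)).chromaticNumber)
    (hcyc : ∀ i < m, IsCycle (A i) (nc i) (c i))
    (hlong : ∀ i < m, ∀ (n' : ℕ) (c' : Fin (n' + 1) → W i),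
      IsCycle (A i) n' c' → n' ≤ nc i)
    (hcontr : ∀ i < m, IsContractionOf (A (i + 1)) (A i) (f i) (Set.range (c i)))
    (hend : (underlying (A m)).chromaticNumber ≤ ((2 * k - 3 : ℕ) : ℕ∞))
    (g : ∀ i, W 0 → W i) (hg0 : ∀ u : W 0, g 0 u = u)
    (hgs : ∀ i < m, ∀ u : W 0, g (i + 1) u = f i (g i u)) :
    (underlying (A 0)).chromaticNumber ≤
      ((2 * k - 3 : ℕ) : ℕ∞) *
        ⨆ v : W m, ((underlying (A 0)).induce (g m ⁻¹' {v})).chromaticNumber := by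
  classical
  -- helper: colorings of fibers are independent of the membership proof presentation
  -- abbreviations
  set N : ℕ := 2 * k - 3 with hN
  -- a coloring of D^(m) with N colors
  obtain ⟨C1⟩ : (underlying (A m)).Colorable N :=
    SimpleGraph.chromaticNumber_le_iff_colorable.mp hend
  -- the supremum is finite
  have hfib : ∀ v : W m,
      ((underlying (A 0)).induce (g m ⁻¹' {v})).chromaticNumber
        ≤ (Fintype.card (W 0) : ℕ∞) := by
    intro v
    have C : ((underlying (A 0)).induce (g m ⁻¹' {v})).Coloring (W 0) :=
      SimpleGraph.Coloring.mk Subtype.val (fun {a b} hadj => hadj.1)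
    exact SimpleGraph.chromaticNumber_le_iff_colorable.mpr C.colorable
  have hsup_ne : (⨆ v : W m, ((underlying (A 0)).induce (g m ⁻¹' {v})).chromaticNumber) ≠ ⊤ :=
    ne_top_of_le_ne_top (ENat.coe_ne_top (Fintype.card (W 0))) (iSup_le hfib)
  set M : ℕ := (⨆ v : W m, ((underlying (A 0)).induce (g m ⁻¹' {v})).chromaticNumber).toNat
    with hM
  have hsupM : (⨆ v : W m, ((underlying (A 0)).induce (g m ⁻¹' {v})).chromaticNumber) = (M : ℕ∞) :=
    (ENat.coe_toNat hsup_ne).symm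
  -- a coloring of each fiber with M colors
  have hcol2 : ∀ v : W m, ((underlying (A 0)).induce (g m ⁻¹' {v})).Colorable M := by
    intro v
    apply SimpleGraph.chromaticNumber_le_iff_colorable.mp
    rw [← hsupM]
    exact le_iSup (fun v => ((underlying (A 0)).induce (g m ⁻¹' {v})).chromaticNumber) v
  have C2 : ∀ v : W m, ((underlying (A 0)).induce (g m ⁻¹' {v})).Coloring (Fin M) :=
    fun v => (hcol2 v).some
  -- helper lemma: value of fiber coloring doesn't depend on the fiber presentation
  have hC2congr : ∀ (w w' : W m) (h : w = w') (u : W 0) (hu : u ∈ g m ⁻¹' {w})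
      (hu' : u ∈ g m ⁻¹' {w'}), C2 w ⟨u, hu⟩ = C2 w' ⟨u, hu'⟩ := by
    intro w w' h u hu hu'
    subst h
    rfl
  -- arcs survive contraction or collapse into a fiber
  have key : ∀ u v : W 0, (A 0 u v ∨ A 0 v u) → ∀ i ≤ m,
      g i u = g i v ∨ A i (g i u) (g i v) ∨ A i (g i v) (g i u) := by
    intro u v harc i
    induction i with
    | zero => intro _; rw [hg0 u, hg0 v]; exact Or.inr harc
    | succ i ih =>
      intro hi
      have hi' : i < m := hi
      rw [hgs i hi' u, hgs i hi' v]
      rcases ih (le_of_lt hi') with he | ha | ha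
      · left; rw [he]
      · by_cases hf : f i (g i u) = f i (g i v)
        · exact Or.inl hf
        · exact Or.inr (Or.inl (((hcontr i hi').2.2.2 _ _).mpr
            ⟨hf, g i u, g i v, rfl, rfl, ha⟩))
      · by_cases hf : f i (g i v) = f i (g i u)
        · exact Or.inl hf.symm
        · exact Or.inr (Or.inr (((hcontr i hi').2.2.2 _ _).mpr
            ⟨hf, g i v, g i u, rfl, rfl, ha⟩))
  -- the product coloring
  have hmain : (underlying (A 0)).Colorable (N * M) := by
    have C : (underlying (A 0)).Coloring (Fin N × Fin M) := by
      refine SimpleGraph.Coloring.mk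
        (fun u => (C1 (g m u), C2 (g m u) ⟨u, rfl⟩)) ?_
      intro u v hadj hcol
      by_cases heq : g m u = g m v
      · -- both in the same fiber: second coordinates differ
        have hvmem : v ∈ g m ⁻¹' {g m u} := heq.symm
        have hadj' : ((underlying (A 0)).induce (g m ⁻¹' {g m u})).Adj ⟨u, rfl⟩ ⟨v, hvmem⟩ :=
          hadj
        have hne := C2 (g m u) |>.valid hadj'
        apply hne
        have h2 : C2 (g m u) ⟨u, rfl⟩ = C2 (g m v) ⟨v, rfl⟩ := congrArg Prod.snd hcol
        rw [h2]
        exact hC2congr (g m v) (g m u) heq.symm v rfl hvmem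
      · -- fibers differ: first coordinates differ
        rcases key u v hadj.2 m le_rfl with he | ha | ha
        · exact heq he
        · exact C1.valid (show (underlying (A m)).Adj (g m u) (g m v) from ⟨heq, Or.inl ha⟩)
            (congrArg Prod.fst hcol)
        · exact C1.valid (show (underlying (A m)).Adj (g m u) (g m v) from ⟨heq, Or.inr ha⟩)
            (congrArg Prod.fst hcol)
    have := C.colorable
    rwa [Fintype.card_prod, Fintype.card_fin, Fintype.card_fin] at this
  calc (underlying (A 0)).chromaticNumber ≤ ((N * M : ℕ) : ℕ∞) :=
        SimpleGraph.chromaticNumber_le_iff_colorable.mpr hmain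
    _ = (N : ℕ∞) * (M : ℕ∞) := by push_cast; ring
    _ = _ := by rw [hsupM]
end

section
/- Let k ≥ ℓ ≥ 1 be integers with k ≥ 2, let D be a digraph containing no cycle with two blocks c(k,ℓ), and let C be a longest directed cycle of D, with |C| ≥ 2k−2. Then for any two distinct vertices x and y of C, D contains no directed path from y to x of length at least 2k−2 all of whose internal vertices lie outside V(C). -/
universe u

open Fin.NatCast Fin.CommRing

/-- Let `k ≥ l ≥ 1` with `k ≥ 2`, let `D` be a digraph containing no two-block
cycle `c(k, l)`, and let `C` (given by `c`, of length `n + 1 ≥ 2k − 2`) be a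
longest directed cycle of `D`.  Then for any two distinct vertices `x, y` of `C`,
`D` contains no directed path from `y` to `x` of length at least `2k − 2` all of
whose internal vertices lie outside `V(C)`. -/
theorem no_long_external_path {V : Type u}
    (k l : ℕ) (hk : 2 ≤ k) (hl : 1 ≤ l) (hlk : l ≤ k)
    (A : V → V → Prop) (hirr : Irreflexive A)
    (hno : ¬ HasTwoBlockCycle A k l)
    (n : ℕ) (c : Fin (n + 1) → V) (hcyc : IsCycle A n c)
    (hlong : ∀ (n' : ℕ) (c' : Fin (n' + 1) → V), IsCycle A n' c' → n' ≤ n)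
    (hlen : 2 * k - 2 ≤ n + 1)
    (x y : V) (hx : x ∈ Set.range c) (hy : y ∈ Set.range c) (hxy : x ≠ y)
    (N : ℕ) (hN : 2 * k - 2 ≤ N) (p : Fin (N + 1) → V)
    (hp : IsDipath A p) (hp0 : p 0 = y) (hpl : p (Fin.last N) = x)
    (hint : ∀ i : Fin (N + 1), i ≠ 0 → i ≠ Fin.last N → p i ∉ Set.range c) :
    False := by
  obtain ⟨a, rfl⟩ := hx
  obtain ⟨b, rfl⟩ := hy
  obtain ⟨hn1, hcinj, harc⟩ := hcyc
  have hab : a ≠ b := fun h => hxy (by rw [h])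
  have hN2 : 2 ≤ N := by omega
  -- the distance from a to b along the cycle
  set d : ℕ := (b - a : Fin (n + 1)).val with hdef
  have hdn : d < n + 1 := (b - a).isLt
  have hd1 : 1 ≤ d := by
    have hne : (b - a : Fin (n + 1)) ≠ 0 := sub_ne_zero.mpr hab.symm
    have : d ≠ 0 := fun h => hne (Fin.ext h)
    omega
  have habd : a + ((d : ℕ) : Fin (n + 1)) = b := by
    rw [hdef, Fin.cast_val_eq_self]; ring
  -- cancellation helper
  have hcan : ∀ (z : Fin (n + 1)) (s t : ℕ), s ≤ n → t ≤ n →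
      z + ((s : ℕ) : Fin (n + 1)) = z + ((t : ℕ) : Fin (n + 1)) → s = t := by
    intro z s t hs ht h
    have h2 := add_left_cancel h
    have hv := congrArg Fin.val h2
    rwa [Fin.val_natCast, Fin.val_natCast, Nat.mod_eq_of_lt (by omega),
      Nat.mod_eq_of_lt (by omega)] at hv
  obtain ⟨d', hd'⟩ : ∃ d', d = d' + 1 := ⟨d - 1, by omega⟩
  -- a path-vertex never equals an internal vertex of the a→b arc of the cycle
  have hmix : ∀ (i' : Fin (N + 1)) (t : ℕ), 1 ≤ t → t ≤ d' →
      p i' = c (a + ((t : ℕ) : Fin (n + 1))) → False := by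
    intro i' t ht1 ht2 h
    by_cases hi0 : i' = 0
    · subst hi0
      rw [hp0] at h
      have hb : b = a + ((t : ℕ) : Fin (n + 1)) := hcinj h
      have : d = t := by
        refine hcan a d t (by omega) (by omega) ?_
        rw [habd]; exact hb
      omega
    by_cases hil : i' = Fin.last N
    · subst hil
      rw [hpl] at h
      have ha : a = a + ((t : ℕ) : Fin (n + 1)) := hcinj h
      have : (0 : ℕ) = t := by
        refine hcan a 0 t (by omega) (by omega) ?_
        simpa using ha
      omega
    · exact hint i' hi0 hil ⟨_, h.symm⟩
  -- the cycle obtained by concatenating p with the a→b arc of c is at most n+1 long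
  have hcle : N + d' ≤ n := by
    refine hlong (N + d')
      (fun i => if h : i.val ≤ N then p ⟨i.val, Nat.lt_succ_of_le h⟩
        else c (a + ((i.val - N : ℕ) : Fin (n + 1)))) ⟨by omega, ?_, ?_⟩
    · intro i j hij
      simp only at hij
      by_cases hi : i.val ≤ N <;> by_cases hj : j.val ≤ N
      · rw [dif_pos hi, dif_pos hj] at hij
        have := congrArg Fin.val (hp.1 hij)
        exact Fin.ext this
      · rw [dif_pos hi, dif_neg hj] at hij
        exact absurd hij (by
          intro h
          exact hmix _ (j.val - N) (by omega) (by have := j.isLt; omega) h)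
      · rw [dif_neg hi, dif_pos hj] at hij
        exact absurd hij.symm (by
          intro h
          exact hmix _ (i.val - N) (by omega) (by have := i.isLt; omega) h)
      · rw [dif_neg hi, dif_neg hj] at hij
        have h2 := hcinj hij
        have : i.val - N = j.val - N := by
          refine hcan a _ _ (by have := i.isLt; omega) (by have := j.isLt; omega) h2
        exact Fin.ext (by omega)
    · intro i
      simp only
      by_cases hil : i.val = N + d'
      · have hieq : i = Fin.last (N + d') := Fin.ext hil
        have hsucc : i + 1 = 0 := by rw [hieq]; exact Fin.last_add_one _
        rw [hsucc]
        have hv1 : (if h : i.val ≤ N then p ⟨i.val, Nat.lt_succ_of_le h⟩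
            else c (a + ((i.val - N : ℕ) : Fin (n + 1)))) = c (a + ((d' : ℕ) : Fin (n + 1))) := by
          by_cases hd0 : d' = 0
          · rw [dif_pos (by omega)]
            have : (⟨i.val, Nat.lt_succ_of_le (by omega)⟩ : Fin (N + 1)) = Fin.last N :=
              Fin.ext (by simp [Fin.last]; omega)
            rw [this, hpl, hd0]
            simp
          · rw [dif_neg (by omega)]
            have hiv : i.val - N = d' := by omega
            rw [hiv]
        rw [hv1, dif_pos (by simp)]
        have h0 : (⟨(0 : Fin (N + d' + 1)).val, Nat.lt_succ_of_le (by simp)⟩ : Fin (N + 1)) = 0 :=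
          Fin.ext (by simp)
        rw [h0, hp0]
        have hb : c b = c ((a + ((d' : ℕ) : Fin (n + 1))) + 1) := by
          congr 1
          rw [← habd, hd']
          push_cast
          ring
        rw [hb]
        exact harc _
      · have hlt : i < Fin.last (N + d') := by
          rw [Fin.lt_iff_val_lt_val]
          simpa [Fin.last] using lt_of_le_of_ne (by have := i.isLt; omega) hil
        have hsv : (i + 1).val = i.val + 1 := Fin.val_add_one_of_lt hlt
        by_cases hiN : i.val < N
        · rw [dif_pos (by omega), dif_pos (by omega : (i+1).val ≤ N)]
          have := hp.2 ⟨i.val, hiN⟩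
          have e1 : (⟨i.val, Nat.lt_succ_of_le (by omega)⟩ : Fin (N+1)) =
              (⟨i.val, hiN⟩ : Fin N).castSucc := Fin.ext (by simp)
          have e2 : (⟨(i+1).val, Nat.lt_succ_of_le (by omega)⟩ : Fin (N+1)) =
              (⟨i.val, hiN⟩ : Fin N).succ := Fin.ext (by simp [hsv])
          rw [e1, e2]
          exact this
        by_cases hiN2 : i.val = N
        · rw [dif_pos (by omega), dif_neg (by omega)]
          have e1 : (⟨i.val, Nat.lt_succ_of_le (by omega)⟩ : Fin (N+1)) = Fin.last N :=
            Fin.ext (by simp [Fin.last, hiN2])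
          rw [e1, hpl]
          have e2 : ((((i+1).val - N : ℕ)) : Fin (n+1)) = ((1:ℕ) : Fin (n+1)) := by
            congr 1
            omega
          rw [e2]
          push_cast
          exact harc a
        · rw [dif_neg (by omega), dif_neg (by omega)]
          have e2 : a + ((((i+1).val - N : ℕ)) : Fin (n+1)) =
              (a + (((i.val - N : ℕ)) : Fin (n+1))) + 1 := by
            have : (i+1).val - N = (i.val - N) + 1 := by omega
            rw [this]
            push_cast
            ring
          rw [e2]
          exact harc _
  -- hence the b→a arc of the cycle is long
  set e : ℕ := n + 1 - d with hedef
  have hNe : N ≤ e := by omega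
  have hen : e ≤ n := by omega
  have hed : ((e : ℕ) : Fin (n + 1)) = a - b := by
    have h1 : ((e + d : ℕ) : Fin (n + 1)) = 0 := by
      rw [show e + d = n + 1 by omega]
      exact Fin.natCast_self (n + 1)
    push_cast at h1
    rw [hdef, Fin.cast_val_eq_self] at h1
    linear_combination h1
  -- build the two-block cycle
  apply hno
  refine ⟨N, e, p, fun j => c (b + ((j.val : ℕ) : Fin (n + 1))), by omega, by omega, hp,
    ⟨?_, ?_⟩, ?_, ?_, ?_, ?_⟩
  · intro j1 j2 h
    simp only at h
    have := hcan b j1.val j2.val (by have := j1.isLt; omega) (by have := j2.isLt; omega) (hcinj h)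
    exact Fin.ext this
  · intro j
    simp only
    have e2 : b + (((j.succ.val : ℕ)) : Fin (n+1)) = (b + ((j.castSucc.val : ℕ) : Fin (n+1))) + 1 := by
      have : (j.succ.val : ℕ) = j.castSucc.val + 1 := by simp
      rw [this]
      push_cast
      ring
    rw [e2]
    exact harc _
  · rw [hp0]
    simp
  · rw [hpl]
    simp only [Fin.val_last]
    rw [hed]
    congr 1
    ring
  · rw [hp0, hpl]
    exact hxy.symm
  · intro i j hpq
    simp only at hpq
    by_cases hi0 : i = 0
    · subst hi0
      rw [hp0] at hpq
      have hb := hcinj hpq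
      have : (0:ℕ) = j.val := by
        refine hcan b 0 j.val (by omega) (by have := j.isLt; omega) ?_
        simpa using hb
      exact Or.inl ⟨rfl, Fin.ext this.symm⟩
    by_cases hil : i = Fin.last N
    · subst hil
      rw [hpl] at hpq
      have ha2 : c (b + ((e : ℕ) : Fin (n+1))) = c (b + ((j.val : ℕ) : Fin (n+1))) := by
        rw [hed]
        rw [show b + (a - b) = a by ring]
        exact hpq
      have : e = j.val := hcan b e j.val (by omega) (by have := j.isLt; omega) (hcinj ha2)
      exact Or.inr ⟨rfl, Fin.ext (by simp [Fin.last, this])⟩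
    · exact absurd ⟨_, hpq.symm⟩ (hint i hi0 hil)
end

section
/- Let T be a cycle-tree. Then for any two vertices u and v of T, there exists exactly one directed path in T from u to v. -/
universe u

/-- The arc set of the directed cycle `c 0, c 1, …, c n, c 0`. -/
def CycleArcs {V : Type u} {n : ℕ} (c : Fin (n + 1) → V) : Set (V × V) :=
  {e | ∃ i : Fin (n + 1), e = (c i, c (i + 1))}

/-- `s` is the arc set of some directed cycle of the digraph `A`.
(We identify a directed cycle with its set of arcs, so that cycles differing only
by a rotation of the starting point are identified.) -/
def IsCycleSet {V : Type u} (A : V → V → Prop) (s : Set (V × V)) : Prop :=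
  ∃ (n : ℕ) (c : Fin (n + 1) → V), IsCycle A n c ∧ s = CycleArcs c

/-- The vertex set of a directed cycle given by its arc set. -/
def cycleVerts {V : Type u} (s : Set (V × V)) : Set V := Prod.fst '' s

/-- A digraph `A` is a cycle-tree: it is strongly connected and there is an
ordering `C 0, C 1, …, C (m-1)` of all of its directed cycles such that for each
`i ≥ 1`, the vertex set of `C i` meets the union of the vertex sets of the
previous cycles in exactly one vertex. -/
def IsCycleTree {V : Type u} (A : V → V → Prop) : Prop :=
  (∀ u v : V, Relation.ReflTransGen A u v) ∧
  ∃ (m : ℕ) (C : Fin m → Set (V × V)),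
    Function.Injective C ∧
    (∀ i : Fin m, IsCycleSet A (C i)) ∧
    (∀ s : Set (V × V), IsCycleSet A s → ∃ i : Fin m, C i = s) ∧
    ∀ i : Fin m, 0 < (i : ℕ) →
      ∃ x : V, cycleVerts (C i) ∩
        (⋃ (j : Fin m) (_ : (j : ℕ) < (i : ℕ)), cycleVerts (C j)) = {x}

/-- `L` is (the vertex list of) a directed path in the digraph `A`. -/
def IsListPath {V : Type u} (A : V → V → Prop) (L : List V) : Prop :=
  L ≠ [] ∧ L.Nodup ∧ L.Chain' A

namespace CTaux
variable {V : Type u}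

lemma eq_singleton_of_head_last {L : List V} {u : V} (hnd : L.Nodup)
    (hh : L.head? = some u) (hl : L.getLast? = some u) : L = [u] := by
  cases L with
  | nil => simp at hh
  | cons a t =>
    simp only [List.head?_cons, Option.some.injEq] at hh
    subst hh
    cases t with
    | nil => rfl
    | cons b t' =>
      exfalso
      have hne : (b :: t') ≠ [] := by simp
      have h1 : (b :: t').getLast hne = a := by
        rw [List.getLast?_eq_getLast (by simp), List.getLast_cons hne] at hl
        exact Option.some_inj.1 hl
      have h2 := List.getLast_mem hne
      rw [h1] at h2
      exact (List.nodup_cons.1 hnd).1 h2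

lemma exists_path {A : V → V → Prop} {u v : V} (h : Relation.ReflTransGen A u v) :
    ∃ L, IsListPath A L ∧ L.head? = some u ∧ L.getLast? = some v := by
  induction h with
  | refl => exact ⟨[u], ⟨by simp, by simp, by simp [List.Chain']⟩, by simp, by simp⟩
  | @tail b c hub hbc ih =>
      obtain ⟨L, ⟨hne, hnd, hch⟩, hh, hl⟩ := ih
      by_cases hc : c ∈ L
      · obtain ⟨L1, L2, rfl⟩ := List.append_of_mem hc
        have hassoc : L1 ++ c :: L2 = (L1 ++ [c]) ++ L2 := by simp
        refine ⟨L1 ++ [c], ⟨by simp, ?_, ?_⟩, ?_, by simp⟩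
        · exact hnd.sublist (by rw [hassoc]; exact List.sublist_append_left _ _)
        · rw [hassoc] at hch; exact (List.isChain_append.1 hch).1
        · rw [List.head?_append] at hh ⊢; simpa using hh
      · refine ⟨L ++ [c], ⟨by simp, ?_, ?_⟩, ?_, by simp⟩
        · simp [List.nodup_append, hnd, hc]; exact fun a ha h => hc (h ▸ ha)
        · refine List.isChain_append.2 ⟨hch, by simp, ?_⟩
          intro y hy z hz
          simp at hz; subst hz
          rw [hl] at hy; simp at hy; subst hy
          exact hbc
        · rw [List.head?_append, hh]; rfl

lemma functional_unique {R : V → V → Prop} (hf : ∀ a b b', R a b → R a b' → b = b') :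
    ∀ (L : List V), ∀ (M : List V), L.Chain' R → M.Chain' R → L.Nodup → M.Nodup →
      L.head? = M.head? → L.getLast? = M.getLast? → L ≠ [] → L = M := by
  intro L
  induction L with
  | nil => intro M _ _ _ _ _ _ h; exact absurd rfl h
  | cons a L' ih =>
    intro M hcL hcM hndL hndM hh hl _
    cases M with
    | nil => simp at hh
    | cons b M' =>
      simp only [List.head?_cons, Option.some.injEq] at hh
      subst hh
      cases L' with
      | nil =>
        exact (eq_singleton_of_head_last (u := a) hndM (by simp) (by simpa using hl.symm)).symm
      | cons a2 L'' =>
        cases M' with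
        | nil =>
          have h := eq_singleton_of_head_last (u := a) hndL (by simp) (by simpa using hl)
          simp at h
        | cons b2 M'' =>
          have h1 : R a a2 := (List.isChain_cons_cons.1 hcL).1
          have h2 : R a b2 := (List.isChain_cons_cons.1 hcM).1
          have hab : a2 = b2 := hf a a2 b2 h1 h2
          subst hab
          have := ih (a2 :: M'') (List.isChain_cons_cons.1 hcL).2 (List.isChain_cons_cons.1 hcM).2
            (List.nodup_cons.1 hndL).2 (List.nodup_cons.1 hndM).2 rfl
            (by rwa [List.getLast?_cons_cons, List.getLast?_cons_cons] at hl) (by simp)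
          rw [this]

lemma chain'_transfer {R S : V → V → Prop} :
    ∀ {L : List V}, L.Chain' R → L.Nodup →
      (∀ a b, a ∈ L → b ∈ L → a ≠ b → R a b → S a b) → L.Chain' S := by
  intro L
  induction L with
  | nil => simp [List.Chain']
  | cons a t ih =>
    intro hc hnd htr
    cases t with
    | nil => simp [List.Chain']
    | cons b t' =>
      simp only [List.Chain', List.isChain_cons_cons] at hc ⊢
      have hanb : a ≠ b := by
        intro h; exact (List.nodup_cons.1 hnd).1 (h ▸ List.mem_cons_self)
      refine ⟨htr a b (by simp) (by simp) hanb hc.1, ih hc.2 (List.nodup_cons.1 hnd).2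
        (fun x y hx hy => htr x y (by simp [hx]) (by simp [hy]))⟩

lemma mem_chain'_cases {R : V → V → Prop} :
    ∀ {L : List V} {u w : V}, L.Chain' R → L.head? = some u → w ∈ L →
      w = u ∨ ∃ a ∈ L, R a w := by
  intro L
  induction L with
  | nil => simp
  | cons a t ih =>
    intro u w hc hh hw
    simp only [List.head?_cons, Option.some.injEq] at hh
    subst hh
    rcases List.mem_cons.1 hw with rfl | hw
    · exact Or.inl rfl
    · cases t with
      | nil => simp at hw
      | cons b t' =>
        simp only [List.Chain', List.isChain_cons_cons] at hc
        rcases ih hc.2 rfl hw with rfl | ⟨cc, hc', hR⟩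
        · exact Or.inr ⟨a, by simp, hc.1⟩
        · exact Or.inr ⟨cc, by simp [hc'], hR⟩

end CTaux
namespace CTaux
variable {V : Type u}

lemma getElem_zero_of_head? {L : List V} {u : V} (hh : L.head? = some u) :
    ∃ h : 0 < L.length, L[0] = u := by
  cases L with
  | nil => simp at hh
  | cons a t => simp at hh; exact ⟨by simp, by simpa using hh⟩

lemma getElem_last_of_getLast? {L : List V} {v : V} (hl : L.getLast? = some v) :
    ∃ h : L.length - 1 < L.length, L[L.length - 1] = v := by
  have := List.getLast?_eq_getElem? (l := L)
  rw [hl] at this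
  have h2 := (List.getElem?_eq_some_iff).1 this.symm
  exact h2

lemma nodup_getElem_inj {L : List V} (hnd : L.Nodup) {i j : ℕ}
    (hi : i < L.length) (hj : j < L.length) (he : L[i] = L[j]) : i = j := by
  have := List.nodup_iff_injective_get.1 hnd (a₁ := ⟨i, hi⟩) (a₂ := ⟨j, hj⟩) (by simpa using he)
  simpa using this

lemma chain'_arc {R : V → V → Prop} {L : List V} (hc : L.Chain' R) {i : ℕ}
    (hi : i + 1 < L.length) : R (L[i]'(by omega)) (L[i+1]'hi) := by
  have := List.isChain_iff_getElem.1 hc i (by omega)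
  simpa using this

/-- Separation A: if arcs entering `N` start at `x` and arcs leaving `N` end at `x`,
then a nodup chain starting and ending outside `N` avoids `N`. -/
lemma sepA {R : V → V → Prop} {N : Set V} {x : V} (hx : x ∉ N)
    (hin : ∀ a b, R a b → a ∉ N → b ∈ N → a = x)
    (hout : ∀ a b, R a b → a ∈ N → b ∉ N → b = x)
    {L : List V} (hc : L.Chain' R) (hnd : L.Nodup) {u v : V}
    (hh : L.head? = some u) (hl : L.getLast? = some v)
    (hu : u ∉ N) (hv : v ∉ N) : ∀ w ∈ L, w ∉ N := by
  by_contra hcon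
  push_neg at hcon
  obtain ⟨w, hwL, hwN⟩ := hcon
  obtain ⟨iw, hiw, hwe⟩ := List.mem_iff_getElem.1 hwL
  obtain ⟨h0len, h0⟩ := getElem_zero_of_head? hh
  obtain ⟨hllen, hlast⟩ := getElem_last_of_getLast? hl
  set S : Set ℕ := {i | ∃ h : i < L.length, L[i] ∈ N} with hS
  have hSne : S.Nonempty := ⟨iw, hiw, hwe ▸ hwN⟩
  have hSbdd : BddAbove S := ⟨L.length, fun i hi => le_of_lt hi.1⟩
  have hjS : sInf S ∈ S := Nat.sInf_mem hSne
  have hkS : sSup S ∈ S := Nat.sSup_mem hSne hSbdd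
  set j := sInf S with hj
  set k := sSup S with hk
  obtain ⟨hjlen, hjN⟩ := hjS
  obtain ⟨hklen, hkN⟩ := hkS
  have hjk : j ≤ k := csInf_le_csSup hSne (OrderBot.bddBelow S) hSbdd
  have hj0 : 0 < j := by
    rcases Nat.eq_zero_or_pos j with h | h
    · exfalso
      obtain ⟨_, hm⟩ := (h ▸ (⟨hjlen, hjN⟩ : j ∈ S) : (0:ℕ) ∈ S)
      exact hu (h0 ▸ hm)
    · exact h
  have hkv : k < L.length - 1 := by
    rcases lt_or_ge k (L.length - 1) with h | h
    · exact h
    · exfalso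
      have he : k = L.length - 1 := by omega
      obtain ⟨_, hm⟩ := (he ▸ (⟨hklen, hkN⟩ : k ∈ S) : (L.length - 1) ∈ S)
      exact hv (hlast ▸ hm)
  -- arc into N at j
  have harc1 : R (L[j-1]'(by omega)) (L[j]'hjlen) := by
    have := chain'_arc hc (i := j - 1) (by omega)
    have e : j - 1 + 1 = j := by omega
    simp_rw [e] at this
    exact this
  have hj1 : (L[j-1]'(by omega)) ∉ N := fun hmem =>
    Nat.notMem_of_lt_sInf (show j - 1 < sInf S by omega) ⟨by omega, hmem⟩
  have hx1 : (L[j-1]'(by omega)) = x := hin _ _ harc1 hj1 hjN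
  -- arc out of N at k
  have harc2 : R (L[k]'hklen) (L[k+1]'(by omega)) := chain'_arc hc (by omega)
  have hk1 : (L[k+1]'(by omega)) ∉ N := fun hmem => by
    have : k + 1 ∈ S := ⟨by omega, hmem⟩
    have := le_csSup hSbdd this
    omega
  have hx2 : (L[k+1]'(by omega)) = x := hout _ _ harc2 hkN hk1
  have : j - 1 = k + 1 := nodup_getElem_inj hnd (by omega) (by omega) (by rw [hx1, hx2])
  omega

/-- Separation B: a nodup chain from outside `N` into `N` splits at `x`. -/
lemma sepB {R : V → V → Prop} {N : Set V} {x : V} (hx : x ∉ N)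
    (hin : ∀ a b, R a b → a ∉ N → b ∈ N → a = x)
    (hout : ∀ a b, R a b → a ∈ N → b ∉ N → b = x)
    {L : List V} (hc : L.Chain' R) (hnd : L.Nodup) {u v : V}
    (hh : L.head? = some u) (hl : L.getLast? = some v)
    (hu : u ∉ N) (hv : v ∈ N) :
    ∃ L1 L2, L = L1 ++ x :: L2 ∧ (∀ w ∈ L1, w ∉ N) ∧ (∀ w ∈ L2, w ∈ N) := by
  obtain ⟨h0len, h0⟩ := getElem_zero_of_head? hh
  obtain ⟨hllen, hlast⟩ := getElem_last_of_getLast? hl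
  set S : Set ℕ := {i | ∃ h : i < L.length, L[i] ∈ N} with hS
  have hSne : S.Nonempty := ⟨L.length - 1, hllen, hlast ▸ hv⟩
  set q := sInf S with hq
  obtain ⟨hqlen, hqN⟩ : q ∈ S := Nat.sInf_mem hSne
  have hq0 : 0 < q := by
    rcases Nat.eq_zero_or_pos q with h | h
    · exfalso
      obtain ⟨_, hm⟩ := (h ▸ (⟨hqlen, hqN⟩ : q ∈ S) : (0:ℕ) ∈ S)
      exact hu (h0 ▸ hm)
    · exact h
  have harc1 : R (L[q-1]'(by omega)) (L[q]'hqlen) := by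
    have := chain'_arc hc (i := q - 1) (by omega)
    have e : q - 1 + 1 = q := by omega
    simp_rw [e] at this
    exact this
  have hq1 : (L[q-1]'(by omega)) ∉ N := fun hmem =>
    Nat.notMem_of_lt_sInf (show q - 1 < sInf S by omega) ⟨by omega, hmem⟩
  have hx1 : (L[q-1]'(by omega)) = x := hin _ _ harc1 hq1 hqN
  -- all positions ≥ q are in N
  have hall : ∀ p, q ≤ p → ∀ h : p < L.length, L[p] ∈ N := by
    by_contra hcon
    push_neg at hcon
    obtain ⟨p0, hp0q, hp0len, hp0N⟩ := hcon
    set T : Set ℕ := {p | q ≤ p ∧ ∃ h : p < L.length, L[p] ∉ N} with hT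
    have hTne : T.Nonempty := ⟨p0, hp0q, hp0len, hp0N⟩
    set r := sInf T with hr
    obtain ⟨hrq, hrlen, hrN⟩ : r ∈ T := Nat.sInf_mem hTne
    have hrq' : q < r := by
      rcases Nat.lt_or_ge q r with h | h
      · exact h
      · exfalso
        have he : r = q := by omega
        obtain ⟨_, hm⟩ := ((he ▸ (⟨hrq, hrlen, hrN⟩ : r ∈ T)) : q ∈ T).2
        exact hm hqN
    have hr1N : (L[r-1]'(by omega)) ∈ N := by
      by_contra hmem
      exact Nat.notMem_of_lt_sInf (show r - 1 < sInf T by omega) ⟨by omega, by omega, hmem⟩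
    have harc2 : R (L[r-1]'(by omega)) (L[r]'hrlen) := by
      have := chain'_arc hc (i := r - 1) (by omega)
      have e : r - 1 + 1 = r := by omega
      simp_rw [e] at this
      exact this
    have hx2 : (L[r]'hrlen) = x := hout _ _ harc2 hr1N hrN
    have : q - 1 = r := nodup_getElem_inj hnd (by omega) (by omega) (by rw [hx1, hx2])
    omega
  refine ⟨L.take (q-1), L.drop q, ?_, ?_, ?_⟩
  · have e1 : L = L.take (q-1) ++ L.drop (q-1) := (List.take_append_drop _ _).symm
    have e2 : L.drop (q-1) = (L[q-1]'(by omega)) :: L.drop q := by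
      have := List.getElem_cons_drop (as := L) (i := q-1) (by omega)
      have e : q - 1 + 1 = q := by omega
      rw [e] at this
      exact this.symm
    rw [hx1] at e2
    rw [e2] at e1
    exact e1
  · intro w hw
    obtain ⟨i, hi, hwe⟩ := List.mem_iff_getElem.1 hw
    have hi' : i < q - 1 := by
      have := hi; rw [List.length_take] at this; omega
    have : L[i]'(by omega) = w := by rw [← hwe]; exact List.getElem_take.symm
    intro hwN
    exact Nat.notMem_of_lt_sInf (show i < sInf S by omega) ⟨by omega, this ▸ hwN⟩
  · intro w hw
    obtain ⟨i, hi, hwe⟩ := List.mem_iff_getElem.1 hw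
    have hi' : q + i < L.length := by
      have := hi; rw [List.length_drop] at this; omega
    have : L[q+i]'hi' = w := by rw [← hwe]; exact List.getElem_drop.symm
    exact this ▸ hall (q+i) (by omega) hi'

/-- Separation C: symmetric version, from inside `N` to outside. -/
lemma sepC {R : V → V → Prop} {N : Set V} {x : V} (hx : x ∉ N)
    (hin : ∀ a b, R a b → a ∉ N → b ∈ N → a = x)
    (hout : ∀ a b, R a b → a ∈ N → b ∉ N → b = x)
    {L : List V} (hc : L.Chain' R) (hnd : L.Nodup) {u v : V}
    (hh : L.head? = some u) (hl : L.getLast? = some v)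
    (hu : u ∈ N) (hv : v ∉ N) :
    ∃ L1 L2, L = L1 ++ x :: L2 ∧ (∀ w ∈ L1, w ∈ N) ∧ (∀ w ∈ L2, w ∉ N) := by
  have hcrev : L.reverse.Chain' (flip R) := List.isChain_reverse.2 hc
  have hrev := sepB (R := flip R) (N := N) (x := x) hx
    (fun a b hab ha hb => hout b a hab hb ha)
    (fun a b hab ha hb => hin b a hab hb ha)
    hcrev (List.nodup_reverse.2 hnd) (u := v) (v := u) ?_ ?_ hv hu
  · obtain ⟨L1, L2, heq, h1, h2⟩ := hrev
    refine ⟨L2.reverse, L1.reverse, ?_, fun w hw => h2 w (by simpa using hw),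
      fun w hw => h1 w (by simpa using hw)⟩
    have := congrArg List.reverse heq
    rw [List.reverse_reverse] at this
    rw [this]
    simp
  · rw [List.head?_reverse]; exact hl
  · rw [List.getLast?_reverse]; exact hh

end CTaux
namespace CTaux
variable {V : Type u}

lemma getElem_idx_congr {L : List V} {i j : ℕ} (h : i = j)
    (hi : i < L.length) (hj : j < L.length) : L[i]'hi = L[j]'hj := by
  cases h; rfl

lemma cycleVerts_cycleArcs {n : ℕ} (c : Fin (n+1) → V) :
    cycleVerts (CycleArcs c) = Set.range c := by
  ext w
  constructor
  · rintro ⟨⟨a, b⟩, ⟨i, he⟩, rfl⟩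
    rw [Prod.mk.injEq] at he
    exact ⟨i, he.1.symm⟩
  · rintro ⟨i, rfl⟩
    exact ⟨(c i, c (i+1)), ⟨i, rfl⟩, rfl⟩

lemma arc_mem_verts {A : V → V → Prop} {s : Set (V × V)} (hs : IsCycleSet A s) {a b : V}
    (hab : (a, b) ∈ s) : a ∈ cycleVerts s ∧ b ∈ cycleVerts s := by
  obtain ⟨n, c, hc, rfl⟩ := hs
  obtain ⟨i, he⟩ := hab
  rw [Prod.mk.injEq] at he
  rw [cycleVerts_cycleArcs]
  exact ⟨⟨i, he.1.symm⟩, ⟨i+1, he.2.symm⟩⟩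

lemma cycle_functional {n : ℕ} {c : Fin (n+1) → V} (hinj : Function.Injective c)
    {a b b' : V} (h1 : (a, b) ∈ CycleArcs c) (h2 : (a, b') ∈ CycleArcs c) : b = b' := by
  obtain ⟨i, hi⟩ := h1
  obtain ⟨j, hj⟩ := h2
  rw [Prod.mk.injEq] at hi hj
  have : i = j := hinj (hi.1.symm.trans hj.1)
  rw [hi.2, hj.2, this]

lemma cycle_arcs_subset {A : V → V → Prop} {n : ℕ} {c : Fin (n+1) → V}
    (hc : IsCycle A n c) {a b : V} (hab : (a, b) ∈ CycleArcs c) : A a b := by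
  obtain ⟨i, he⟩ := hab
  rw [Prod.mk.injEq] at he
  rw [he.1, he.2]
  exact hc.2.2 i

open Fin.NatCast in
lemma cycle_path_exists {n : ℕ} {c : Fin (n+1) → V} (hinj : Function.Injective c)
    (s t : Fin (n+1)) :
    ∃ L, IsListPath (fun a b => (a, b) ∈ CycleArcs c) L ∧
      L.head? = some (c s) ∧ L.getLast? = some (c t) := by
  set d : ℕ := ((t - s : Fin (n+1)) : ℕ) with hd
  have hdlt : d < n + 1 := (t - s).isLt
  set f : ℕ → V := fun p => c (s + (p : Fin (n+1))) with hf
  refine ⟨(List.range (d+1)).map f, ⟨by simp, ?_, ?_⟩, ?_, ?_⟩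
  · refine List.Nodup.map_on ?_ List.nodup_range
    intro p hp q hq he
    rw [List.mem_range] at hp hq
    have h2 : s + (p : Fin (n+1)) = s + (q : Fin (n+1)) := hinj he
    have h3 : (p : Fin (n+1)) = (q : Fin (n+1)) := add_left_cancel h2
    have h4 : p % (n+1) = q % (n+1) := by
      have := congrArg Fin.val h3
      simpa [Fin.val_natCast] using this
    rwa [Nat.mod_eq_of_lt (by omega), Nat.mod_eq_of_lt (by omega)] at h4
  · simp only [List.Chain', List.isChain_map]
    rw [show d + 1 = Nat.succ d from rfl, List.isChain_range_succ]
    intro p hp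
    refine ⟨s + (p : Fin (n+1)), ?_⟩
    have e : ((p.succ : ℕ) : Fin (n+1)) = (p : Fin (n+1)) + 1 := by push_cast; ring
    rw [hf]
    simp only [e]
    rw [Prod.mk.injEq]
    exact ⟨rfl, congrArg c (by abel)⟩
  · rw [List.head?_map]
    rw [show d + 1 = Nat.succ d from rfl, List.range_succ_eq_map]
    rw [hf]
    simp
  · rw [show d + 1 = Nat.succ d from rfl, List.range_succ, List.map_append,
      List.map_singleton, List.getLast?_concat]
    have e : ((d : ℕ) : Fin (n+1)) = t - s := by
      rw [hd, Fin.cast_val_eq_self]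
    rw [hf]
    simp only [e]
    exact congrArg some (congrArg c (by abel))

lemma cycle_unique_path {n : ℕ} {c : Fin (n+1) → V} (hinj : Function.Injective c)
    {u v : V} (hu : u ∈ Set.range c) (hv : v ∈ Set.range c) :
    ∃! L, IsListPath (fun a b => (a, b) ∈ CycleArcs c) L ∧
      L.head? = some u ∧ L.getLast? = some v := by
  obtain ⟨s, rfl⟩ := hu
  obtain ⟨t, rfl⟩ := hv
  obtain ⟨L, h1, h2, h3⟩ := cycle_path_exists hinj s t
  refine ⟨L, ⟨h1, h2, h3⟩, ?_⟩
  rintro M ⟨⟨hMne, hMnd, hMch⟩, hMh, hMl⟩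
  exact functional_unique (R := fun a b => (a, b) ∈ CycleArcs c)
    (fun a b b' h1 h2 => cycle_functional hinj h1 h2) M L hMch h1.2.2 hMnd h1.2.1
    (by rw [hMh, h2]) (by rw [hMl, h3]) hMne

lemma arc_mem_cycleSet {A : V → V → Prop} (hconn : ∀ u v : V, Relation.ReflTransGen A u v)
    {a b : V} (hA : A a b) (hne : a ≠ b) : ∃ s, IsCycleSet A s ∧ (a, b) ∈ s := by
  obtain ⟨L, ⟨hLne, hnd, hch⟩, hh, hl⟩ := exists_path (hconn b a)
  obtain ⟨n, hn⟩ : ∃ n, L.length = n + 1 := by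
    cases L with
    | nil => exact absurd rfl hLne
    | cons x t => exact ⟨t.length, by simp⟩
  obtain ⟨h0len, h0⟩ := getElem_zero_of_head? hh
  obtain ⟨hllen, hlast⟩ := getElem_last_of_getLast? hl
  have h1n : 1 ≤ n := by
    by_contra hcon
    have : L[0]'h0len = a := by
      rw [getElem_idx_congr (show 0 = L.length - 1 by omega) h0len hllen]
      exact hlast
    exact hne (this.symm.trans h0)
  set c : Fin (n+1) → V := fun i => L[(i : ℕ)]'(by omega) with hcdef
  have hcinj : Function.Injective c := by
    intro i j he
    have := nodup_getElem_inj hnd (i := (i:ℕ)) (j := (j:ℕ)) (by omega) (by omega) he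
    exact Fin.ext this
  have h01 : (Fin.last n + 1 : Fin (n+1)) = 0 := by
    rw [Fin.ext_iff, Fin.val_add_one]
    simp
  have e1 : c (Fin.last n) = a :=
    (getElem_idx_congr (i := ((Fin.last n : Fin (n+1)) : ℕ)) (j := L.length - 1)
      (by simp only [Fin.val_last]; omega) (by omega) hllen).trans hlast
  have e2 : c (Fin.last n + 1) = b := by rw [h01]; exact h0
  refine ⟨CycleArcs c, ⟨n, c, ⟨h1n, hcinj, ?_⟩, rfl⟩, ?_⟩
  · intro i
    by_cases hi : i = Fin.last n
    · subst hi
      rw [e1, e2]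
      exact hA
    · have hilt : (i : ℕ) < n := by
        rcases Nat.lt_or_ge (i : ℕ) n with h | h
        · exact h
        · exact absurd (Fin.ext (by omega : (i:ℕ) = n)) hi
      have hv1 : ((i + 1 : Fin (n+1)) : ℕ) = (i : ℕ) + 1 := by
        rw [Fin.val_add_one]
        simp only [hi, if_false]
      have harc := chain'_arc hch (i := (i : ℕ)) (by omega)
      have ee1 : c i = L[(i:ℕ)]'(by omega) := rfl
      have ee2 : c (i+1) = L[(i:ℕ)+1]'(by omega) :=
        getElem_idx_congr hv1 (by omega) (by omega)
      rw [ee1, ee2]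
      exact harc
  · refine ⟨Fin.last n, ?_⟩
    rw [Prod.mk.injEq]
    exact ⟨e1.symm, e2.symm⟩

end CTaux
namespace CTaux
variable {V : Type u}

lemma join_path {R : V → V → Prop} {P Q : List V} {u x v : V}
    (hP : IsListPath R P) (hQ : IsListPath R Q)
    (hPh : P.head? = some u) (hPl : P.getLast? = some x)
    (hQh : Q.head? = some x) (hQl : Q.getLast? = some v)
    (hdisj : ∀ w, w ∈ P → w ∈ Q → w = x) :
    IsListPath R (P ++ Q.tail) ∧ (P ++ Q.tail).head? = some u ∧
      (P ++ Q.tail).getLast? = some v := by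
  obtain ⟨hPne, hPnd, hPch⟩ := hP
  obtain ⟨hQne, hQnd, hQch⟩ := hQ
  obtain ⟨b, Q', rfl⟩ : ∃ b Q', Q = b :: Q' := by
    cases Q with
    | nil => exact absurd rfl hQne
    | cons b Q' => exact ⟨b, Q', rfl⟩
  have hxb : x = b := by simpa using hQh.symm
  subst hxb
  have hbQ' : x ∉ Q' := (List.nodup_cons.1 hQnd).1
  refine ⟨⟨by simp [hPne], ?_, ?_⟩, ?_, ?_⟩
  · rw [List.nodup_append]
    refine ⟨hPnd, (List.nodup_cons.1 hQnd).2, ?_⟩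
    intro w hwP w' hwQ' hww'
    subst hww'
    simp only [List.tail_cons] at hwQ'
    have := hdisj w hwP (by simp [hwQ'])
    exact hbQ' (this ▸ hwQ')
  · refine List.isChain_append.2 ⟨hPch, (List.isChain_cons.1 hQch).2, ?_⟩
    intro y hy z hz
    rw [hPl] at hy
    simp only [Option.mem_def, Option.some.injEq] at hy
    subst hy
    exact (List.isChain_cons.1 hQch).1 z hz
  · rw [List.head?_append, hPh]; rfl
  · cases Q' with
    | nil =>
      simp only [List.tail_cons, List.append_nil]
      rw [hPl]
      simpa using hQl
    | cons w Q'' =>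
      simp only [List.tail_cons]
      rw [List.getLast?_append]
      rw [List.getLast?_cons_cons] at hQl
      rw [hQl]
      rfl

lemma split_path {R : V → V → Prop} {L1 L2 : List V} {x u v : V}
    (h : IsListPath R (L1 ++ x :: L2))
    (hh : (L1 ++ x :: L2).head? = some u) (hl : (L1 ++ x :: L2).getLast? = some v) :
    (IsListPath R (L1 ++ [x]) ∧ (L1 ++ [x]).head? = some u ∧
      (L1 ++ [x]).getLast? = some x) ∧
    (IsListPath R (x :: L2) ∧ (x :: L2).head? = some x ∧
      (x :: L2).getLast? = some v) := by
  obtain ⟨hne, hnd, hch⟩ := h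
  have hassoc : L1 ++ x :: L2 = (L1 ++ [x]) ++ L2 := by simp
  have hch2 := hassoc ▸ hch
  have hdec := List.isChain_append.1 hch2
  refine ⟨⟨⟨by simp, ?_, hdec.1⟩, ?_, List.getLast?_concat⟩,
    ⟨⟨by simp, ?_, ?_⟩, rfl, ?_⟩⟩
  · exact hnd.sublist (by rw [hassoc]; exact List.sublist_append_left _ _)
  · cases L1 with
    | nil => simpa using hh
    | cons a t => simpa using hh
  · exact hnd.sublist (List.sublist_append_right _ _)
  · refine List.isChain_cons.2 ⟨?_, hdec.2.1⟩
    intro y hy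
    exact hdec.2.2 x (by simp) y hy
  · have h2 : (x :: L2).getLast? = some ((x :: L2).getLast (by simp)) :=
      List.getLast?_eq_getLast (by simp)
    rw [List.getLast?_append, h2] at hl
    rw [show (some ((x :: L2).getLast (by simp))).or L1.getLast? =
      some ((x :: L2).getLast (by simp)) from rfl] at hl
    rw [h2, hl]

end CTaux
namespace CTaux
variable {V : Type u}

def Rk {m : ℕ} (C : Fin m → Set (V × V)) (k : ℕ) : V → V → Prop :=
  fun a b => ∃ i : Fin m, (i : ℕ) < k ∧ (a, b) ∈ C i

def Wk {m : ℕ} (C : Fin m → Set (V × V)) (k : ℕ) : Set V :=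
  {w | ∃ i : Fin m, (i : ℕ) < k ∧ w ∈ cycleVerts (C i)}

lemma Rk_mono {m : ℕ} {C : Fin m → Set (V × V)} {k k' : ℕ} (h : k ≤ k') {a b : V} :
    Rk C k a b → Rk C k' a b :=
  fun ⟨i, hi, hm⟩ => ⟨i, lt_of_lt_of_le hi h, hm⟩

lemma Rk_mem_Wk {A : V → V → Prop} {m : ℕ} {C : Fin m → Set (V × V)}
    (hcyc : ∀ i, IsCycleSet A (C i)) {k : ℕ} {a b : V}
    (h : Rk C k a b) : a ∈ Wk C k ∧ b ∈ Wk C k := by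
  obtain ⟨i, hi, hm⟩ := h
  obtain ⟨ha, hb⟩ := arc_mem_verts (hcyc i) hm
  exact ⟨⟨i, hi, ha⟩, ⟨i, hi, hb⟩⟩

lemma path_verts {R : V → V → Prop} {S : Set V} {L : List V} {u : V}
    (hch : L.Chain' R) (hh : L.head? = some u) (hu : u ∈ S)
    (harc : ∀ a b, R a b → b ∈ S) : ∀ w ∈ L, w ∈ S := by
  intro w hw
  rcases mem_chain'_cases hch hh hw with rfl | ⟨a, _, hR⟩
  exacts [hu, harc _ _ hR]

lemma main {A : V → V → Prop} {m : ℕ} {C : Fin m → Set (V × V)}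
    (hcyc : ∀ i, IsCycleSet A (C i))
    (hsep : ∀ i : Fin m, 0 < (i : ℕ) →
      ∃ x : V, cycleVerts (C i) ∩
        (⋃ (j : Fin m) (_ : (j : ℕ) < (i : ℕ)), cycleVerts (C j)) = {x}) :
    ∀ k : ℕ, ∀ u ∈ Wk C k, ∀ v ∈ Wk C k,
      ∃! L, IsListPath (Rk C k) L ∧ L.head? = some u ∧ L.getLast? = some v := by
  intro k
  induction k with
  | zero =>
    rintro u ⟨i, hi, _⟩
    omega
  | succ k ih =>
    intro u hu v hv
    by_cases hk : k < m
    case neg =>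
      have him : ∀ i : Fin m, (i : ℕ) < k + 1 → (i : ℕ) < k := by
        intro i hi
        have := i.isLt
        omega
      have hiff : ∀ a b : V, Rk C (k+1) a b → Rk C k a b := by
        rintro a b ⟨i, hi, hm⟩
        exact ⟨i, him i hi, hm⟩
      have hW : ∀ w : V, w ∈ Wk C (k+1) → w ∈ Wk C k := by
        rintro w ⟨i, hi, hm⟩
        exact ⟨i, him i hi, hm⟩
      obtain ⟨L, ⟨⟨h1, h2, h3⟩, hh, hl⟩, huniq⟩ := ih u (hW u hu) v (hW v hv)
      refine ⟨L, ⟨⟨h1, h2, h3.imp (fun a b hab => Rk_mono (Nat.le_succ k) hab)⟩, hh, hl⟩, ?_⟩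
      rintro M ⟨⟨hMne, hMnd, hMch⟩, hMh, hMl⟩
      exact huniq M ⟨⟨hMne, hMnd, hMch.imp (fun a b hab => hiff a b hab)⟩, hMh, hMl⟩
    case pos =>
      set i₀ : Fin m := ⟨k, hk⟩ with hi₀
      have hval : (i₀ : ℕ) = k := rfl
      obtain ⟨n, c, hcy, hCeq⟩ := hcyc i₀
      have hcinj : Function.Injective c := hcy.2.1
      rcases Nat.eq_zero_or_pos k with hk0 | hk0
      · -- single cycle case
        subst hk0
        have hidx : ∀ i : Fin m, (i : ℕ) < 0 + 1 → i = i₀ := by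
          intro i hi
          exact Fin.ext (by rw [hval]; omega)
        have hiff : ∀ a b : V, Rk C (0+1) a b → (a, b) ∈ CycleArcs c := by
          rintro a b ⟨i, hi, hm⟩
          rw [hidx i hi, hCeq] at hm
          exact hm
        have hiff' : ∀ a b : V, (a, b) ∈ CycleArcs c → Rk C (0+1) a b := by
          intro a b hm
          exact ⟨i₀, by rw [hval]; omega, by rw [hCeq]; exact hm⟩
        have hWiff : ∀ w : V, w ∈ Wk C (0+1) → w ∈ Set.range c := by
          rintro w ⟨i, hi, hm⟩
          rw [hidx i hi, hCeq, cycleVerts_cycleArcs] at hm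
          exact hm
        obtain ⟨L, ⟨⟨h1, h2, h3⟩, hh, hl⟩, huniq⟩ :=
          cycle_unique_path hcinj (hWiff u hu) (hWiff v hv)
        refine ⟨L, ⟨⟨h1, h2, h3.imp (fun a b hab => hiff' a b hab)⟩, hh, hl⟩, ?_⟩
        rintro M ⟨⟨hMne, hMnd, hMch⟩, hMh, hMl⟩
        exact huniq M ⟨⟨hMne, hMnd, hMch.imp (fun a b hab => hiff a b hab)⟩, hMh, hMl⟩
      · -- attachment case
        obtain ⟨x, hxeq⟩ := hsep i₀ (by rw [hval]; omega)
        have hUW : (⋃ (j : Fin m) (_ : (j : ℕ) < (i₀ : ℕ)), cycleVerts (C j)) = Wk C k := by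
          ext w
          simp only [Set.mem_iUnion, Wk, Set.mem_setOf_eq, hval, exists_prop]
        rw [hUW] at hxeq
        have hVc : cycleVerts (C i₀) = Set.range c := by rw [hCeq, cycleVerts_cycleArcs]
        have hxmem : x ∈ cycleVerts (C i₀) ∩ Wk C k := by rw [hxeq]; rfl
        have hxr : x ∈ Set.range c := hVc ▸ hxmem.1
        have hxW : x ∈ Wk C k := hxmem.2
        have hinter : ∀ w : V, w ∈ Set.range c → w ∈ Wk C k → w = x := by
          intro w h1 h2
          have : w ∈ cycleVerts (C i₀) ∩ Wk C k := ⟨hVc ▸ h1, h2⟩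
          rw [hxeq] at this
          exact this
        set N : Set V := Set.range c \ {x} with hN
        have hxN : x ∉ N := by simp [hN]
        have hNr : ∀ w : V, w ∈ N → w ∈ Set.range c := fun w hw => hw.1
        have hrN : ∀ w : V, w ∈ Set.range c → w ≠ x → w ∈ N := fun w hw hne => ⟨hw, hne⟩
        have hCarc' : ∀ a b : V, (a, b) ∈ CycleArcs c →
            a ∈ Set.range c ∧ b ∈ Set.range c := by
          intro a b hm
          have := arc_mem_verts (A := A) ⟨n, c, hcy, rfl⟩ hm
          rwa [cycleVerts_cycleArcs] at this
        have hsucc : ∀ a b : V, Rk C (k+1) a b → Rk C k a b ∨ (a, b) ∈ CycleArcs c := by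
          rintro a b ⟨i, hi, hm⟩
          rcases Nat.lt_or_ge (i : ℕ) k with h | h
          · exact Or.inl ⟨i, h, hm⟩
          · have : i = i₀ := Fin.ext (by rw [hval]; omega)
            rw [this, hCeq] at hm
            exact Or.inr hm
        have hsucc1 : ∀ a b : V, Rk C k a b → Rk C (k+1) a b :=
          fun a b hab => Rk_mono (Nat.le_succ k) hab
        have hsucc2 : ∀ a b : V, (a, b) ∈ CycleArcs c → Rk C (k+1) a b := by
          intro a b hm
          exact ⟨i₀, by rw [hval]; omega, by rw [hCeq]; exact hm⟩
        have hRkW : ∀ a b : V, Rk C k a b → a ∈ Wk C k ∧ b ∈ Wk C k :=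
          fun a b hab => Rk_mem_Wk hcyc hab
        -- boundary facts for N
        have hin : ∀ a b, Rk C (k+1) a b → a ∉ N → b ∈ N → a = x := by
          intro a b hab ha hb
          rcases hsucc a b hab with h | h
          · exfalso
            have := hinter b (hNr b hb) (hRkW a b h).2
            rw [this] at hb
            exact hxN hb
          · by_contra hax
            exact ha (hrN a (hCarc' a b h).1 hax)
        have hout : ∀ a b, Rk C (k+1) a b → a ∈ N → b ∉ N → b = x := by
          intro a b hab ha hb
          rcases hsucc a b hab with h | h
          · exfalso
            have := hinter a (hNr a ha) (hRkW a b h).1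
            rw [this] at ha
            exact hxN ha
          · by_contra hbx
            exact hb (hrN b (hCarc' a b h).2 hbx)
        -- boundary facts for the complement of the cycle
        have hin'' : ∀ a b, Rk C (k+1) a b → a ∉ {w | w ∉ Set.range c} →
            b ∈ {w | w ∉ Set.range c} → a = x := by
          intro a b hab ha hb
          simp only [Set.mem_setOf_eq, not_not] at ha hb
          rcases hsucc a b hab with h | h
          · exact hinter a ha (hRkW a b h).1
          · exact absurd (hCarc' a b h).2 hb
        have hout'' : ∀ a b, Rk C (k+1) a b → a ∈ {w | w ∉ Set.range c} →
            b ∉ {w | w ∉ Set.range c} → b = x := by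
          intro a b hab ha hb
          simp only [Set.mem_setOf_eq, not_not] at ha hb
          rcases hsucc a b hab with h | h
          · exact hinter b hb (hRkW a b h).2
          · exact absurd (hCarc' a b h).1 ha
        have hxN'' : x ∉ {w | w ∉ Set.range c} := by
          simp only [Set.mem_setOf_eq, not_not]
          exact hxr
        -- membership helpers
        have huWk : ∀ w : V, w ∈ Wk C (k+1) → w ∉ N → w ∈ Wk C k := by
          rintro w ⟨i, hi, hm⟩ hwN
          rcases Nat.lt_or_ge (i : ℕ) k with h | h
          · exact ⟨i, h, hm⟩
          · have : i = i₀ := Fin.ext (by rw [hval]; omega)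
            rw [this, hVc] at hm
            by_cases hwx : w = x
            · rw [hwx]; exact hxW
            · exact absurd (hrN w hm hwx) hwN
        have huN : ∀ w : V, w ∈ N → w ∈ Set.range c := hNr
        -- chain transfer helpers
        have htransk : ∀ L : List V, L.Chain' (Rk C (k+1)) → L.Nodup →
            (∀ w ∈ L, w ∉ N) → L.Chain' (Rk C k) := by
          intro L hch hnd hall
          refine chain'_transfer hch hnd ?_
          intro a b ha hb hne hab
          rcases hsucc a b hab with h | h
          · exact h
          · exfalso
            obtain ⟨har, hbr⟩ := hCarc' a b h
            have ha' : a = x := by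
              by_contra hax
              exact (hall a ha) (hrN a har hax)
            have hb' : b = x := by
              by_contra hbx
              exact (hall b hb) (hrN b hbr hbx)
            exact hne (ha'.trans hb'.symm)
        have htransc : ∀ L : List V, L.Chain' (Rk C (k+1)) → L.Nodup →
            (∀ w ∈ L, w ∈ Set.range c) →
            L.Chain' (fun a b => (a, b) ∈ CycleArcs c) := by
          intro L hch hnd hall
          refine chain'_transfer hch hnd ?_
          intro a b ha hb hne hab
          rcases hsucc a b hab with h | h
          · exfalso
            have ha' : a = x := hinter a (hall a ha) (hRkW a b h).1
            have hb' : b = x := hinter b (hall b hb) (hRkW a b h).2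
            exact hne (ha'.trans hb'.symm)
          · exact h
        -- vertex closure helpers
        have hpverts : ∀ (L : List V) (u' : V), L.Chain' (Rk C k) →
            L.head? = some u' → u' ∈ Wk C k → ∀ w ∈ L, w ∈ Wk C k :=
          fun L u' hch hh hu' =>
            path_verts hch hh hu' (fun a b hab => (hRkW a b hab).2)
        have hcverts : ∀ (L : List V) (u' : V),
            L.Chain' (fun a b => (a, b) ∈ CycleArcs c) →
            L.head? = some u' → u' ∈ Set.range c → ∀ w ∈ L, w ∈ Set.range c :=
          fun L u' hch hh hu' =>
            path_verts hch hh hu' (fun a b hab => (hCarc' a b hab).2)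
        -- now the case analysis
        by_cases hun : u ∈ N
        · by_cases hvn : v ∈ N
          · -- both in the open part of the new cycle
            have hur : u ∈ Set.range c := hNr u hun
            have hvr : v ∈ Set.range c := hNr v hvn
            obtain ⟨L, ⟨⟨h1, h2, h3⟩, hh, hl⟩, huniq⟩ := cycle_unique_path hcinj hur hvr
            refine ⟨L, ⟨⟨h1, h2, h3.imp (fun a b hab => hsucc2 a b hab)⟩, hh, hl⟩, ?_⟩
            rintro M ⟨⟨hMne, hMnd, hMch⟩, hMh, hMl⟩
            have hall := sepA hxN'' hin'' hout'' hMch hMnd hMh hMl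
              (by simp only [Set.mem_setOf_eq, not_not]; exact hur)
              (by simp only [Set.mem_setOf_eq, not_not]; exact hvr)
            have hall' : ∀ w ∈ M, w ∈ Set.range c := by
              intro w hw
              have := hall w hw
              simpa using this
            exact huniq M ⟨⟨hMne, hMnd, htransc M hMch hMnd hall'⟩, hMh, hMl⟩
          · -- u ∈ N, v outside the new cycle part
            have hur : u ∈ Set.range c := hNr u hun
            have hvW : v ∈ Wk C k := huWk v hv hvn
            obtain ⟨P, ⟨⟨hP1, hP2, hP3⟩, hPh, hPl⟩, hPuniq⟩ := cycle_unique_path hcinj hur hxr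
            obtain ⟨Q, ⟨⟨hQ1, hQ2, hQ3⟩, hQh, hQl⟩, hQuniq⟩ := ih x hxW v hvW
            have hP3' := hP3.imp (fun a b hab => hsucc2 a b hab)
            have hQ3' := hQ3.imp (fun a b hab => hsucc1 a b hab)
            have hdisj : ∀ w, w ∈ P → w ∈ Q → w = x := by
              intro w hwP hwQ
              exact hinter w (hcverts P u hP3 hPh hur w hwP) (hpverts Q x hQ3 hQh hxW w hwQ)
            obtain ⟨hJp, hJh, hJl⟩ := join_path ⟨hP1, hP2, hP3'⟩ ⟨hQ1, hQ2, hQ3'⟩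
              hPh hPl hQh hQl hdisj
            refine ⟨P ++ Q.tail, ⟨hJp, hJh, hJl⟩, ?_⟩
            rintro M ⟨⟨hMne, hMnd, hMch⟩, hMh, hMl⟩
            obtain ⟨M1, M2, rfl, hM1, hM2⟩ := sepC hxN hin hout hMch hMnd hMh hMl hun hvn
            obtain ⟨⟨hp1, hh1, hl1⟩, ⟨hp2, hh2, hl2⟩⟩ :=
              split_path ⟨hMne, hMnd, hMch⟩ hMh hMl
            have hall1 : ∀ w ∈ M1 ++ [x], w ∈ Set.range c := by
              intro w hw
              rcases List.mem_append.1 hw with hw | hw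
              · exact hNr w (hM1 w hw)
              · simp at hw
                rw [hw]
                exact hxr
            have hch1' := htransc _ hp1.2.2 hp1.2.1 hall1
            have e1 : M1 ++ [x] = P := hPuniq _ ⟨⟨hp1.1, hp1.2.1, hch1'⟩, hh1, hl1⟩
            have hall2 : ∀ w ∈ x :: M2, w ∉ N := by
              intro w hw
              rcases List.mem_cons.1 hw with rfl | hw
              · exact hxN
              · exact hM2 w hw
            have hch2' := htransk _ hp2.2.2 hp2.2.1 hall2
            have e2 : x :: M2 = Q := hQuniq _ ⟨⟨hp2.1, hp2.2.1, hch2'⟩, hh2, hl2⟩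
            rw [← e1, ← e2]
            simp
        · by_cases hvn : v ∈ N
          · -- u outside, v ∈ N
            have hvr : v ∈ Set.range c := hNr v hvn
            have huW : u ∈ Wk C k := huWk u hu hun
            obtain ⟨P, ⟨⟨hP1, hP2, hP3⟩, hPh, hPl⟩, hPuniq⟩ := ih u huW x hxW
            obtain ⟨Q, ⟨⟨hQ1, hQ2, hQ3⟩, hQh, hQl⟩, hQuniq⟩ := cycle_unique_path hcinj hxr hvr
            have hP3' := hP3.imp (fun a b hab => hsucc1 a b hab)
            have hQ3' := hQ3.imp (fun a b hab => hsucc2 a b hab)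
            have hdisj : ∀ w, w ∈ P → w ∈ Q → w = x := by
              intro w hwP hwQ
              exact hinter w (hcverts Q x hQ3 hQh hxr w hwQ) (hpverts P u hP3 hPh huW w hwP)
            obtain ⟨hJp, hJh, hJl⟩ := join_path ⟨hP1, hP2, hP3'⟩ ⟨hQ1, hQ2, hQ3'⟩
              hPh hPl hQh hQl hdisj
            refine ⟨P ++ Q.tail, ⟨hJp, hJh, hJl⟩, ?_⟩
            rintro M ⟨⟨hMne, hMnd, hMch⟩, hMh, hMl⟩
            obtain ⟨M1, M2, rfl, hM1, hM2⟩ := sepB hxN hin hout hMch hMnd hMh hMl hun hvn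
            obtain ⟨⟨hp1, hh1, hl1⟩, ⟨hp2, hh2, hl2⟩⟩ :=
              split_path ⟨hMne, hMnd, hMch⟩ hMh hMl
            have hall1 : ∀ w ∈ M1 ++ [x], w ∉ N := by
              intro w hw
              rcases List.mem_append.1 hw with hw | hw
              · exact hM1 w hw
              · simp at hw
                rw [hw]
                exact hxN
            have hch1' := htransk _ hp1.2.2 hp1.2.1 hall1
            have e1 : M1 ++ [x] = P := hPuniq _ ⟨⟨hp1.1, hp1.2.1, hch1'⟩, hh1, hl1⟩
            have hall2 : ∀ w ∈ x :: M2, w ∈ Set.range c := by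
              intro w hw
              rcases List.mem_cons.1 hw with rfl | hw
              · exact hxr
              · exact hNr w (hM2 w hw)
            have hch2' := htransc _ hp2.2.2 hp2.2.1 hall2
            have e2 : x :: M2 = Q := hQuniq _ ⟨⟨hp2.1, hp2.2.1, hch2'⟩, hh2, hl2⟩
            rw [← e1, ← e2]
            simp
          · -- both outside the new cycle part
            have huW : u ∈ Wk C k := huWk u hu hun
            have hvW : v ∈ Wk C k := huWk v hv hvn
            obtain ⟨L, ⟨⟨h1, h2, h3⟩, hh, hl⟩, huniq⟩ := ih u huW v hvW
            refine ⟨L, ⟨⟨h1, h2, h3.imp (fun a b hab => hsucc1 a b hab)⟩, hh, hl⟩, ?_⟩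
            rintro M ⟨⟨hMne, hMnd, hMch⟩, hMh, hMl⟩
            have hall := sepA hxN hin hout hMch hMnd hMh hMl hun hvn
            exact huniq M ⟨⟨hMne, hMnd, htransk M hMch hMnd hall⟩, hMh, hMl⟩

end CTaux
/-- Let `T` be a cycle-tree.  Then for any two vertices `u` and `v` of `T`,
there exists exactly one directed path in `T` from `u` to `v`. -/
theorem cycleTree_unique_path {V : Type u} (A : V → V → Prop)
    (h : IsCycleTree A) (u v : V) :
    ∃! L : List V, IsListPath A L ∧ L.head? = some u ∧ L.getLast? = some v := by
  obtain ⟨hconn, m, C, hCinj, hcyc, hall, hsep⟩ := h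
  by_cases huv : u = v
  · subst huv
    refine ⟨[u], ⟨⟨by simp, by simp, by simp [List.Chain']⟩, by simp, by simp⟩, ?_⟩
    rintro M ⟨⟨hMne, hMnd, hMch⟩, hMh, hMl⟩
    exact CTaux.eq_singleton_of_head_last hMnd hMh hMl
  · have harc : ∀ a b : V, a ≠ b → A a b → CTaux.Rk C m a b := by
      intro a b hne hA
      obtain ⟨s, hs, hm⟩ := CTaux.arc_mem_cycleSet hconn hA hne
      obtain ⟨i, hi⟩ := hall s hs
      exact ⟨i, i.isLt, by rw [hi]; exact hm⟩
    have hback : ∀ a b : V, CTaux.Rk C m a b → A a b := by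
      rintro a b ⟨i, _, hm⟩
      obtain ⟨n, c, hC, hEq⟩ := hcyc i
      rw [hEq] at hm
      exact CTaux.cycle_arcs_subset hC hm
    -- find a path to locate u and v on cycles
    obtain ⟨L0, ⟨hLne, hLnd, hLch⟩, hh, hl⟩ := CTaux.exists_path (hconn u v)
    have hLch' : L0.Chain' (CTaux.Rk C m) :=
      CTaux.chain'_transfer hLch hLnd (fun a b _ _ hne hA => harc a b hne hA)
    have hvL : v ∈ L0 := by
      rw [List.getLast?_eq_getLast hLne] at hl
      exact (Option.some_inj.1 hl) ▸ List.getLast_mem hLne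
    have huL : u ∈ L0.reverse := by
      rw [← List.getLast?_reverse] at hh
      rw [List.getLast?_eq_getLast (by simpa using hLne)] at hh
      exact (Option.some_inj.1 hh) ▸ List.getLast_mem _
    have hvW : v ∈ CTaux.Wk C m := by
      rcases CTaux.mem_chain'_cases hLch' hh hvL with rfl | ⟨a, _, hR⟩
      · exact absurd rfl huv
      · exact (CTaux.Rk_mem_Wk hcyc hR).2
    have huW : u ∈ CTaux.Wk C m := by
      have hrev : L0.reverse.Chain' (flip (CTaux.Rk C m)) := List.isChain_reverse.2 hLch'
      have hrevh : L0.reverse.head? = some v := by rw [List.head?_reverse]; exact hl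
      rcases CTaux.mem_chain'_cases hrev hrevh huL with rfl | ⟨a, _, hR⟩
      · exact absurd rfl huv
      · exact (CTaux.Rk_mem_Wk hcyc hR).1
    obtain ⟨L, ⟨⟨h1, h2, h3⟩, hh', hl'⟩, huniq⟩ := CTaux.main hcyc hsep m u huW v hvW
    refine ⟨L, ⟨⟨h1, h2, h3.imp (fun a b hab => hback a b hab)⟩, hh', hl'⟩, ?_⟩
    rintro M ⟨⟨hMne, hMnd, hMch⟩, hMh, hMl⟩
    have hMch' : M.Chain' (CTaux.Rk C m) :=
      CTaux.chain'_transfer hMch hMnd (fun a b _ _ hne hA => harc a b hne hA)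
    exact huniq M ⟨⟨hMne, hMnd, hMch'⟩, hMh, hMl⟩
end

section
/- Let T be a cycle-tree and let C and C' be two distinct directed cycles of T. Then there exists a unique cycle-path contained in T whose end-cycles are C and C'; that is, there is a unique sequence C = C₀, C₁, ..., C_m = C' of cycles of T such that |V(C_i) ∩ V(C_j)| ≤ 1 for all distinct i, j ∈ {0, 1, ..., m}, with equality if and only if |i−j| = 1. -/
universe u

/-- `L` is a cycle-path sequence in the digraph `A`: a sequence `C₀, C₁, …, C_m`
of directed cycles of `A` (identified with their arc sets) such that
`|V(C_i) ∩ V(C_j)| ≤ 1` for all distinct `i, j`, with equality iff `|i − j| = 1`. -/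
def IsCyclePathSeq {V : Type u} (A : V → V → Prop) (L : List (Set (V × V))) : Prop :=
  (∀ s ∈ L, IsCycleSet A s) ∧
  ∀ (i j : ℕ) (hi : i < L.length) (hj : j < L.length), i ≠ j →
    (cycleVerts (L.get ⟨i, hi⟩) ∩ cycleVerts (L.get ⟨j, hj⟩)).ncard ≤ 1 ∧
    ((cycleVerts (L.get ⟨i, hi⟩) ∩ cycleVerts (L.get ⟨j, hj⟩)).ncard = 1 ↔
      (i = j + 1 ∨ j = i + 1))

namespace CTAux

open SimpleGraph Sum

variable {V : Type u} {m : ℕ}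

def bg (verts : Fin m → Set V) : SimpleGraph (V ⊕ Fin m) where
  Adj x y := match x, y with
    | .inl v, .inr i => v ∈ verts i
    | .inr i, .inl v => v ∈ verts i
    | _, _ => False
  symm := ⟨by rintro (v|i) (w|j) h <;> first | exact h | cases h⟩
  loopless := ⟨by rintro (v|i) h <;> exact h⟩

variable {verts : Fin m → Set V}

lemma adj_inr_inl {i : Fin m} {v : V} (h : v ∈ verts i) : (bg verts).Adj (inr i) (inl v) := h
lemma adj_inl_inr {i : Fin m} {v : V} (h : v ∈ verts i) : (bg verts).Adj (inl v) (inr i) := h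

lemma adj_inr_left {i : Fin m} {y} (h : (bg verts).Adj (inr i) y) :
    ∃ v, y = inl v ∧ v ∈ verts i := by
  cases y with
  | inl v => exact ⟨v, rfl, h⟩
  | inr j => cases h

lemma adj_inl_left {v : V} {y} (h : (bg verts).Adj (inl v) y) :
    ∃ i, y = inr i ∧ v ∈ verts i := by
  cases y with
  | inl w => cases h
  | inr j => exact ⟨j, rfl, h⟩

/-- A graph admitting a rank function where each vertex has at most one
lower-rank neighbour is acyclic. -/
lemma acyclic_of_rank {W : Type*} (G : SimpleGraph W) (r : W → ℕ)
    (h1 : ∀ {u v}, G.Adj u v → r u ≠ r v)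
    (h2 : ∀ {u v w}, G.Adj u v → G.Adj u w → r v < r u → r w < r u → v = w) :
    G.IsAcyclic := by
  intro u c hc
  have : DecidableEq W := Classical.decEq _
  have hne : c.support ≠ [] := c.support_ne_nil
  obtain ⟨x, hx⟩ : ∃ x, x ∈ c.support.argmax r := by
    cases h : c.support.argmax r with
    | none => exact absurd (List.argmax_eq_none.mp h) hne
    | some y => exact ⟨y, rfl⟩
  have hxs : x ∈ c.support := List.argmax_mem hx
  have hmax : ∀ y ∈ c.support, r y ≤ r x := fun y hy => List.le_of_mem_argmax hy hx
  have hc' : (c.rotate x hxs).IsCycle := hc.rotate hxs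
  have hmax' : ∀ y ∈ (c.rotate x hxs).support, r y ≤ r x := by
    intro y hy
    rw [Walk.support_eq_cons, List.mem_cons] at hy
    rcases hy with rfl | hy
    · exact le_rfl
    · exact hmax y (List.mem_of_mem_tail ((Walk.support_rotate c x hxs).mem_iff.mp hy))
  generalize hrot : c.rotate x hxs = c' at hc' hmax'
  clear hrot hmax hxs hx hne hc c
  cases c' with
  | nil => simp [Walk.isCycle_def] at hc'
  | @cons _ y _ h q =>
    rw [Walk.cons_isCycle_iff] at hc'
    obtain ⟨hq, he⟩ := hc'
    have hxy : x ≠ y := h.ne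
    obtain ⟨z, h₂, q₂, hq2⟩ := Walk.exists_eq_cons_of_ne hxy q.reverse
    have hz : z ∈ q.support := by
      have : z ∈ q.reverse.support := by
        rw [hq2, Walk.support_cons]
        exact List.mem_cons_of_mem _ q₂.start_mem_support
      rwa [Walk.support_reverse, List.mem_reverse] at this
    have hy' : y ∈ q.support := q.start_mem_support
    have hry : r y < r x :=
      lt_of_le_of_ne (hmax' y (by rw [Walk.support_cons]; exact List.mem_cons_of_mem _ hy'))
        (h1 h).symm
    have hrz : r z < r x :=
      lt_of_le_of_ne (hmax' z (by rw [Walk.support_cons]; exact List.mem_cons_of_mem _ hz))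
        (h1 h₂).symm
    have hyz : y = z := h2 h h₂ hry hrz
    apply he
    subst hyz
    have : s(x, y) ∈ q.reverse.edges := by rw [hq2, Walk.edges_cons]; exact List.mem_cons_self
    rwa [Walk.edges_reverse, List.mem_reverse] at this


section Tree

variable (verts)

noncomputable def mu (v : V) : ℕ := sInf {n | ∃ i : Fin m, (i : ℕ) = n ∧ v ∈ verts i}

noncomputable def rk : V ⊕ Fin m → ℕ
  | .inl v => 2 * mu verts v + 1
  | .inr i => 2 * (i : ℕ)

variable {verts}

lemma mu_le {v : V} {i : Fin m} (hv : v ∈ verts i) : mu verts v ≤ (i : ℕ) :=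
  Nat.sInf_le ⟨i, rfl, hv⟩

lemma mu_mem {v : V} {i : Fin m} (hv : v ∈ verts i) :
    ∃ i₀ : Fin m, (i₀ : ℕ) = mu verts v ∧ v ∈ verts i₀ :=
  Nat.sInf_mem (⟨(i : ℕ), i, rfl, hv⟩ : {n | ∃ i : Fin m, (i : ℕ) = n ∧ v ∈ verts i}.Nonempty)

variable (hsing : ∀ i : Fin m, 0 < (i : ℕ) →
  ∃ x : V, verts i ∩ (⋃ (j : Fin m) (_ : (j : ℕ) < (i : ℕ)), verts j) = {x})

include hsing

lemma attach_unique {i : Fin m} {v w : V} (hv : v ∈ verts i) (hw : w ∈ verts i)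
    (hv' : ∃ j : Fin m, (j : ℕ) < (i : ℕ) ∧ v ∈ verts j)
    (hw' : ∃ j : Fin m, (j : ℕ) < (i : ℕ) ∧ w ∈ verts j) : v = w := by
  obtain ⟨j, hj, hvj⟩ := hv'
  obtain ⟨k, hk, hwk⟩ := hw'
  obtain ⟨x, hx⟩ := hsing i (Nat.pos_of_ne_zero (by omega))
  have h1 : v ∈ ({x} : Set V) := hx ▸ ⟨hv, Set.mem_iUnion₂.mpr ⟨j, hj, hvj⟩⟩
  have h2 : w ∈ ({x} : Set V) := hx ▸ ⟨hw, Set.mem_iUnion₂.mpr ⟨k, hk, hwk⟩⟩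
  rw [Set.mem_singleton_iff] at h1 h2
  rw [h1, h2]

lemma subsingleton_inter {i j : Fin m} (hij : i ≠ j) :
    (verts i ∩ verts j).Subsingleton := by
  intro v hv w hw
  rcases Nat.lt_or_ge (j : ℕ) (i : ℕ) with hlt | hge
  · exact attach_unique hsing hv.1 hw.1 ⟨j, hlt, hv.2⟩ ⟨j, hlt, hw.2⟩
  · have hne : (i : ℕ) ≠ (j : ℕ) := fun hh => hij (Fin.ext hh)
    have hlt : (i : ℕ) < (j : ℕ) := by omega
    exact attach_unique hsing hv.2 hw.2 ⟨i, hlt, hv.1⟩ ⟨i, hlt, hw.1⟩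

lemma bg_acyclic : (bg verts).IsAcyclic := by
  apply acyclic_of_rank (bg verts) (rk verts)
  · rintro (v|i) (w|j) h
    · cases h
    · simp only [rk]; omega
    · simp only [rk]; omega
    · cases h
  · rintro (a|i) v w hv hw hrv hrw
    · obtain ⟨i, rfl, hai⟩ := adj_inl_left hv
      obtain ⟨j, rfl, haj⟩ := adj_inl_left hw
      simp only [rk] at hrv hrw
      have h1 : mu verts a ≤ (i : ℕ) := mu_le hai
      have h2 : mu verts a ≤ (j : ℕ) := mu_le haj
      have : (i : ℕ) = (j : ℕ) := by omega
      exact congrArg inr (Fin.ext this)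
    · obtain ⟨a, rfl, hai⟩ := adj_inr_left hv
      obtain ⟨b, rfl, hbi⟩ := adj_inr_left hw
      simp only [rk] at hrv hrw
      obtain ⟨i₀, hi₀, hai₀⟩ := mu_mem hai
      obtain ⟨j₀, hj₀, hbj₀⟩ := mu_mem hbi
      have : a = b := attach_unique hsing hai hbi ⟨i₀, by omega, hai₀⟩ ⟨j₀, by omega, hbj₀⟩
      rw [this]

lemma reach_zero (hm : 0 < m) :
    ∀ (n : ℕ) (i : Fin m), (i : ℕ) ≤ n → (bg verts).Reachable (inr i) (inr ⟨0, hm⟩) := by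
  intro n
  induction n with
  | zero =>
    intro i hi
    have h0 : (i : ℕ) = 0 := by omega
    have : i = ⟨0, hm⟩ := Fin.ext h0
    rw [this]
  | succ n ih =>
    intro i hi
    rcases Nat.eq_zero_or_pos (i : ℕ) with h0 | hpos
    · have : i = ⟨0, hm⟩ := Fin.ext h0
      rw [this]
    · obtain ⟨x, hx⟩ := hsing i hpos
      have hxm : x ∈ verts i ∩ ⋃ (j : Fin m) (_ : (j : ℕ) < (i : ℕ)), verts j := by
        rw [hx]; rfl
      obtain ⟨hx1, hx2⟩ := hxm
      obtain ⟨j, hj, hxj⟩ := Set.mem_iUnion₂.mp hx2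
      exact ((adj_inr_inl hx1).reachable.trans (adj_inl_inr hxj).reachable).trans
        (ih j (by omega))

lemma reach (hm : 0 < m) (a b : Fin m) : (bg verts).Reachable (inr a) (inr b) :=
  (reach_zero hsing hm (a : ℕ) a le_rfl).trans (reach_zero hsing hm (b : ℕ) b le_rfl).symm

end Tree


section Ext

variable {verts : Fin m → Set V}

def toIdx : V ⊕ Fin m → Option (Fin m)
  | .inl _ => none
  | .inr i => some i

def ext {x y : V ⊕ Fin m} (p : (bg verts).Walk x y) : List (Fin m) :=
  p.support.filterMap toIdx

def Rel (verts : Fin m → Set V) (i j : Fin m) : Prop :=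
  i ≠ j ∧ (verts i ∩ verts j).Nonempty

def NC (verts : Fin m → Set V) (l : List (Fin m)) : Prop :=
  ∀ (k k' : ℕ) (hk : k < l.length) (hk' : k' < l.length), k + 2 ≤ k' →
    verts (l.get ⟨k, hk⟩) ∩ verts (l.get ⟨k', hk'⟩) = ∅

lemma mem_ext {x y : V ⊕ Fin m} {p : (bg verts).Walk x y} {i : Fin m} :
    i ∈ ext p ↔ inr i ∈ p.support := by
  constructor
  · intro hi
    obtain ⟨a, ha, hai⟩ := List.mem_filterMap.mp hi
    cases a with
    | inl v => simp [toIdx] at hai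
    | inr j => simp [toIdx] at hai; rwa [hai] at ha
  · intro hi
    exact List.mem_filterMap.mpr ⟨inr i, hi, rfl⟩

lemma ext_nodup {x y : V ⊕ Fin m} {p : (bg verts).Walk x y} (hp : p.IsPath) :
    (ext p).Nodup := by
  apply hp.support_nodup.filterMap
  rintro (a|a) (b|b) c hc hc' <;> simp [toIdx] at hc hc' <;> rw [hc, hc']

lemma ext_cons {x y z : V ⊕ Fin m} (h : (bg verts).Adj x y) (p : (bg verts).Walk y z)
    {i : Fin m} (hx : x = inr i) : ext (Walk.cons h p) = i :: ext p := by
  subst hx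
  simp [ext, Walk.support_cons, List.filterMap_cons, toIdx]

lemma ext_cons_inl {x y z : V ⊕ Fin m} (h : (bg verts).Adj x y) (p : (bg verts).Walk y z)
    {v : V} (hx : x = inl v) : ext (Walk.cons h p) = ext p := by
  subst hx
  simp [ext, Walk.support_cons, List.filterMap_cons, toIdx]

lemma ext_start {b : Fin m} {x : V ⊕ Fin m} (p : (bg verts).Walk x (inr b)) {a : Fin m}
    (hx : x = inr a) : ∃ t, ext p = a :: t := by
  subst hx
  rw [ext, p.support_eq_cons, List.filterMap_cons]
  exact ⟨_, rfl⟩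

lemma master (hac : (bg verts).IsAcyclic) :
    ∀ (n : ℕ) (a b : Fin m) (p : (bg verts).Walk (inr a) (inr b)), p.length ≤ n → p.IsPath →
      (ext p).head? = some a ∧ (ext p).getLast? = some b ∧
      List.Chain' (Rel verts) (ext p) ∧ NC verts (ext p) := by
  have : DecidableEq (V ⊕ Fin m) := Classical.decEq _
  intro n
  induction n with
  | zero =>
    intro a b p hl hp
    cases p with
    | nil =>
      refine ⟨rfl, rfl, List.isChain_singleton a, ?_⟩
      intro k k' hk hk' hkk
      simp [ext, toIdx] at hk hk'
      omega
    | cons h q => simp at hl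
  | succ n ih =>
    intro a b p hl hp
    cases p with
    | nil =>
      refine ⟨rfl, rfl, List.isChain_singleton a, ?_⟩
      intro k k' hk hk' hkk
      simp [ext, toIdx] at hk hk'
      omega
    | @cons _ x _ h q =>
      obtain ⟨w, rfl, hwa⟩ := adj_inr_left h
      cases q with
      | cons h₂ q' =>
        rename_i x'
        obtain ⟨a', rfl, hwa'⟩ := adj_inl_left h₂
        rw [Walk.cons_isPath_iff] at hp
        obtain ⟨hp1, hpa⟩ := hp
        rw [Walk.cons_isPath_iff] at hp1
        obtain ⟨hq', hpw⟩ := hp1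
        have hl' : q'.length ≤ n := by simp [Walk.length_cons] at hl ⊢; omega
        obtain ⟨ih1, ih2, ih3, ih4⟩ := ih a' b q' hl' hq'
        have hext : ext (Walk.cons h (Walk.cons h₂ q')) = a :: ext q' := by
          rw [ext_cons h _ rfl, ext_cons_inl h₂ _ rfl]
        obtain ⟨t, ht⟩ := ext_start q' rfl
        have haa' : a ≠ a' := by
          rintro rfl
          exact hpa (by rw [Walk.support_cons]; exact List.mem_cons_of_mem _ q'.start_mem_support)
        have hnodup : (ext q').Nodup := ext_nodup hq'
        refine ⟨by rw [hext]; rfl, ?_, ?_, ?_⟩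
        · rw [hext, ht, List.getLast?_cons_cons, ← ht]
          exact ih2
        · rw [hext, ht]
          simp only [List.Chain']
          rw [List.isChain_cons_cons]
          refine ⟨⟨haa', w, hwa, hwa'⟩, ht ▸ ih3⟩
        · -- NC
          rw [hext]
          intro k k' hk hk' hkk
          match k, k' with
          | k + 1, k' + 1 =>
            simp only [List.length_cons] at hk hk'
            have := ih4 k k' (by omega) (by omega) (by omega)
            simpa using this
          | 0, k' + 1 =>
            simp only [List.length_cons] at hk hk'
            have hk'' : k' < (ext q').length := by omega
            set j := (ext q').get ⟨k', hk''⟩ with hj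
            have hjmem : j ∈ ext q' := List.get_mem _ _
            have hjsup : inr j ∈ q'.support := mem_ext.mp hjmem
            have haj : a ≠ j := by
              rintro rfl
              exact hpa (by
                rw [Walk.support_cons]
                exact List.mem_cons_of_mem _ hjsup)
            simp only [List.get_cons_succ]
            show verts a ∩ verts j = ∅
            by_contra hne
            obtain ⟨v, hva, hvj⟩ := Set.nonempty_iff_ne_empty.mpr hne
            -- build the 2-step path
            have hAdj1 : (bg verts).Adj (inr a) (inl v) := adj_inr_inl hva
            have hAdj2 : (bg verts).Adj (inl v) (inr j) := adj_inl_inr hvj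
            set P₂ : (bg verts).Walk (inr a) (inr j) :=
              Walk.cons hAdj1 (Walk.cons hAdj2 Walk.nil) with hP₂def
            have hP₂ : P₂.IsPath := by
              rw [Walk.isPath_def, hP₂def]
              simp [Walk.support_cons, haj]
            have hjmem' : inr j ∈ (Walk.cons h (Walk.cons h₂ q')).support := by
              simp only [Walk.support_cons, List.mem_cons]
              exact Or.inr (Or.inr hjsup)
            have hth : ((Walk.cons h (Walk.cons h₂ q')).takeUntil (inr j) hjmem').IsPath := by
              have hp' : (Walk.cons h (Walk.cons h₂ q')).IsPath := by
                rw [Walk.cons_isPath_iff, Walk.cons_isPath_iff]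
                exact ⟨⟨hq', hpw⟩, hpa⟩
              exact hp'.takeUntil hjmem'
            have heq : (Walk.cons h (Walk.cons h₂ q')).takeUntil (inr j) hjmem' = P₂ := by
              have := isAcyclic_iff_path_unique.mp hac
                ⟨(Walk.cons h (Walk.cons h₂ q')).takeUntil (inr j) hjmem', hth⟩ ⟨P₂, hP₂⟩
              exact congrArg Subtype.val this
            have hsupp := congrArg Walk.support
              ((Walk.cons h (Walk.cons h₂ q')).take_spec hjmem')
            rw [Walk.support_append, heq] at hsupp
            have hP₂supp : P₂.support = [inr a, inl v, inr j] := by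
              rw [hP₂def]; simp [Walk.support_cons]
            rw [hP₂supp] at hsupp
            have hsupp2 : ([inr a, inl v, inr j] ++
                (((Walk.cons h (Walk.cons h₂ q')).dropUntil (inr j) hjmem')).support.tail
                : List (V ⊕ Fin m)) =
                inr a :: inl w :: inr a' :: q'.support.tail := by
              rw [hsupp]
              simp only [Walk.support_cons]
              rw [q'.support_eq_cons]
              rfl
            have hja' : (inr j : V ⊕ Fin m) = inr a' := by
              have := congrArg (fun l => l[2]?) hsupp2
              simpa using this
            have hja'' : j = a' := by injection hja'
            -- but j is at position k' ≥ 1 in ext q' and a' at position 0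
            have h0 : (ext q').get ⟨0, by rw [ht]; simp⟩ = a' := by
              have : ext q' = a' :: t := ht
              simp [this]
            have : (⟨k', hk''⟩ : Fin (ext q').length) = ⟨0, by rw [ht]; simp⟩ := by
              apply List.nodup_iff_injective_get.mp hnodup
              rw [h0, ← hj, hja'']
            have : k' = 0 := by
              simpa using congrArg Fin.val this
            omega


lemma buildWalk :
    ∀ (l : List (Fin m)) (a b : Fin m), l.head? = some a → l.getLast? = some b →
      List.Chain' (Rel verts) l → l.Nodup → NC verts l →
      ∃ p : (bg verts).Walk (inr a) (inr b), p.IsPath ∧ ext p = l ∧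
        (∀ u : V, inl u ∈ p.support → ∃ (k : ℕ) (hk : k + 1 < l.length),
          u ∈ verts (l.get ⟨k, by omega⟩) ∩ verts (l.get ⟨k + 1, hk⟩)) := by
  intro l
  induction l with
  | nil => intro a b hh; simp at hh
  | cons a₀ l ih =>
    intro a b hh hlast hchain hnodup hnc
    have ha : a = a₀ := (show a₀ = a by simpa using hh).symm
    cases ha
    cases l with
    | nil =>
      have hb : a₀ = b := by simpa using hlast
      subst hb
      refine ⟨Walk.nil, Walk.IsPath.nil, rfl, ?_⟩
      intro u hu
      simp [Walk.support_nil] at hu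
    | cons a' t =>
      obtain ⟨⟨haa', v, hva, hva'⟩, hchain'⟩ := List.isChain_cons_cons.mp hchain
      have hlast' : (a' :: t).getLast? = some b := by
        rwa [List.getLast?_cons_cons] at hlast
      obtain ⟨p', hp', hext', hinl'⟩ := ih a' b rfl hlast' hchain'
        (List.Nodup.of_cons hnodup)
        (by
          intro k k' hk hk' hkk
          have := hnc (k + 1) (k' + 1) (by simpa using Nat.succ_lt_succ hk)
            (by simpa using Nat.succ_lt_succ hk') (by omega)
          simpa using this)
      have hAdj1 : (bg verts).Adj (inr a₀) (inl v) := adj_inr_inl hva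
      have hAdj2 : (bg verts).Adj (inl v) (inr a') := adj_inl_inr hva'
      refine ⟨Walk.cons hAdj1 (Walk.cons hAdj2 p'), ?_, ?_, ?_⟩
      · rw [Walk.cons_isPath_iff, Walk.cons_isPath_iff]
        refine ⟨⟨hp', ?_⟩, ?_⟩
        · -- inl v ∉ p'.support
          intro hvs
          obtain ⟨k, hk, hv1, hv2⟩ := hinl' v hvs
          -- v ∈ verts a and v ∈ verts ((a'::t).get ⟨k+1⟩) = verts ((a::a'::t).get ⟨k+2⟩)
          have := hnc 0 (k + 2) (by simp) (by simpa using Nat.succ_lt_succ hk) (by omega)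
          rw [Set.eq_empty_iff_forall_notMem] at this
          exact this v ⟨hva, by simpa using hv2⟩
        · -- inr a ∉ (cons hAdj2 p').support
          rw [Walk.support_cons, List.mem_cons]
          rintro (hc | hc)
          · simp at hc
          · have : a₀ ∈ ext p' := mem_ext.mpr hc
            rw [hext'] at this
            exact (List.nodup_cons.mp hnodup).1 this
      · rw [ext_cons hAdj1 _ rfl, ext_cons_inl hAdj2 _ rfl, hext']
      · intro u hu
        rw [Walk.support_cons, Walk.support_cons] at hu
        simp only [List.mem_cons] at hu
        rcases hu with hu | hu | hu
        · simp at hu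
        · have huv : u = v := by simpa using hu
          subst huv
          exact ⟨0, by simp, hva, by simpa using hva'⟩
        · obtain ⟨k, hk, h1, h2⟩ := hinl' u hu
          refine ⟨k + 1, by simpa using Nat.succ_lt_succ hk, by simpa using h1, by simpa using h2⟩

end Ext

end CTAux

/-- Let `T` be a cycle-tree and let `C ≠ C'` be two directed cycles of `T`.
Then there exists a unique cycle-path contained in `T` whose end-cycles are `C`
and `C'`: a unique sequence `C = C₀, C₁, …, C_m = C'` of cycles of `T` such that
`|V(C_i) ∩ V(C_j)| ≤ 1` for all distinct `i, j`, with equality iff `|i − j| = 1`. -/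
theorem cycleTree_unique_cyclePath {V : Type u} (A : V → V → Prop)
    (h : IsCycleTree A) (s t : Set (V × V))
    (hs : IsCycleSet A s) (ht : IsCycleSet A t) (hst : s ≠ t) :
    ∃! L : List (Set (V × V)),
      IsCyclePathSeq A L ∧ L.head? = some s ∧ L.getLast? = some t := by
  classical
  obtain ⟨hconn, m, C, hCinj, hCcyc, hCall, hsing⟩ := h
  clear hconn
  set verts : Fin m → Set V := fun i => cycleVerts (C i) with hverts
  obtain ⟨a, ha⟩ := hCall s hs
  obtain ⟨b, hb⟩ := hCall t ht
  have hab : a ≠ b := fun hh => hst (by rw [← ha, ← hb, hh])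
  have hm : 0 < m := a.pos
  have hac := CTAux.bg_acyclic (verts := verts) hsing
  have hfin : ∀ i : Fin m, 2 ≤ (verts i).ncard := by
    intro i
    obtain ⟨n, c, ⟨hn, hci, _⟩, hsi⟩ := hCcyc i
    have hv : verts i = Set.range c := by
      show cycleVerts (C i) = Set.range c
      rw [hsi]
      ext x
      constructor
      · rintro ⟨e, ⟨k, rfl⟩, rfl⟩
        exact ⟨k, rfl⟩
      · rintro ⟨k, rfl⟩
        exact ⟨(c k, c (k + 1)), ⟨k, rfl⟩, rfl⟩
    rw [hv, ← Nat.card_coe_set_eq, Nat.card_range_of_injective hci,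
      Nat.card_eq_fintype_card, Fintype.card_fin]
    omega
  have hsub : ∀ {i j : Fin m}, i ≠ j → (verts i ∩ verts j).Subsingleton :=
    fun hij => CTAux.subsingleton_inter hsing hij
  have hle1 : ∀ {i j : Fin m}, i ≠ j → (verts i ∩ verts j).ncard ≤ 1 := by
    intro i j hij
    rcases (hsub hij).eq_empty_or_singleton with he | ⟨x, he⟩ <;> simp [he]
  have hiff : ∀ {i j : Fin m}, i ≠ j →
      ((verts i ∩ verts j).ncard = 1 ↔ (verts i ∩ verts j).Nonempty) := by
    intro i j hij
    constructor
    · intro h1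
      obtain ⟨x, hx⟩ := Set.ncard_eq_one.mp h1
      exact ⟨x, hx ▸ rfl⟩
    · intro h1
      rcases (hsub hij).eq_empty_or_singleton with he | ⟨x, he⟩
      · rw [he] at h1; exact absurd h1 Set.not_nonempty_empty
      · rw [he]; exact Set.ncard_singleton x
  -- the canonical path
  obtain ⟨pw⟩ := CTAux.reach hsing hm a b
  have hp : (pw.toPath : (CTAux.bg verts).Walk (Sum.inr a) (Sum.inr b)).IsPath := pw.toPath.2
  set p : (CTAux.bg verts).Walk (Sum.inr a) (Sum.inr b) := pw.toPath.1 with hpdef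
  obtain ⟨hhead, hlastl, hchain, hnc⟩ := CTAux.master hac p.length a b p le_rfl hp
  have hnodup₀ : (CTAux.ext p).Nodup := CTAux.ext_nodup hp
  set l₀ := CTAux.ext p with hl₀
  set L₀ := l₀.map C with hL₀
  -- generic: a list of indices with the right properties gives a cycle path seq
  have main : ∀ l : List (Fin m), l.Nodup → List.Chain' (CTAux.Rel verts) l →
      CTAux.NC verts l → IsCyclePathSeq A (l.map C) := by
    intro l hnd hch hql
    constructor
    · intro s' hs'
      obtain ⟨i, _, rfl⟩ := List.mem_map.mp hs'
      exact hCcyc i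
    · intro i j hi hj hij
      have hi' : i < l.length := by simpa using hi
      have hj' : j < l.length := by simpa using hj
      have hgi : (l.map C).get ⟨i, hi⟩ = C (l.get ⟨i, hi'⟩) := by simp
      have hgj : (l.map C).get ⟨j, hj⟩ = C (l.get ⟨j, hj'⟩) := by simp
      rw [hgi, hgj]
      have hgij : l.get ⟨i, hi'⟩ ≠ l.get ⟨j, hj'⟩ := by
        intro hgg
        have := List.nodup_iff_injective_get.mp hnd hgg
        exact hij (by simpa using congrArg Fin.val this)
      have hcv : cycleVerts (C (l.get ⟨i, hi'⟩)) ∩ cycleVerts (C (l.get ⟨j, hj'⟩))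
          = verts (l.get ⟨i, hi'⟩) ∩ verts (l.get ⟨j, hj'⟩) := rfl
      rw [hcv]
      refine ⟨hle1 hgij, ?_, ?_⟩
      · intro h1
        have hne := (hiff hgij).mp h1
        by_contra hcon
        push_neg at hcon
        obtain ⟨hc1, hc2⟩ := hcon
        rcases Nat.lt_or_ge i j with hlt | hge
        · have h2 : i + 2 ≤ j := by omega
          have := hql i j hi' hj' h2
          rw [this] at hne
          exact Set.not_nonempty_empty hne
        · have h2 : j + 2 ≤ i := by omega
          have := hql j i hj' hi' h2
          rw [Set.inter_comm, this] at hne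
          exact Set.not_nonempty_empty hne
      · rintro (rfl | rfl)
        · -- i = j + 1
          have hr := List.isChain_iff_getElem.mp hch j (by omega)
          apply (hiff hgij).mpr
          rw [Set.inter_comm]
          exact hr.2
        · -- j = i + 1
          have hr := List.isChain_iff_getElem.mp hch i (by omega)
          apply (hiff hgij).mpr
          exact hr.2
  refine ⟨L₀, ⟨main l₀ hnodup₀ hchain hnc, ?_, ?_⟩, ?_⟩
  · rw [hL₀, List.head?_map, hhead, Option.map_some, ha]
  · rw [hL₀, List.getLast?_map, hlastl, Option.map_some, hb]
  · -- uniqueness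
    rintro L ⟨⟨hLc, hLp⟩, hLh, hLl⟩
    have hLne : L ≠ [] := by
      intro hLnil
      rw [hLnil] at hLh
      simp at hLh
    set g : Set (V × V) → Fin m :=
      fun s' => if h' : ∃ i, C i = s' then h'.choose else a with hg
    set l : List (Fin m) := L.map g with hldef
    have hlen : l.length = L.length := by simp [hldef]
    have hCg : ∀ s', IsCycleSet A s' → C (g s') = s' := by
      intro s' hs'
      have h' : ∃ i, C i = s' := hCall s' hs'
      rw [hg]
      simp only [dif_pos h']
      exact h'.choose_spec
    have hCl : ∀ (k : ℕ) (hk : k < L.length),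
        C (l.get ⟨k, by omega⟩) = L.get ⟨k, hk⟩ := by
      intro k hk
      have : l.get ⟨k, by omega⟩ = g (L.get ⟨k, hk⟩) := by simp [hldef]
      rw [this]
      exact hCg _ (hLc _ (List.get_mem _ _))
    have hvl : ∀ (k : ℕ) (hk : k < L.length),
        cycleVerts (L.get ⟨k, hk⟩) = verts (l.get ⟨k, by omega⟩) := by
      intro k hk
      rw [← hCl k hk]
    have hnd : l.Nodup := by
      rw [List.nodup_iff_injective_get]
      rintro ⟨k, hk⟩ ⟨k', hk'⟩ he
      by_contra hne
      have hkk : k ≠ k' := fun hh => hne (by simp [hh])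
      have := (hLp k k' (by omega) (by omega) hkk).1
      rw [hvl k (by omega), hvl k' (by omega)] at this
      rw [show (⟨k, by omega⟩ : Fin l.length) = ⟨k, hk⟩ from rfl,
        show (⟨k', by omega⟩ : Fin l.length) = ⟨k', hk'⟩ from rfl, he,
        Set.inter_self] at this
      have := hfin (l.get ⟨k', hk'⟩)
      omega
    have hch : List.Chain' (CTAux.Rel verts) l := by
      simp only [List.Chain']
      rw [List.isChain_iff_getElem]
      intro k hk1
      have hk : k < L.length := by omega
      have hk' : k + 1 < L.length := by omega
      have hpair := hLp k (k + 1) hk hk' (by omega)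
      have h1 : (cycleVerts (L.get ⟨k, hk⟩) ∩ cycleVerts (L.get ⟨k + 1, hk'⟩)).ncard = 1 :=
        hpair.2.mpr (Or.inr rfl)
      rw [hvl k hk, hvl (k + 1) hk'] at h1
      have hne : l.get ⟨k, by omega⟩ ≠ l.get ⟨k + 1, by omega⟩ := by
        intro hgg
        have := List.nodup_iff_injective_get.mp hnd hgg
        simp at this
      refine ⟨hne, (hiff hne).mp h1⟩
    have hncl : CTAux.NC verts l := by
      intro k k' hk hk' hkk
      have hkL : k < L.length := by omega
      have hk'L : k' < L.length := by omega
      have hpair := hLp k k' hkL hk'L (by omega)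
      have hne : l.get ⟨k, hk⟩ ≠ l.get ⟨k', hk'⟩ := by
        intro hgg
        have := List.nodup_iff_injective_get.mp hnd hgg
        have : k = k' := by simpa using congrArg Fin.val this
        omega
      have h1 : (cycleVerts (L.get ⟨k, hkL⟩) ∩ cycleVerts (L.get ⟨k', hk'L⟩)).ncard ≠ 1 := by
        intro hcon
        have := hpair.2.mp hcon
        omega
      rw [hvl k hkL, hvl k' hk'L] at h1
      rcases (hsub hne).eq_empty_or_singleton with he | ⟨x, he⟩
      · exact he
      · exact absurd (he ▸ Set.ncard_singleton x) h1
    -- head and last of l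
    have hheadl : l.head? = some a := by
      rw [hldef, List.head?_map, hLh, Option.map_some]
      congr 1
      apply hCinj
      rw [hCg s hs, ha]
    have hlastl' : l.getLast? = some b := by
      rw [hldef, List.getLast?_map, hLl, Option.map_some]
      congr 1
      apply hCinj
      rw [hCg t ht, hb]
    obtain ⟨p₁, hp₁, hext₁, _⟩ := CTAux.buildWalk l a b hheadl hlastl' hch hnd hncl
    have hpeq : p₁ = p := by
      have := SimpleGraph.isAcyclic_iff_path_unique.mp hac ⟨p₁, hp₁⟩ ⟨p, hp⟩
      exact congrArg Subtype.val this
    have hleq : l = l₀ := by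
      rw [← hext₁, hpeq, hl₀]
    have hLeq : L = l.map C := by
      apply List.ext_get (by simp [hlen])
      intro k hk1 hk2
      have hk : k < L.length := hk1
      rw [show (l.map C).get ⟨k, hk2⟩ = C (l.get ⟨k, by simpa using hk2⟩) from by simp]
      exact (hCl k hk).symm
    rw [hLeq, hleq]
end
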